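/- arXiv:1508.06395 — 3 statements merged into one kernel-verified Lean document; each statement's English description precedes it below -/
import Mathlib

section
/- Let ρ be a bipartite distribution on U × V, let n ≥ 1, and let 0 < p < 1. Then col_ρ(n, p) ≤ 9n · agr_ρ(p) + 48. -/
open scoped BigOperators ENNReal

namespace SR

variable {U V X Y : Type*}

/-- `μ` is a probability distribution on a finite type. -/
def IsDist {α : Type*} [Fintype α] (μ : α → ℝ) : Prop :=
  (∀ a, 0 ≤ μ a) ∧ ∑ a, μ a = 1

/-- Expectation of `f` under `μ`. -/
def expect {α : Type*} [Fintype α] (μ : α → ℝ) (f : α → ℝ) : ℝ :=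
  ∑ a, μ a * f a

/-- First (`U`-)marginal of a bipartite distribution. -/
def margFst [Fintype V] (ρ : U × V → ℝ) : U → ℝ :=
  fun u => ∑ v, ρ (u, v)

/-- Second (`V`-)marginal of a bipartite distribution. -/
def margSnd [Fintype U] (ρ : U × V → ℝ) : V → ℝ :=
  fun v => ∑ u, ρ (u, v)

/-- Maximum correlation of a bipartite distribution (sSup of the empty set is 0). -/
noncomputable def cor [Fintype U] [Fintype V] (ρ : U × V → ℝ) : ℝ :=
  sSup { t : ℝ | ∃ (f : U → ℝ) (g : V → ℝ),
      expect (margFst ρ) f = 0 ∧ expect (margSnd ρ) g = 0 ∧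
      expect (margFst ρ) (fun u => f u ^ 2) = 1 ∧
      expect (margSnd ρ) (fun v => g v ^ 2) = 1 ∧
      t = ∑ x : U × V, ρ x * (f x.1 * g x.2) }

/-- Tensor product of two bipartite distributions. -/
def tensor (ρ : U × V → ℝ) (σ : X × Y → ℝ) : (U × X) × (V × Y) → ℝ :=
  fun p => ρ (p.1.1, p.2.1) * σ (p.1.2, p.2.2)

/-- Tensor product of a family of bipartite distributions. -/
def tensorPi {n : ℕ} {U V : Fin n → Type*} (ρ : ∀ i, U i × V i → ℝ) :
    (∀ i, U i) × (∀ i, V i) → ℝ :=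
  fun p => ∏ i, ρ i (p.1 i, p.2 i)

/-- The distribution of `ℓ` i.i.d. samples from a bipartite distribution `ρ`. -/
def iid (ρ : U × V → ℝ) (ℓ : ℕ) : (Fin ℓ → U) × (Fin ℓ → V) → ℝ :=
  fun p => ∏ i, ρ (p.1 i, p.2 i)

/-- Agreement complexity of `ρ` at success probability `p`. -/
noncomputable def agr [Fintype U] [Fintype V] (ρ : U × V → ℝ) (p : ℝ) : ℝ :=
  sInf { c : ℝ | ∃ (ℓ : ℕ) (f : (Fin ℓ → U) → ℝ) (g : (Fin ℓ → V) → ℝ),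
      (∀ x, f x ∈ Set.Icc (0:ℝ) 1) ∧ (∀ y, g y ∈ Set.Icc (0:ℝ) 1) ∧
      p ≤ (∑ x : (Fin ℓ → U) × (Fin ℓ → V), iid ρ ℓ x * (f x.1 * g x.2)) ∧
      c = (∑ x : (Fin ℓ → U) × (Fin ℓ → V), iid ρ ℓ x * f x.1)
        + (∑ x : (Fin ℓ → U) × (Fin ℓ → V), iid ρ ℓ x * g x.2) }

/-- There is a `p`-collision protocol for `ρ` with domain size `n` and output size at most `k`.
    The players may use private randomness (uniform over `Fin sA`, `Fin sB` weighted by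
    distributions `μA`, `μB`, independent of everything else). -/
def ColLE [Fintype U] [Fintype V] (ρ : U × V → ℝ) (n : ℕ) (p : ℝ) (k : ℕ) : Prop :=
  ∃ (ℓ sA sB : ℕ) (μA : Fin sA → ℝ) (μB : Fin sB → ℝ)
    (A : (Fin ℓ → U) → Fin sA → Finset (Fin n))
    (B : (Fin ℓ → V) → Fin sB → Finset (Fin n)),
    IsDist μA ∧ IsDist μB ∧
    (∀ i : Fin n, p ≤ ∑ x : (Fin ℓ → U) × (Fin ℓ → V), ∑ rA, ∑ rB,
        iid ρ ℓ x * (μA rA * μB rB) *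
          (if i ∈ A x.1 rA ∧ i ∈ B x.2 rB then (1:ℝ) else 0)) ∧
    (∀ (x : (Fin ℓ → U) × (Fin ℓ → V)) (rA : Fin sA),
        0 < iid ρ ℓ x → 0 < μA rA → (A x.1 rA).card ≤ k) ∧
    (∀ (x : (Fin ℓ → U) × (Fin ℓ → V)) (rB : Fin sB),
        0 < iid ρ ℓ x → 0 < μB rB → (B x.2 rB).card ≤ k)

/-- Collision complexity `col_ρ(n, p)`, valued in `ℕ∞` (`sInf ∅ = ⊤`). -/
noncomputable def col [Fintype U] [Fintype V] (ρ : U × V → ℝ) (n : ℕ) (p : ℝ) : ℕ∞ :=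
  sInf { k : ℕ∞ | ∃ m : ℕ, k = (m : ℕ∞) ∧ ColLE ρ n p m }

/-- Base-2 Shannon entropy of a finitely supported distribution. -/
noncomputable def ent2 {α : Type*} [Fintype α] (μ : α → ℝ) : ℝ :=
  ∑ a, -(μ a * Real.logb 2 (μ a))

open Classical in
/-- Probability of an event under `μ`. -/
noncomputable def prEvent {Ω : Type*} [Fintype Ω] (μ : Ω → ℝ) (P : Ω → Prop) : ℝ :=
  ∑ ω, if P ω then μ ω else 0

/-- The distribution of a random variable `Z` conditioned on an event `P`. -/
noncomputable def condDist {Ω α : Type*} [Fintype Ω] (μ : Ω → ℝ) (Z : Ω → α)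
    (P : Ω → Prop) : α → ℝ :=
  fun a => prEvent μ (fun ω => Z ω = a ∧ P ω) / prEvent μ P

/-- The `L^r(μ)`-norm of a complex-valued function on a finite probability space. -/
noncomputable def lnorm {α : Type*} [Fintype α] (μ : α → ℝ) (r : ℝ) (h : α → ℂ) : ℝ :=
  (∑ a, μ a * ‖h a‖ ^ r) ^ (1 / r)

/-- The conditional-expectation operator `T_ρ` of a bipartite distribution. -/
noncomputable def condOp [Fintype U] [Fintype V] (ρ : U × V → ℝ) (f : U → ℂ) : V → ℂ :=
  fun v => ∑ u, ((ρ (u, v) / margSnd ρ v : ℝ) : ℂ) * f u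

/-- `ρ` is `q`-to-`p` hypercontractive. -/
def Hyper [Fintype U] [Fintype V] (ρ : U × V → ℝ) (q p : ℝ) : Prop :=
  ∀ f : U → ℂ, lnorm (margSnd ρ) q (condOp ρ f) ≤ lnorm (margFst ρ) p f

/-- Inner product over 𝔽₂. -/
def ipF2 {m : ℕ} (u v : Fin m → ZMod 2) : ZMod 2 := ∑ i, u i * v i

/-- `σ_{m,b}`: uniform distribution on pairs `(u,v) ∈ 𝔽₂^m × 𝔽₂^m` with `u·v = b`. -/
noncomputable def sigmaIP (m : ℕ) (b : ZMod 2) :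
    ((Fin m → ZMod 2) × (Fin m → ZMod 2)) → ℝ :=
  fun p => if ipF2 p.1 p.2 = b then
      (((Finset.univ.filter
        (fun q : (Fin m → ZMod 2) × (Fin m → ZMod 2) => ipF2 q.1 q.2 = b)).card : ℝ))⁻¹
    else 0

/-- `ρ_disj`: uniform distribution on `{(0,0),(0,1),(1,0)} ⊆ {0,1} × {0,1}`
    (with `false = 0`, `true = 1`). -/
noncomputable def rhoDisj : Bool × Bool → ℝ :=
  fun x => if x = (true, true) then 0 else 1/3


namespace SRAux
open Finset

lemma sum_pi_prod {ι γ : Type*} [Fintype ι] [DecidableEq ι] [Fintype γ] (F : ι → γ → ℝ) :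
    ∑ h : ι → γ, ∏ j, F j (h j) = ∏ j, ∑ c, F j c := (Fintype.prod_sum F).symm

lemma sum_pi_prod_one {ι γ : Type*} [Fintype ι] [DecidableEq ι] [Fintype γ]
    (w : γ → ℝ) (hw : ∑ c, w c = 1) :
    ∑ h : ι → γ, ∏ j, w (h j) = 1 := by
  rw [sum_pi_prod]; simp [hw]

lemma sum_pi_mul_single {ι γ : Type*} [Fintype ι] [DecidableEq ι] [Fintype γ]
    (w : γ → ℝ) (hw : ∑ c, w c = 1) (j₀ : ι) (G : γ → ℝ) :
    ∑ h : ι → γ, (∏ j, w (h j)) * G (h j₀) = ∑ c, w c * G c := by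
  have h1 : ∀ h : ι → γ, (∏ j, w (h j)) * G (h j₀)
      = ∏ j, (w (h j) * (if j = j₀ then G (h j) else 1)) := by
    intro h
    rw [Finset.prod_mul_distrib]
    congr 1
    simp [Finset.prod_ite_eq']
  simp_rw [h1]
  rw [sum_pi_prod (fun j c => w c * if j = j₀ then G c else 1)]
  have h2 : ∀ j : ι, (∑ c, w c * (if j = j₀ then G c else 1))
      = if j = j₀ then (∑ c, w c * G c) else 1 := by
    intro j; by_cases hj : j = j₀ <;> simp [hj, hw]
  simp_rw [h2]
  simp [Finset.prod_ite_eq']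

lemma markov {Ω : Type*} [Fintype Ω] (W : Ω → ℝ) (hW : ∀ ω, 0 ≤ W ω)
    (X : Ω → ℕ) (K : ℕ) (hK : 0 < K) :
    ∑ ω, W ω * (if K ≤ X ω then (1:ℝ) else 0) ≤ (∑ ω, W ω * (X ω : ℝ)) / K := by
  rw [Finset.sum_div]
  apply Finset.sum_le_sum
  intro ω _
  rw [mul_div_assoc]
  by_cases h : K ≤ X ω
  · rw [if_pos h]
    apply mul_le_mul_of_nonneg_left _ (hW ω)
    rw [le_div_iff₀ (by exact_mod_cast hK)]
    rw [one_mul]; exact_mod_cast h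
  · rw [if_neg h]
    have : (0:ℝ) ≤ (X ω : ℝ) / K := by positivity
    nlinarith [hW ω]

lemma split_sum {n : ℕ} {γ : Type*} [Fintype γ] (i : Fin n) (Wr : γ → ℝ) (X : γ → ℝ)
    (Y : ({j : Fin n // j ≠ i} → γ) → ℝ) :
    ∑ ω : Fin n → γ, (∏ i', Wr (ω i')) * (X (ω i) * Y (fun j => ω j.val))
      = (∑ c, Wr c * X c) * (∑ h : {j : Fin n // j ≠ i} → γ, (∏ j, Wr (h j)) * Y h) := by
  classical
  have e := (Equiv.funSplitAt i γ).symm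
  rw [← Equiv.sum_comp (Equiv.funSplitAt i γ).symm
    (fun ω : Fin n → γ => (∏ i', Wr (ω i')) * (X (ω i) * Y (fun j => ω j.val)))]
  rw [Fintype.sum_prod_type]
  have hat : ∀ (c : γ) (h : {j : Fin n // j ≠ i} → γ),
      (Equiv.funSplitAt i γ).symm (c, h) i = c := by
    intro c h; simp [Equiv.funSplitAt_symm_apply]
  have hne : ∀ (c : γ) (h : {j : Fin n // j ≠ i} → γ) (j : {j : Fin n // j ≠ i}),
      (Equiv.funSplitAt i γ).symm (c, h) j.val = h j := by
    intro c h j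
    simp [Equiv.funSplitAt_symm_apply, j.2]
  have key : ∀ (c : γ) (h : {j : Fin n // j ≠ i} → γ),
      (∏ i', Wr ((Equiv.funSplitAt i γ).symm (c, h) i')) *
        (X ((Equiv.funSplitAt i γ).symm (c, h) i) *
          Y (fun j => (Equiv.funSplitAt i γ).symm (c, h) j.val))
      = (Wr c * X c) * ((∏ j, Wr (h j)) * Y h) := by
    intro c h
    have hw : (∏ i', Wr ((Equiv.funSplitAt i γ).symm (c, h) i'))
        = Wr c * ∏ j : {j : Fin n // j ≠ i}, Wr (h j) := by
      rw [← Finset.mul_prod_erase univ _ (Finset.mem_univ i), hat]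
      congr 1
      rw [Finset.prod_subtype (univ.erase i) (p := fun j => j ≠ i) (by simp)]
      exact Fintype.prod_congr _ _ (fun j => by rw [hne])
    rw [hw, hat]
    have hY : (fun j => (Equiv.funSplitAt i γ).symm (c, h) j.val) = h := by
      funext j; rw [hne]
    rw [hY]; ring
  simp_rw [key]
  rw [Finset.sum_mul_sum]

end SRAux

namespace SRAux2
open SRAux

lemma sum_pi_mul_sum {ι γ : Type*} [Fintype ι] [DecidableEq ι] [Fintype γ]
    (w : γ → ℝ) (hw : ∑ c, w c = 1) (G : γ → ℝ) :
    ∑ h : ι → γ, (∏ j, w (h j)) * (∑ j, G (h j))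
      = (Fintype.card ι : ℝ) * ∑ c, w c * G c := by
  simp_rw [Finset.mul_sum]
  rw [Finset.sum_comm]
  have h1 : ∀ j : ι, ∑ h : ι → γ, (∏ j', w (h j')) * G (h j) = ∑ c, w c * G c :=
    fun j => sum_pi_mul_single w hw j G
  simp_rw [h1]
  rw [Finset.sum_const, Finset.card_univ, nsmul_eq_mul, Finset.mul_sum]

variable {β : Type*} [Fintype β]

def cntN {n : ℕ} {β : Type*} (i : Fin n) (cpred : β → Prop) [DecidablePred cpred]
    (h : {j : Fin n // j ≠ i} → Fin 3 → β) : ℕ :=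
  ∑ j, ∑ t, if cpred (h j t) then 1 else 0

lemma row_prob (w : β → ℝ) (hw1 : ∑ b, w b = 1) (P : β → Prop) [DecidablePred P] :
    ∑ c : Fin 3 → β, (∏ t, w (c t)) * (if ∃ t, P (c t) then (1:ℝ) else 0)
      = 1 - (1 - ∑ b, w b * (if P b then (1:ℝ) else 0))^3 := by
  have h1 : ∀ c : Fin 3 → β, (if ∃ t, P (c t) then (1:ℝ) else 0)
      = 1 - ∏ t, (if P (c t) then (0:ℝ) else 1) := by
    intro c
    by_cases h : ∃ t, P (c t)
    · obtain ⟨t, ht⟩ := h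
      rw [if_pos ⟨t, ht⟩, Finset.prod_eq_zero (Finset.mem_univ t) (by simp [ht])]; ring
    · rw [if_neg h]
      push_neg at h
      rw [Finset.prod_eq_one (fun t _ => by simp [h t])]; ring
  simp_rw [h1, mul_sub, mul_one]
  rw [Finset.sum_sub_distrib, sum_pi_prod_one w hw1]
  have h2 : ∀ c : Fin 3 → β, (∏ t, w (c t)) * (∏ t, (if P (c t) then (0:ℝ) else 1))
      = ∏ t, (w (c t) * (if P (c t) then (0:ℝ) else 1)) :=
    fun c => (Finset.prod_mul_distrib).symm
  simp_rw [h2]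
  rw [sum_pi_prod (fun _ b => w b * (if P b then (0:ℝ) else 1))]
  have h3 : (∑ b, w b * (if P b then (0:ℝ) else 1))
      = 1 - ∑ b, w b * (if P b then (1:ℝ) else 0) := by
    have e1 : (∑ b, w b * (if P b then (0:ℝ) else 1))
        = ∑ b, (w b - w b * (if P b then (1:ℝ) else 0)) := by
      apply Finset.sum_congr rfl
      intro b _
      by_cases hb : P b <;> simp [hb]
    rw [e1, Finset.sum_sub_distrib, hw1]
  simp_rw [h3]
  rw [Finset.prod_const, Finset.card_univ]
  simp

lemma cnt_exp {n : ℕ} (i : Fin n) (w : β → ℝ) (hw1 : ∑ b, w b = 1)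
    (cpred : β → Prop) [DecidablePred cpred] :
    ∑ h : {j : Fin n // j ≠ i} → Fin 3 → β,
        (∏ j, ∏ t, w (h j t)) * ((cntN i cpred h : ℝ))
      = ((Fintype.card {j : Fin n // j ≠ i} : ℝ) * 3) *
          (∑ b, w b * (if cpred b then (1:ℝ) else 0)) := by
  have h1 : ∀ h : {j : Fin n // j ≠ i} → Fin 3 → β,
      ((cntN i cpred h : ℝ)) = ∑ j, (∑ t, (if cpred (h j t) then (1:ℝ) else 0)) := by
    intro h; simp [cntN]
  simp_rw [h1]
  have hWγ1 : ∑ c : Fin 3 → β, ∏ t, w (c t) = 1 := sum_pi_prod_one w hw1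
  rw [sum_pi_mul_sum (fun c : Fin 3 → β => ∏ t, w (c t)) hWγ1
    (fun c => ∑ t, (if cpred (c t) then (1:ℝ) else 0))]
  rw [sum_pi_mul_sum w hw1 (fun b => if cpred b then (1:ℝ) else 0)]
  simp [Fintype.card_fin]
  ring

lemma rest_prob {n : ℕ} (i : Fin n) (w : β → ℝ) (hw0 : ∀ b, 0 ≤ w b)
    (hw1 : ∑ b, w b = 1) (cA cB : β → Prop) [DecidablePred cA] [DecidablePred cB]
    (K : ℕ) (hK : 0 < K) :
    1 - ((Fintype.card {j : Fin n // j ≠ i} : ℝ) * 3) *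
          ((∑ b, w b * (if cA b then (1:ℝ) else 0)) + (∑ b, w b * (if cB b then (1:ℝ) else 0))) / K
      ≤ ∑ h : {j : Fin n // j ≠ i} → Fin 3 → β,
          (∏ j, ∏ t, w (h j t)) *
            (if (cntN i cA h < K ∧ cntN i cB h < K) then (1:ℝ) else 0) := by
  have hW0 : ∀ h : {j : Fin n // j ≠ i} → Fin 3 → β, 0 ≤ ∏ j, ∏ t, w (h j t) :=
    fun h => Finset.prod_nonneg (fun j _ => Finset.prod_nonneg (fun t _ => hw0 _))
  have hW1 : ∑ h : {j : Fin n // j ≠ i} → Fin 3 → β, ∏ j, ∏ t, w (h j t) = 1 := by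
    have : ∑ c : Fin 3 → β, ∏ t, w (c t) = 1 := sum_pi_prod_one w hw1
    exact sum_pi_prod_one (fun c : Fin 3 → β => ∏ t, w (c t)) this
  have hpt : ∀ h : {j : Fin n // j ≠ i} → Fin 3 → β,
      1 - (if K ≤ cntN i cA h then (1:ℝ) else 0) - (if K ≤ cntN i cB h then (1:ℝ) else 0)
        ≤ (if (cntN i cA h < K ∧ cntN i cB h < K) then (1:ℝ) else 0) := by
    intro h
    by_cases h1 : K ≤ cntN i cA h <;> by_cases h2 : K ≤ cntN i cB h <;>
      simp [h1, h2, Nat.lt_of_not_le, Nat.not_lt.mpr]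
  have step : ∑ h : {j : Fin n // j ≠ i} → Fin 3 → β,
      (∏ j, ∏ t, w (h j t)) *
        (1 - (if K ≤ cntN i cA h then (1:ℝ) else 0) - (if K ≤ cntN i cB h then (1:ℝ) else 0))
      ≤ ∑ h, (∏ j, ∏ t, w (h j t)) *
          (if (cntN i cA h < K ∧ cntN i cB h < K) then (1:ℝ) else 0) :=
    Finset.sum_le_sum (fun h _ => mul_le_mul_of_nonneg_left (hpt h) (hW0 h))
  refine le_trans ?_ step
  have expand : ∑ h : {j : Fin n // j ≠ i} → Fin 3 → β,
      (∏ j, ∏ t, w (h j t)) *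
        (1 - (if K ≤ cntN i cA h then (1:ℝ) else 0) - (if K ≤ cntN i cB h then (1:ℝ) else 0))
      = 1 - (∑ h, (∏ j, ∏ t, w (h j t)) * (if K ≤ cntN i cA h then (1:ℝ) else 0))
          - (∑ h, (∏ j, ∏ t, w (h j t)) * (if K ≤ cntN i cB h then (1:ℝ) else 0)) := by
    simp_rw [mul_sub, mul_one]
    rw [Finset.sum_sub_distrib, Finset.sum_sub_distrib, hW1]
  rw [expand]
  have mA := markov (fun h : {j : Fin n // j ≠ i} → Fin 3 → β => ∏ j, ∏ t, w (h j t))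
    hW0 (cntN i cA) K hK
  have mB := markov (fun h : {j : Fin n // j ≠ i} → Fin 3 → β => ∏ j, ∏ t, w (h j t))
    hW0 (cntN i cB) K hK
  rw [cnt_exp i w hw1 cA] at mA
  rw [cnt_exp i w hw1 cB] at mB
  have : ((Fintype.card {j : Fin n // j ≠ i} : ℝ) * 3) *
      ((∑ b, w b * (if cA b then (1:ℝ) else 0)) + (∑ b, w b * (if cB b then (1:ℝ) else 0))) / K
      = ((Fintype.card {j : Fin n // j ≠ i} : ℝ) * 3) * (∑ b, w b * (if cA b then (1:ℝ) else 0)) / K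
        + ((Fintype.card {j : Fin n // j ≠ i} : ℝ) * 3) * (∑ b, w b * (if cB b then (1:ℝ) else 0)) / K := by
    ring
  rw [this]
  linarith [mA, mB]

lemma core {n : ℕ} (i : Fin n) (w : β → ℝ) (hw0 : ∀ b, 0 ≤ w b) (hw1 : ∑ b, w b = 1)
    (P cA cB : β → Prop) [DecidablePred P] [DecidablePred cA] [DecidablePred cB]
    (K : ℕ) (hK : 0 < K) :
    (1 - (1 - ∑ b, w b * (if P b then (1:ℝ) else 0))^3) *
      (1 - ((Fintype.card {j : Fin n // j ≠ i} : ℝ) * 3) *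
        ((∑ b, w b * (if cA b then (1:ℝ) else 0)) + (∑ b, w b * (if cB b then (1:ℝ) else 0))) / K)
    ≤ ∑ ω : Fin n → Fin 3 → β, (∏ i', ∏ t, w (ω i' t)) *
        (if ((∃ t, P (ω i t)) ∧ cntN i cA (fun j => ω j.val) < K
              ∧ cntN i cB (fun j => ω j.val) < K) then (1:ℝ) else 0) := by
  have hfac : ∀ ω : Fin n → Fin 3 → β,
      (if ((∃ t, P (ω i t)) ∧ cntN i cA (fun j => ω j.val) < K
            ∧ cntN i cB (fun j => ω j.val) < K) then (1:ℝ) else 0)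
      = (if (∃ t, P (ω i t)) then (1:ℝ) else 0) *
        (if (cntN i cA (fun j => ω j.val) < K ∧ cntN i cB (fun j => ω j.val) < K)
          then (1:ℝ) else 0) := by
    intro ω
    by_cases h1 : ∃ t, P (ω i t) <;>
      by_cases h2 : cntN i cA (fun j => ω j.val) < K ∧ cntN i cB (fun j => ω j.val) < K <;>
      simp [h1, h2]
  simp_rw [hfac]
  rw [split_sum i (fun c : Fin 3 → β => ∏ t, w (c t))
    (fun c => if (∃ t, P (c t)) then (1:ℝ) else 0)
    (fun h => if (cntN i cA h < K ∧ cntN i cB h < K) then (1:ℝ) else 0)]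
  rw [row_prob w hw1 P]
  have hq0 : 0 ≤ ∑ b, w b * (if P b then (1:ℝ) else 0) :=
    Finset.sum_nonneg (fun b _ => mul_nonneg (hw0 b) (by positivity))
  have hq1 : ∑ b, w b * (if P b then (1:ℝ) else 0) ≤ 1 := by
    have e1 : ∀ b ∈ Finset.univ, w b * (if P b then (1:ℝ) else 0) ≤ w b := by
      intro b _
      by_cases hb : P b <;> simp [hb, hw0 b]
    calc ∑ b, w b * (if P b then (1:ℝ) else 0) ≤ ∑ b, w b := Finset.sum_le_sum e1
      _ = 1 := hw1
  have hR : 0 ≤ 1 - (1 - ∑ b, w b * (if P b then (1:ℝ) else 0))^3 := by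
    have h1 : (1 - ∑ b, w b * (if P b then (1:ℝ) else 0))^3 ≤ 1 := by
      apply pow_le_one₀ <;> linarith
    linarith
  exact mul_le_mul_of_nonneg_left (rest_prob i w hw0 hw1 cA cB K hK) hR


end SRAux2

namespace SRC
open Finset SRAux SRAux2

/-- Block-decomposition equiv. -/
def Dq (n ℓ : ℕ) : ((Fin n × Fin 3) × Fin ℓ) ≃ Fin (n*3*ℓ) :=
  (Equiv.prodCongr finProdFinEquiv (Equiv.refl (Fin ℓ))).trans finProdFinEquiv

def blk {α : Type*} (n ℓ : ℕ) (x : Fin (n*3*ℓ) → α) (j : Fin n × Fin 3) : Fin ℓ → α :=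
  fun s => x (Dq n ℓ (j, s))

def rdec (n N : ℕ) (r : Fin (N^(n*3))) (j : Fin n × Fin 3) : Fin N :=
  finFunctionFinEquiv.symm r (finProdFinEquiv j)

/-- Acceptance (randomized rounding of `f` with granularity `N`). -/
def accP {α : Type*} (ℓ N : ℕ) (f : (Fin ℓ → α) → ℝ) (xb : Fin ℓ → α) (r : Fin N) : Prop :=
  r.val < Nat.floor ((N:ℝ) * f xb)

noncomputable instance {α : Type*} (ℓ N : ℕ) (f : (Fin ℓ → α) → ℝ) (xb : Fin ℓ → α)
    (r : Fin N) : Decidable (accP ℓ N f xb r) :=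
  inferInstanceAs (Decidable (_ < _))

/-- Candidate output set. -/
noncomputable def AsetS {α : Type*} (n ℓ N : ℕ) (f : (Fin ℓ → α) → ℝ)
    (x : Fin (n*3*ℓ) → α) (r : Fin (N^(n*3))) : Finset (Fin n) :=
  Finset.univ.filter
    (fun i : Fin n => ∃ t : Fin 3, accP ℓ N f (blk n ℓ x (i,t)) (rdec n N r (i,t)))

/-- The collision protocol map. -/
noncomputable def Aset {α : Type*} (n ℓ N K : ℕ) (f : (Fin ℓ → α) → ℝ)
    (x : Fin (n*3*ℓ) → α) (r : Fin (N^(n*3))) : Finset (Fin n) :=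
  if (AsetS n ℓ N f x r).card ≤ K then AsetS n ℓ N f x r else ∅

lemma Aset_card_le {α : Type*} (n ℓ N K : ℕ) (f : (Fin ℓ → α) → ℝ)
    (x : Fin (n*3*ℓ) → α) (r : Fin (N^(n*3))) : (Aset n ℓ N K f x r).card ≤ K := by
  unfold Aset
  split
  · assumption
  · simp

variable {U V : Type*}

/-- Per-block sample space. -/
abbrev Blk (U V : Type*) (ℓ N : ℕ) := ((Fin ℓ → U) × (Fin ℓ → V)) × (Fin N × Fin N)
/-- Structured global space. -/
abbrev Om (U V : Type*) (n ℓ N : ℕ) := Fin n → Fin 3 → Blk U V ℓ N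

def xof {n ℓ N : ℕ} (ω : Om U V n ℓ N) : Fin (n*3*ℓ) → U :=
  fun m => (ω ((Dq n ℓ).symm m).1.1 ((Dq n ℓ).symm m).1.2).1.1 (((Dq n ℓ).symm m).2)
def yof {n ℓ N : ℕ} (ω : Om U V n ℓ N) : Fin (n*3*ℓ) → V :=
  fun m => (ω ((Dq n ℓ).symm m).1.1 ((Dq n ℓ).symm m).1.2).1.2 (((Dq n ℓ).symm m).2)
def raof {n ℓ N : ℕ} (ω : Om U V n ℓ N) : Fin (N^(n*3)) :=
  finFunctionFinEquiv (fun a => (ω (finProdFinEquiv.symm a).1 (finProdFinEquiv.symm a).2).2.1)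
def rbof {n ℓ N : ℕ} (ω : Om U V n ℓ N) : Fin (N^(n*3)) :=
  finFunctionFinEquiv (fun a => (ω (finProdFinEquiv.symm a).1 (finProdFinEquiv.symm a).2).2.2)

lemma xof_Dq {n ℓ N : ℕ} (ω : Om U V n ℓ N) (j : Fin n × Fin 3) (s : Fin ℓ) :
    xof ω (Dq n ℓ (j, s)) = (ω j.1 j.2).1.1 s := by
  simp [xof]

lemma yof_Dq {n ℓ N : ℕ} (ω : Om U V n ℓ N) (j : Fin n × Fin 3) (s : Fin ℓ) :
    yof ω (Dq n ℓ (j, s)) = (ω j.1 j.2).1.2 s := by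
  simp [yof]

lemma blk_xof {n ℓ N : ℕ} (ω : Om U V n ℓ N) (j : Fin n × Fin 3) :
    blk n ℓ (xof ω) j = (ω j.1 j.2).1.1 := by
  funext s; simp [blk, xof_Dq]

lemma blk_yof {n ℓ N : ℕ} (ω : Om U V n ℓ N) (j : Fin n × Fin 3) :
    blk n ℓ (yof ω) j = (ω j.1 j.2).1.2 := by
  funext s; simp [blk, yof_Dq]

lemma rdec_raof {n ℓ N : ℕ} (ω : Om U V n ℓ N) (j : Fin n × Fin 3) :
    rdec n N (raof ω) j = (ω j.1 j.2).2.1 := by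
  simp only [rdec, raof, Equiv.symm_apply_apply]

lemma rdec_rbof {n ℓ N : ℕ} (ω : Om U V n ℓ N) (j : Fin n × Fin 3) :
    rdec n N (rbof ω) j = (ω j.1 j.2).2.2 := by
  simp only [rdec, rbof, Equiv.symm_apply_apply]

/-- The global reindexing equivalence. -/
def Psi (U V : Type*) (n ℓ N : ℕ) : Om U V n ℓ N ≃
    (((Fin (n*3*ℓ) → U) × (Fin (n*3*ℓ) → V)) × (Fin (N^(n*3)) × Fin (N^(n*3)))) where
  toFun ω := ((xof ω, yof ω), (raof ω, rbof ω))
  invFun z := fun i t => ((blk n ℓ z.1.1 (i,t), blk n ℓ z.1.2 (i,t)),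
                          (rdec n N z.2.1 (i,t), rdec n N z.2.2 (i,t)))
  left_inv ω := by
    funext i t
    dsimp only
    rw [blk_xof ω (i,t), blk_yof ω (i,t), rdec_raof ω (i,t), rdec_rbof ω (i,t)]
  right_inv z := by
    obtain ⟨⟨x, y⟩, ra, rb⟩ := z
    simp only [Prod.mk.injEq]
    refine ⟨⟨?_, ?_⟩, ?_, ?_⟩
    · funext m
      simp only [xof, blk, Prod.mk.eta, Equiv.apply_symm_apply, Equiv.symm_apply_apply]
    · funext m
      simp only [yof, blk, Prod.mk.eta, Equiv.apply_symm_apply, Equiv.symm_apply_apply]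
    · simp only [raof, rdec, Prod.mk.eta, Equiv.apply_symm_apply, Equiv.symm_apply_apply]
    · simp only [rbof, rdec, Prod.mk.eta, Equiv.apply_symm_apply, Equiv.symm_apply_apply]

end SRC

namespace SRC
open Finset SRAux SRAux2

variable {U V : Type*} [Fintype U] [Fintype V]

/-- Per-block weight. -/
noncomputable def wB (ρ : U × V → ℝ) (ℓ N : ℕ) : Blk U V ℓ N → ℝ :=
  fun b => (∏ s, ρ (b.1.1 s, b.1.2 s)) * ((N:ℝ)⁻¹ * (N:ℝ)⁻¹)

def PrA {U V : Type*} (ℓ N : ℕ) (f : (Fin ℓ → U) → ℝ) : Blk U V ℓ N → Prop :=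
  fun b => accP ℓ N f b.1.1 b.2.1

def PrB {U V : Type*} (ℓ N : ℕ) (g : (Fin ℓ → V) → ℝ) : Blk U V ℓ N → Prop :=
  fun b => accP ℓ N g b.1.2 b.2.2

noncomputable instance {ℓ N : ℕ} (f : (Fin ℓ → U) → ℝ) : DecidablePred (PrA (V := V) ℓ N f) :=
  fun b => inferInstanceAs (Decidable (_ < _))

noncomputable instance {ℓ N : ℕ} (g : (Fin ℓ → V) → ℝ) : DecidablePred (PrB (U := U) ℓ N g) :=
  fun b => inferInstanceAs (Decidable (_ < _))

lemma wB_nonneg {ρ : U × V → ℝ} (hρ : ∀ z, 0 ≤ ρ z) (ℓ N : ℕ) (b : Blk U V ℓ N) :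
    0 ≤ wB ρ ℓ N b := by
  unfold wB
  have : (0:ℝ) ≤ ∏ s, ρ (b.1.1 s, b.1.2 s) := Finset.prod_nonneg (fun s _ => hρ _)
  positivity

lemma sum_iid_one {ρ : U × V → ℝ} (hρ : IsDist ρ) (ℓ : ℕ) :
    ∑ xy : (Fin ℓ → U) × (Fin ℓ → V), ∏ s, ρ (xy.1 s, xy.2 s) = 1 := by
  rw [← Equiv.sum_comp (Equiv.arrowProdEquivProdArrow (Fin ℓ) (fun _ => U) (fun _ => V))
    (fun xy : (Fin ℓ → U) × (Fin ℓ → V) => ∏ s, ρ (xy.1 s, xy.2 s))]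
  have h1 : ∀ h : Fin ℓ → U × V,
      (∏ s, ρ (((Equiv.arrowProdEquivProdArrow (Fin ℓ) (fun _ => U) (fun _ => V)) h).1 s,
          ((Equiv.arrowProdEquivProdArrow (Fin ℓ) (fun _ => U) (fun _ => V)) h).2 s))
        = ∏ s, ρ (h s) := by
    intro h
    apply Finset.prod_congr rfl
    intro s _
    rfl
  simp_rw [h1]
  exact sum_pi_prod_one ρ hρ.2

lemma wB_sum_one {ρ : U × V → ℝ} (hρ : IsDist ρ) (ℓ N : ℕ) (hN : 0 < N) :
    ∑ b : Blk U V ℓ N, wB ρ ℓ N b = 1 := by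
  have hN' : ((N:ℝ)) ≠ 0 := by positivity
  unfold wB
  rw [Fintype.sum_prod_type]
  have h1 : ∀ xy : (Fin ℓ → U) × (Fin ℓ → V),
      ∑ rr : Fin N × Fin N, ((∏ s, ρ (xy.1 s, xy.2 s)) * ((N:ℝ)⁻¹ * (N:ℝ)⁻¹))
        = ∏ s, ρ (xy.1 s, xy.2 s) := by
    intro xy
    rw [Finset.sum_const, Finset.card_univ]
    simp only [Fintype.card_prod, Fintype.card_fin, nsmul_eq_mul]
    push_cast
    field_simp
  rw [Finset.sum_congr rfl (fun xy _ => h1 xy)]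
  exact sum_iid_one hρ ℓ

lemma count_lt (N m : ℕ) :
    (∑ r : Fin N, if (r : ℕ) < m then (1:ℝ) else 0) = ((min m N : ℕ) : ℝ) := by
  rw [Fin.sum_univ_eq_sum_range (fun k => if k < m then (1:ℝ) else 0) N]
  rw [Finset.sum_boole]
  congr 1
  rw [show (Finset.range N).filter (fun k => k < m) = Finset.range (min m N) by
    ext k; simp only [Finset.mem_filter, Finset.mem_range]; omega]
  rw [Finset.card_range]

/-- Exact formula for the marginal acceptance probability of player A. -/
lemma qqA_eq (ρ : U × V → ℝ) (ℓ N : ℕ) (hN : 0 < N) (f : (Fin ℓ → U) → ℝ) :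
    ∑ b : Blk U V ℓ N, wB ρ ℓ N b * (if PrA ℓ N f b then (1:ℝ) else 0)
      = ∑ xy : (Fin ℓ → U) × (Fin ℓ → V), (∏ s, ρ (xy.1 s, xy.2 s)) *
          (((min (Nat.floor ((N:ℝ) * f xy.1)) N : ℕ) : ℝ) / N) := by
  have hN' : ((N:ℝ)) ≠ 0 := by positivity
  rw [Fintype.sum_prod_type]
  apply Finset.sum_congr rfl
  intro xy _
  rw [Fintype.sum_prod_type]
  have h2 : ∀ r1 : Fin N, ∑ r2 : Fin N,
      wB ρ ℓ N (xy, (r1, r2)) * (if PrA ℓ N f (xy, (r1, r2)) then (1:ℝ) else 0)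
      = ((∏ s, ρ (xy.1 s, xy.2 s)) * (N:ℝ)⁻¹) * (if (r1 : ℕ) < Nat.floor ((N:ℝ) * f xy.1) then (1:ℝ) else 0) := by
    intro r1
    unfold wB PrA accP
    dsimp only
    show (∑ _r2 : Fin N, (∏ s, ρ (xy.1 s, xy.2 s)) * ((N:ℝ)⁻¹ * (N:ℝ)⁻¹) *
        (if (r1:ℕ) < Nat.floor ((N:ℝ) * f xy.1) then (1:ℝ) else 0)) = _
    rw [show (∑ _r2 : Fin N, (∏ s, ρ (xy.1 s, xy.2 s)) * ((N:ℝ)⁻¹ * (N:ℝ)⁻¹) *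
        (if (r1:ℕ) < Nat.floor ((N:ℝ) * f xy.1) then (1:ℝ) else 0))
      = (N:ℝ) * ((∏ s, ρ (xy.1 s, xy.2 s)) * ((N:ℝ)⁻¹ * (N:ℝ)⁻¹) *
        (if (r1:ℕ) < Nat.floor ((N:ℝ) * f xy.1) then (1:ℝ) else 0)) from by
      rw [Finset.sum_const, Finset.card_univ, Fintype.card_fin, nsmul_eq_mul]]
    field_simp
    try ring
  rw [Finset.sum_congr rfl (fun r1 _ => h2 r1)]
  rw [← Finset.mul_sum, count_lt]
  field_simp
  try ring

/-- Exact formula for the joint acceptance probability. -/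
lemma qq_eq (ρ : U × V → ℝ) (ℓ N : ℕ) (hN : 0 < N) (f : (Fin ℓ → U) → ℝ) (g : (Fin ℓ → V) → ℝ) :
    ∑ b : Blk U V ℓ N, wB ρ ℓ N b * (if PrA ℓ N f b ∧ PrB ℓ N g b then (1:ℝ) else 0)
      = ∑ xy : (Fin ℓ → U) × (Fin ℓ → V), (∏ s, ρ (xy.1 s, xy.2 s)) *
          ((((min (Nat.floor ((N:ℝ) * f xy.1)) N : ℕ) : ℝ) / N) *
            (((min (Nat.floor ((N:ℝ) * g xy.2)) N : ℕ) : ℝ) / N)) := by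
  have hN' : ((N:ℝ)) ≠ 0 := by positivity
  rw [Fintype.sum_prod_type]
  apply Finset.sum_congr rfl
  intro xy _
  rw [Fintype.sum_prod_type]
  have h2 : ∀ r1 : Fin N, ∑ r2 : Fin N,
      wB ρ ℓ N (xy, (r1, r2)) * (if PrA ℓ N f (xy, (r1, r2)) ∧ PrB ℓ N g (xy, (r1, r2)) then (1:ℝ) else 0)
      = ((∏ s, ρ (xy.1 s, xy.2 s)) * ((N:ℝ)⁻¹ * (N:ℝ)⁻¹)) *
          ((if (r1 : ℕ) < Nat.floor ((N:ℝ) * f xy.1) then (1:ℝ) else 0) *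
            (∑ r2 : Fin N, if (r2 : ℕ) < Nat.floor ((N:ℝ) * g xy.2) then (1:ℝ) else 0)) := by
    intro r1
    rw [Finset.mul_sum, Finset.mul_sum]
    apply Finset.sum_congr rfl
    intro r2 _
    unfold wB PrA PrB accP
    by_cases hA : (r1 : ℕ) < Nat.floor ((N:ℝ) * f xy.1) <;>
      by_cases hB : (r2 : ℕ) < Nat.floor ((N:ℝ) * g xy.2) <;>
      simp [hA, hB]
  rw [Finset.sum_congr rfl (fun r1 _ => h2 r1)]
  simp_rw [count_lt]
  have h3 : ∀ r1 : Fin N,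
      (∏ s, ρ (xy.1 s, xy.2 s)) * ((N:ℝ)⁻¹ * (N:ℝ)⁻¹) *
        ((if (r1:ℕ) < Nat.floor ((N:ℝ) * f xy.1) then (1:ℝ) else 0) *
          ((min (Nat.floor ((N:ℝ) * g xy.2)) N : ℕ) : ℝ))
      = ((∏ s, ρ (xy.1 s, xy.2 s)) * ((N:ℝ)⁻¹ * (N:ℝ)⁻¹) *
          ((min (Nat.floor ((N:ℝ) * g xy.2)) N : ℕ) : ℝ)) *
        (if (r1:ℕ) < Nat.floor ((N:ℝ) * f xy.1) then (1:ℝ) else 0) := by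
    intro r1; ring
  rw [Finset.sum_congr rfl (fun r1 _ => h3 r1)]
  rw [← Finset.mul_sum, count_lt]
  field_simp
  try ring

end SRC

namespace SRC
open Finset SRAux SRAux2

variable {U V : Type*} [Fintype U] [Fintype V]

lemma ratio_le_self {N : ℕ} (hN : 0 < N) (c : ℝ) (hc0 : 0 ≤ c) :
    ((min (Nat.floor ((N:ℝ) * c)) N : ℕ) : ℝ) / N ≤ c := by
  have hN' : (0:ℝ) < N := by exact_mod_cast hN
  rw [div_le_iff₀ hN']
  have h1 : ((min (Nat.floor ((N:ℝ) * c)) N : ℕ) : ℝ) ≤ (Nat.floor ((N:ℝ) * c) : ℝ) := by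
    exact_mod_cast Nat.cast_le.mpr (min_le_left _ _)
  have h2 : ((Nat.floor ((N:ℝ) * c) : ℕ) : ℝ) ≤ (N:ℝ) * c :=
    Nat.floor_le (by positivity)
  nlinarith

lemma ratio_ge {N : ℕ} (hN : 0 < N) (c : ℝ) (hc1 : c ≤ 1) :
    c - 1/N ≤ ((min (Nat.floor ((N:ℝ) * c)) N : ℕ) : ℝ) / N := by
  have hN' : (0:ℝ) < N := by exact_mod_cast hN
  rw [le_div_iff₀ hN']
  have h1 : (N:ℝ) * c < (Nat.floor ((N:ℝ) * c) : ℝ) + 1 := Nat.lt_floor_add_one _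
  have h2 : (N:ℝ) * c - 1 ≤ (N:ℝ) := by nlinarith
  have h3 : ((min (Nat.floor ((N:ℝ) * c)) N : ℕ) : ℝ)
      = min ((Nat.floor ((N:ℝ) * c) : ℕ) : ℝ) ((N:ℕ) : ℝ) := Nat.cast_min _ _
  have h4 : (c - 1/(N:ℝ)) * N = (N:ℝ) * c - 1 := by
    field_simp
  rw [h3, le_min_iff, h4]
  constructor <;> linarith

lemma ratio_nonneg {N : ℕ} (hN : 0 < N) (m : ℕ) :
    (0:ℝ) ≤ ((min m N : ℕ) : ℝ) / N := by positivity

/-- The weight identity. -/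
lemma weight_eq (ρ : U × V → ℝ) {n ℓ N : ℕ} (ω : Om U V n ℓ N) :
    iid ρ (n*3*ℓ) (xof ω, yof ω) * (((N:ℝ)^(n*3))⁻¹ * ((N:ℝ)^(n*3))⁻¹)
      = ∏ i', ∏ t, wB ρ ℓ N (ω i' t) := by
  have h1 : iid ρ (n*3*ℓ) (xof ω, yof ω)
      = ∏ i', ∏ t, ∏ s, ρ ((ω i' t).1.1 s, (ω i' t).1.2 s) := by
    show (∏ m, ρ (xof ω m, yof ω m)) = _
    rw [← Equiv.prod_comp (Dq n ℓ) (fun m => ρ (xof ω m, yof ω m))]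
    rw [Fintype.prod_prod_type]
    rw [Fintype.prod_prod_type]
    apply Finset.prod_congr rfl; intro i' _
    apply Finset.prod_congr rfl; intro t _
    apply Finset.prod_congr rfl; intro s _
    rw [show ((i', t), s) = (((i',t) : Fin n × Fin 3), s) from rfl]
    rw [xof_Dq ω (i',t) s, yof_Dq ω (i',t) s]
  rw [h1]
  unfold wB
  rw [Finset.prod_congr rfl (fun i' (_ : i' ∈ univ) => Finset.prod_mul_distrib
    (s := univ) (f := fun t => ∏ s, ρ ((ω i' t).1.1 s, (ω i' t).1.2 s))
    (g := fun _ => ((N:ℝ)⁻¹ * (N:ℝ)⁻¹)))]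
  rw [Finset.prod_mul_distrib]
  rw [Finset.prod_const, Finset.prod_const, Finset.card_univ, Finset.card_univ,
    Fintype.card_fin, Fintype.card_fin]
  have h3 : (((N:ℝ))^(n*3))⁻¹ * (((N:ℝ))^(n*3))⁻¹ = ((((N:ℝ)⁻¹ * (N:ℝ)⁻¹))^3)^n := by
    rw [← pow_mul, mul_comm 3 n, mul_pow]
    simp [inv_pow]
  rw [h3]

/-- Identification of the protocol's candidate set in structured coordinates. -/
lemma AsetS_xof {n ℓ N : ℕ} (f : (Fin ℓ → U) → ℝ) (ω : Om U V n ℓ N) :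
    AsetS n ℓ N f (xof ω) (raof ω)
      = Finset.univ.filter (fun i' : Fin n => ∃ t : Fin 3, PrA ℓ N f (ω i' t)) := by
  unfold AsetS
  ext i'
  simp only [Finset.mem_filter, Finset.mem_univ, true_and]
  constructor
  · rintro ⟨t, ht⟩
    refine ⟨t, ?_⟩
    unfold accP at ht
    rw [blk_xof ω (i', t), rdec_raof ω (i', t)] at ht
    exact ht
  · rintro ⟨t, ht⟩
    refine ⟨t, ?_⟩
    unfold accP PrA at *
    rw [blk_xof ω (i', t), rdec_raof ω (i', t)]
    exact ht

lemma AsetS_yof {n ℓ N : ℕ} (g : (Fin ℓ → V) → ℝ) (ω : Om U V n ℓ N) :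
    AsetS n ℓ N g (yof ω) (rbof ω)
      = Finset.univ.filter (fun i' : Fin n => ∃ t : Fin 3, PrB ℓ N g (ω i' t)) := by
  unfold AsetS
  ext i'
  simp only [Finset.mem_filter, Finset.mem_univ, true_and]
  constructor
  · rintro ⟨t, ht⟩
    refine ⟨t, ?_⟩
    unfold accP at ht
    rw [blk_yof ω (i', t), rdec_rbof ω (i', t)] at ht
    exact ht
  · rintro ⟨t, ht⟩
    refine ⟨t, ?_⟩
    unfold accP PrB at *
    rw [blk_yof ω (i', t), rdec_rbof ω (i', t)]
    exact ht

/-- If the good event holds, `i` is in the capped filtered set. -/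
lemma mem_cap_of {n K : ℕ} (i : Fin n) (q : Fin n → Fin 3 → Prop) [∀ a b, Decidable (q a b)]
    (hi : ∃ t, q i t)
    (hcnt : (∑ j : {j : Fin n // j ≠ i}, ∑ t : Fin 3, if q j.val t then 1 else 0) < K) :
    (Finset.univ.filter (fun i' : Fin n => ∃ t : Fin 3, q i' t)).card ≤ K ∧
      i ∈ Finset.univ.filter (fun i' : Fin n => ∃ t : Fin 3, q i' t) := by
  set S := Finset.univ.filter (fun i' : Fin n => ∃ t : Fin 3, q i' t) with hS
  have hiS : i ∈ S := Finset.mem_filter.mpr ⟨Finset.mem_univ _, hi⟩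
  refine ⟨?_, hiS⟩
  have hcard : (S.erase i).card + 1 = S.card := Finset.card_erase_add_one hiS
  have h2 : S.erase i = (Finset.univ.erase i).filter (fun i' => ∃ t : Fin 3, q i' t) := by
    ext i'
    simp only [Finset.mem_erase, Finset.mem_filter, Finset.mem_univ, true_and, hS]
    tauto
  have h3 : (S.erase i).card = ∑ i' ∈ Finset.univ.erase i,
      (if (∃ t : Fin 3, q i' t) then 1 else 0) := by
    rw [h2, Finset.card_filter]
  have h4 : ∀ i' ∈ Finset.univ.erase i,
      (if (∃ t : Fin 3, q i' t) then 1 else 0) ≤ ∑ t : Fin 3, if q i' t then 1 else 0 := by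
    intro i' _
    by_cases h : ∃ t : Fin 3, q i' t
    · obtain ⟨t, ht⟩ := h
      rw [if_pos ⟨t, ht⟩]
      calc 1 = if q i' t then 1 else 0 := by rw [if_pos ht]
        _ ≤ ∑ t : Fin 3, if q i' t then 1 else 0 :=
            Finset.single_le_sum (f := fun t : Fin 3 => if q i' t then 1 else 0)
              (fun _ _ => Nat.zero_le _) (Finset.mem_univ t)
    · simp [h]
  have h5 : ∑ i' ∈ Finset.univ.erase i, (∑ t : Fin 3, if q i' t then 1 else 0)
      = ∑ j : {j : Fin n // j ≠ i}, ∑ t : Fin 3, if q j.val t then 1 else 0 := by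
    exact Finset.sum_subtype (Finset.univ.erase i) (by simp)
      (fun i' => ∑ t : Fin 3, if q i' t then 1 else 0)
  have h6 : (S.erase i).card < K := by
    rw [h3]
    calc ∑ i' ∈ Finset.univ.erase i, (if (∃ t : Fin 3, q i' t) then 1 else 0)
        ≤ ∑ i' ∈ Finset.univ.erase i, (∑ t : Fin 3, if q i' t then 1 else 0) :=
          Finset.sum_le_sum h4
      _ = _ := h5
      _ < K := hcnt
  omega

end SRC

namespace SRC
open Finset SRAux SRAux2

variable {U V : Type*} [Fintype U] [Fintype V]

lemma transport (ρ : U × V → ℝ) {n ℓ N K : ℕ} (f : (Fin ℓ → U) → ℝ)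
    (g : (Fin ℓ → V) → ℝ) (i : Fin n) :
    (∑ x : (Fin (n*3*ℓ) → U) × (Fin (n*3*ℓ) → V), ∑ rA : Fin (N^(n*3)), ∑ rB : Fin (N^(n*3)),
        iid ρ (n*3*ℓ) x * ((((N:ℝ)^(n*3))⁻¹) * (((N:ℝ)^(n*3))⁻¹)) *
          (if i ∈ Aset n ℓ N K f x.1 rA ∧ i ∈ Aset n ℓ N K g x.2 rB then (1:ℝ) else 0))
    = ∑ ω : Om U V n ℓ N, (∏ i', ∏ t, wB ρ ℓ N (ω i' t)) *
        (if i ∈ Aset n ℓ N K f (xof ω) (raof ω) ∧ i ∈ Aset n ℓ N K g (yof ω) (rbof ω)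
          then (1:ℝ) else 0) := by
  have h1 : (∑ z : ((Fin (n*3*ℓ) → U) × (Fin (n*3*ℓ) → V)) × (Fin (N^(n*3)) × Fin (N^(n*3))),
      iid ρ (n*3*ℓ) z.1 * ((((N:ℝ)^(n*3))⁻¹) * (((N:ℝ)^(n*3))⁻¹)) *
        (if i ∈ Aset n ℓ N K f z.1.1 z.2.1 ∧ i ∈ Aset n ℓ N K g z.1.2 z.2.2 then (1:ℝ) else 0))
      = ∑ x : (Fin (n*3*ℓ) → U) × (Fin (n*3*ℓ) → V), ∑ rA : Fin (N^(n*3)), ∑ rB : Fin (N^(n*3)),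
        iid ρ (n*3*ℓ) x * ((((N:ℝ)^(n*3))⁻¹) * (((N:ℝ)^(n*3))⁻¹)) *
          (if i ∈ Aset n ℓ N K f x.1 rA ∧ i ∈ Aset n ℓ N K g x.2 rB then (1:ℝ) else 0) := by
    rw [Fintype.sum_prod_type]
    apply Finset.sum_congr rfl
    intro x _
    rw [Fintype.sum_prod_type]
  rw [← h1]
  rw [← Equiv.sum_comp (Psi U V n ℓ N)
    (fun z : ((Fin (n*3*ℓ) → U) × (Fin (n*3*ℓ) → V)) × (Fin (N^(n*3)) × Fin (N^(n*3))) =>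
      iid ρ (n*3*ℓ) z.1 * ((((N:ℝ)^(n*3))⁻¹) * (((N:ℝ)^(n*3))⁻¹)) *
        (if i ∈ Aset n ℓ N K f z.1.1 z.2.1 ∧ i ∈ Aset n ℓ N K g z.1.2 z.2.2 then (1:ℝ) else 0))]
  apply Finset.sum_congr rfl
  intro ω _
  show iid ρ (n*3*ℓ) (xof ω, yof ω) * ((((N:ℝ)^(n*3))⁻¹) * (((N:ℝ)^(n*3))⁻¹)) *
      (if i ∈ Aset n ℓ N K f (xof ω) (raof ω) ∧ i ∈ Aset n ℓ N K g (yof ω) (rbof ω)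
        then (1:ℝ) else 0) = _
  rw [weight_eq ρ ω]

theorem colLE_main (ρ : U × V → ℝ) (hρ : IsDist ρ) (p : ℝ) (n ℓ N K : ℕ)
    (hn : 0 < n) (hN : 0 < N) (hK : 0 < K)
    (f : (Fin ℓ → U) → ℝ) (g : (Fin ℓ → V) → ℝ)
    (hnum : p ≤ (1 - (1 - ∑ b : Blk U V ℓ N, wB ρ ℓ N b *
          (if PrA ℓ N f b ∧ PrB ℓ N g b then (1:ℝ) else 0))^3) *
      (1 - ((n:ℝ) * 3) * ((∑ b : Blk U V ℓ N, wB ρ ℓ N b * (if PrA ℓ N f b then (1:ℝ) else 0))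
          + (∑ b : Blk U V ℓ N, wB ρ ℓ N b * (if PrB ℓ N g b then (1:ℝ) else 0))) / K)) :
    ColLE ρ n p K := by
  have hNR : ((N:ℝ)) ≠ 0 := by positivity
  have hdist : IsDist (fun _ : Fin (N^(n*3)) => ((N:ℝ)^(n*3))⁻¹) := by
    constructor
    · intro; positivity
    · rw [Finset.sum_const, Finset.card_univ, Fintype.card_fin, nsmul_eq_mul]
      push_cast
      field_simp
  refine ⟨n*3*ℓ, N^(n*3), N^(n*3), fun _ => ((N:ℝ)^(n*3))⁻¹, fun _ => ((N:ℝ)^(n*3))⁻¹,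
    Aset n ℓ N K f, Aset n ℓ N K g, hdist, hdist, ?_, ?_, ?_⟩
  · intro i
    show p ≤ ∑ x : (Fin (n*3*ℓ) → U) × (Fin (n*3*ℓ) → V),
      ∑ rA : Fin (N^(n*3)), ∑ rB : Fin (N^(n*3)),
        iid ρ (n*3*ℓ) x * ((((N:ℝ)^(n*3))⁻¹) * (((N:ℝ)^(n*3))⁻¹)) *
          (if i ∈ Aset n ℓ N K f x.1 rA ∧ i ∈ Aset n ℓ N K g x.2 rB then (1:ℝ) else 0)
    rw [transport ρ f g i]
    have hw0 : ∀ b, 0 ≤ wB ρ ℓ N b := wB_nonneg hρ.1 ℓ N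
    have hw1 : ∑ b : Blk U V ℓ N, wB ρ ℓ N b = 1 := wB_sum_one hρ ℓ N hN
    have hcore := core i (wB ρ ℓ N) hw0 hw1
      (fun b => PrA ℓ N f b ∧ PrB ℓ N g b) (PrA ℓ N f) (PrB ℓ N g) K hK
    have hW0 : ∀ ω : Om U V n ℓ N, 0 ≤ ∏ i', ∏ t, wB ρ ℓ N (ω i' t) :=
      fun ω => Finset.prod_nonneg (fun i' _ => Finset.prod_nonneg (fun t _ => hw0 _))
    have hmono : ∑ ω : Om U V n ℓ N, (∏ i', ∏ t, wB ρ ℓ N (ω i' t)) *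
        (if ((∃ t, (PrA ℓ N f (ω i t) ∧ PrB ℓ N g (ω i t)))
            ∧ cntN i (PrA ℓ N f) (fun j => ω j.val) < K
            ∧ cntN i (PrB ℓ N g) (fun j => ω j.val) < K) then (1:ℝ) else 0)
        ≤ ∑ ω : Om U V n ℓ N, (∏ i', ∏ t, wB ρ ℓ N (ω i' t)) *
          (if i ∈ Aset n ℓ N K f (xof ω) (raof ω) ∧ i ∈ Aset n ℓ N K g (yof ω) (rbof ω)
            then (1:ℝ) else 0) := by
      apply Finset.sum_le_sum
      intro ω _
      apply mul_le_mul_of_nonneg_left _ (hW0 ω)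
      by_cases hFE : ((∃ t, (PrA ℓ N f (ω i t) ∧ PrB ℓ N g (ω i t)))
          ∧ cntN i (PrA ℓ N f) (fun j => ω j.val) < K
          ∧ cntN i (PrB ℓ N g) (fun j => ω j.val) < K)
      · rw [if_pos hFE]
        obtain ⟨⟨t0, hP⟩, hcA, hcB⟩ := hFE
        have hcA' : (∑ j : {j : Fin n // j ≠ i}, ∑ t : Fin 3,
            if PrA ℓ N f (ω j.val t) then 1 else 0) < K := hcA
        have hcB' : (∑ j : {j : Fin n // j ≠ i}, ∑ t : Fin 3,
            if PrB ℓ N g (ω j.val t) then 1 else 0) < K := hcB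
        have hA := mem_cap_of i (fun i' t => PrA ℓ N f (ω i' t)) ⟨t0, hP.1⟩ hcA'
        have hB := mem_cap_of i (fun i' t => PrB ℓ N g (ω i' t)) ⟨t0, hP.2⟩ hcB'
        have hmemA : i ∈ Aset n ℓ N K f (xof ω) (raof ω) := by
          unfold Aset
          rw [AsetS_xof f ω]
          rw [if_pos hA.1]
          exact hA.2
        have hmemB : i ∈ Aset n ℓ N K g (yof ω) (rbof ω) := by
          unfold Aset
          rw [AsetS_yof g ω]
          rw [if_pos hB.1]
          exact hB.2
        rw [if_pos ⟨hmemA, hmemB⟩]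
      · rw [if_neg hFE]
        by_cases hM : (i ∈ Aset n ℓ N K f (xof ω) (raof ω)
            ∧ i ∈ Aset n ℓ N K g (yof ω) (rbof ω)) <;> simp [hM]
    have hq0 : 0 ≤ ∑ b : Blk U V ℓ N, wB ρ ℓ N b *
        (if PrA ℓ N f b ∧ PrB ℓ N g b then (1:ℝ) else 0) :=
      Finset.sum_nonneg (fun b _ => mul_nonneg (hw0 b) (by positivity))
    have hq1 : (∑ b : Blk U V ℓ N, wB ρ ℓ N b *
        (if PrA ℓ N f b ∧ PrB ℓ N g b then (1:ℝ) else 0)) ≤ 1 := by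
      have e1 : ∀ b ∈ Finset.univ, wB ρ ℓ N b *
          (if PrA ℓ N f b ∧ PrB ℓ N g b then (1:ℝ) else 0) ≤ wB ρ ℓ N b := by
        intro b _
        by_cases hb : PrA ℓ N f b ∧ PrB ℓ N g b <;> simp [hb, hw0 b]
      calc (∑ b : Blk U V ℓ N, wB ρ ℓ N b *
          (if PrA ℓ N f b ∧ PrB ℓ N g b then (1:ℝ) else 0))
          ≤ ∑ b : Blk U V ℓ N, wB ρ ℓ N b := Finset.sum_le_sum e1
        _ = 1 := hw1
    have hR : 0 ≤ 1 - (1 - ∑ b : Blk U V ℓ N, wB ρ ℓ N b *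
        (if PrA ℓ N f b ∧ PrB ℓ N g b then (1:ℝ) else 0))^3 := by
      have : (1 - ∑ b : Blk U V ℓ N, wB ρ ℓ N b *
          (if PrA ℓ N f b ∧ PrB ℓ N g b then (1:ℝ) else 0))^3 ≤ 1 := by
        apply pow_le_one₀ <;> linarith
      linarith
    have hqA0 : 0 ≤ ∑ b : Blk U V ℓ N, wB ρ ℓ N b * (if PrA ℓ N f b then (1:ℝ) else 0) :=
      Finset.sum_nonneg (fun b _ => mul_nonneg (hw0 b) (by positivity))
    have hqB0 : 0 ≤ ∑ b : Blk U V ℓ N, wB ρ ℓ N b * (if PrB ℓ N g b then (1:ℝ) else 0) :=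
      Finset.sum_nonneg (fun b _ => mul_nonneg (hw0 b) (by positivity))
    have hcard : ((Fintype.card {j : Fin n // j ≠ i} : ℝ)) ≤ (n:ℝ) := by
      have := Fintype.card_subtype_le (fun j : Fin n => j ≠ i)
      rw [Fintype.card_fin] at this
      exact_mod_cast this
    have hmid : (1 - ((n:ℝ) * 3) *
          ((∑ b : Blk U V ℓ N, wB ρ ℓ N b * (if PrA ℓ N f b then (1:ℝ) else 0))
            + (∑ b : Blk U V ℓ N, wB ρ ℓ N b * (if PrB ℓ N g b then (1:ℝ) else 0))) / K)
        ≤ (1 - ((Fintype.card {j : Fin n // j ≠ i} : ℝ) * 3) *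
          ((∑ b : Blk U V ℓ N, wB ρ ℓ N b * (if PrA ℓ N f b then (1:ℝ) else 0))
            + (∑ b : Blk U V ℓ N, wB ρ ℓ N b * (if PrB ℓ N g b then (1:ℝ) else 0))) / K) := by
      have hKR : (0:ℝ) < K := by exact_mod_cast hK
      apply sub_le_sub_left
      gcongr
    exact hnum.trans ((mul_le_mul_of_nonneg_left hmid hR).trans (hcore.trans hmono))
  · intro x rA _ _
    exact Aset_card_le n ℓ N K f x.1 rA
  · intro x rB _ _
    exact Aset_card_le n ℓ N K g x.2 rB

end SRC

namespace SRC
open Finset SRAux SRAux2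

variable {U V : Type*} [Fintype U] [Fintype V]

lemma iid_nonneg {ρ : U × V → ℝ} (hρ : ∀ z, 0 ≤ ρ z) (ℓ : ℕ)
    (x : (Fin ℓ → U) × (Fin ℓ → V)) : 0 ≤ iid ρ ℓ x :=
  Finset.prod_nonneg (fun _ _ => hρ _)

lemma prod_ratio_ge (rA rB f g iN : ℝ) (h1 : 0 ≤ rA) (h2 : 0 ≤ rB)
    (h3 : f - iN ≤ rA) (h4 : g - iN ≤ rB) (hf0 : 0 ≤ f) (hf1 : f ≤ 1)
    (hg0 : 0 ≤ g) (hg1 : g ≤ 1) (hiN : 0 < iN) : f*g - 2*iN ≤ rA * rB := by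
  have step1 : (f - iN) * rB ≤ rA * rB := mul_le_mul_of_nonneg_right h3 h2
  by_cases hfiN : 0 ≤ f - iN
  · have step2 : (f - iN) * (g - iN) ≤ (f - iN) * rB := mul_le_mul_of_nonneg_left h4 hfiN
    nlinarith
  · have hfi : f < iN := by linarith
    have : f * g ≤ iN * 1 := by nlinarith
    nlinarith [mul_nonneg h1 h2]

lemma final_numeric (p qq τ : ℝ) (hp0 : 0 < p) (hp18 : p < 1/18)
    (hq : 30*p/31 ≤ qq) (hq1 : qq ≤ 1) (hτ : τ ≤ 3/5) :
    p ≤ (1 - (1-qq)^3) * (1 - τ) := by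
  have hqq0 : 0 ≤ qq := by linarith
  have h1 : (1+3*qq) * (1-qq)^3 ≤ 1 := by nlinarith [sq_nonneg qq, sq_nonneg (1-qq)]
  have h2 : 3*qq/(1+3*qq) ≤ 1 - (1-qq)^3 := by
    rw [div_le_iff₀ (by linarith)]
    nlinarith
  have h3 : (2:ℝ)/5 ≤ 1 - τ := by linarith
  have hR0 : 0 ≤ 1 - (1-qq)^3 := by
    have : (1-qq)^3 ≤ 1 := by
      apply pow_le_one₀ <;> linarith
    linarith
  have h4 : p ≤ (3*qq/(1+3*qq)) * (2/5) := by
    rw [div_mul_eq_mul_div, le_div_iff₀ (by linarith)]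
    nlinarith [mul_le_mul_of_nonneg_right hq (show (0:ℝ) ≤ 6-15*p by linarith),
      mul_pos hp0 (show (0:ℝ) < 1/18 - p by linarith)]
  calc p ≤ (3*qq/(1+3*qq)) * (2/5) := h4
    _ ≤ (1 - (1-qq)^3) * (1 - τ) := by
        apply mul_le_mul h2 h3 (by norm_num) hR0

/-- The trivial collision protocol. -/
lemma colLE_trivial (ρ : U × V → ℝ) (hρ : IsDist ρ) (p : ℝ) (hp1 : p ≤ 1) (n : ℕ) :
    ColLE ρ n p n := by
  have hdist1 : IsDist (fun _ : Fin 1 => (1:ℝ)) := ⟨fun _ => zero_le_one, by simp⟩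
  refine ⟨0, 1, 1, fun _ => 1, fun _ => 1, fun _ _ => Finset.univ, fun _ _ => Finset.univ,
    hdist1, hdist1, ?_, ?_, ?_⟩
  · intro i
    have h1 : ∀ x : (Fin 0 → U) × (Fin 0 → V), iid ρ 0 x = 1 := by
      intro x; unfold iid; simp
    have h2 : (∑ x : (Fin 0 → U) × (Fin 0 → V), ∑ rA : Fin 1, ∑ rB : Fin 1,
        iid ρ 0 x * ((1:ℝ) * 1) *
          (if i ∈ (Finset.univ : Finset (Fin n)) ∧ i ∈ (Finset.univ : Finset (Fin n))
            then (1:ℝ) else 0)) = 1 := by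
      simp [h1]
    calc p ≤ 1 := hp1
      _ = _ := h2.symm
  · intro x rA _ _
    simp
  · intro x rB _ _
    simp

lemma col_le_of_colLE (ρ : U × V → ℝ) (n : ℕ) (p : ℝ) (K : ℕ) (h : ColLE ρ n p K) :
    col ρ n p ≤ (K : ℕ∞) :=
  sInf_le ⟨K, rfl, h⟩

end SRC

namespace SRC
open Finset SRAux SRAux2

variable {U V : Type*} [Fintype U] [Fintype V]

/-- Exact formula for the marginal acceptance probability of player B. -/
lemma qqB_eq (ρ : U × V → ℝ) (ℓ N : ℕ) (hN : 0 < N) (g : (Fin ℓ → V) → ℝ) :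
    ∑ b : Blk U V ℓ N, wB ρ ℓ N b * (if PrB ℓ N g b then (1:ℝ) else 0)
      = ∑ xy : (Fin ℓ → U) × (Fin ℓ → V), (∏ s, ρ (xy.1 s, xy.2 s)) *
          (((min (Nat.floor ((N:ℝ) * g xy.2)) N : ℕ) : ℝ) / N) := by
  have hN' : ((N:ℝ)) ≠ 0 := by positivity
  rw [Fintype.sum_prod_type]
  apply Finset.sum_congr rfl
  intro xy _
  rw [Fintype.sum_prod_type]
  have h2 : ∀ r1 : Fin N, ∑ r2 : Fin N,
      wB ρ ℓ N (xy, (r1, r2)) * (if PrB ℓ N g (xy, (r1, r2)) then (1:ℝ) else 0)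
      = ((∏ s, ρ (xy.1 s, xy.2 s)) * ((N:ℝ)⁻¹ * (N:ℝ)⁻¹)) *
          ((min (Nat.floor ((N:ℝ) * g xy.2)) N : ℕ) : ℝ) := by
    intro r1
    unfold wB PrB accP
    dsimp only
    show (∑ r2 : Fin N, (∏ s, ρ (xy.1 s, xy.2 s)) * ((N:ℝ)⁻¹ * (N:ℝ)⁻¹) *
        (if (r2:ℕ) < Nat.floor ((N:ℝ) * g xy.2) then (1:ℝ) else 0)) = _
    rw [← Finset.mul_sum, count_lt]
  rw [Finset.sum_congr rfl (fun r1 _ => h2 r1)]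
  rw [Finset.sum_const, Finset.card_univ, Fintype.card_fin, nsmul_eq_mul]
  field_simp
  try ring

end SRC

set_option maxHeartbeats 1600000 in
theorem stmt8 {U V : Type} [Fintype U] [Fintype V] [Nonempty U] [Nonempty V]
    (ρ : U × V → ℝ) (hρ : IsDist ρ) (n : ℕ) (hn : 1 ≤ n)
    (p : ℝ) (hp0 : 0 < p) (hp1 : p < 1) :
    ((col ρ n p : ℕ∞) : ℝ≥0∞) ≤ ENNReal.ofReal (9 * n * agr ρ p + 48) := by
  classical
  have hcast : ∀ k : ℕ, (((k:ℕ∞)):ℝ≥0∞) = ENNReal.ofReal k := fun k => by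
    push_cast
    simp [ENNReal.ofReal_natCast]
  set S := {c : ℝ | ∃ (ℓ : ℕ) (f : (Fin ℓ → U) → ℝ) (g : (Fin ℓ → V) → ℝ),
      (∀ x, f x ∈ Set.Icc (0:ℝ) 1) ∧ (∀ y, g y ∈ Set.Icc (0:ℝ) 1) ∧
      p ≤ (∑ x : (Fin ℓ → U) × (Fin ℓ → V), iid ρ ℓ x * (f x.1 * g x.2)) ∧
      c = (∑ x : (Fin ℓ → U) × (Fin ℓ → V), iid ρ ℓ x * f x.1)
        + (∑ x : (Fin ℓ → U) × (Fin ℓ → V), iid ρ ℓ x * g x.2)} with hSdef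
  have hagr : agr ρ p = sInf S := rfl
  have h2mem : (2:ℝ) ∈ S := by
    refine ⟨0, fun _ => 1, fun _ => 1, fun _ => ⟨zero_le_one, le_refl 1⟩,
      fun _ => ⟨zero_le_one, le_refl 1⟩, ?_, ?_⟩
    · have h1 : (∑ x : (Fin 0 → U) × (Fin 0 → V), iid ρ 0 x * ((1:ℝ) * 1)) = 1 := by
        simp [iid]
      rw [h1]; exact le_of_lt hp1
    · have h1 : (∑ x : (Fin 0 → U) × (Fin 0 → V), iid ρ 0 x * (1:ℝ)) = 1 := by
        simp [iid]
      rw [h1]; norm_num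
  have hlb : ∀ c ∈ S, (0:ℝ) ≤ c := by
    rintro c ⟨ℓ, f, g, hf, hg, _, rfl⟩
    have h1 : 0 ≤ ∑ x : (Fin ℓ → U) × (Fin ℓ → V), iid ρ ℓ x * f x.1 :=
      Finset.sum_nonneg fun x _ => mul_nonneg (SRC.iid_nonneg hρ.1 ℓ x) (hf x.1).1
    have h2 : 0 ≤ ∑ x : (Fin ℓ → U) × (Fin ℓ → V), iid ρ ℓ x * g x.2 :=
      Finset.sum_nonneg fun x _ => mul_nonneg (SRC.iid_nonneg hρ.1 ℓ x) (hg x.2).1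
    linarith
  have hbdd : BddBelow S := ⟨0, hlb⟩
  have ha0 : 0 ≤ agr ρ p := by
    rw [hagr]; exact Real.sInf_nonneg hlb
  by_cases hcase : (n:ℝ) ≤ 9*n*agr ρ p + 48
  · have hcol := SRC.col_le_of_colLE ρ n p n (SRC.colLE_trivial ρ hρ p (le_of_lt hp1) n)
    calc ((col ρ n p : ℕ∞) : ℝ≥0∞) ≤ ((n : ℕ∞) : ℝ≥0∞) := by exact_mod_cast hcol
      _ = ENNReal.ofReal n := hcast n
      _ ≤ ENNReal.ofReal (9*n*agr ρ p + 48) := ENNReal.ofReal_le_ofReal hcase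
  · push_neg at hcase
    have hnR : (0:ℝ) < n := by exact_mod_cast hn
    have ha19 : agr ρ p < 1/9 := by nlinarith
    set ε := min (43/(5*(n:ℝ))) (1/9 - agr ρ p) with hεdef
    have hε0 : 0 < ε := lt_min (by positivity) (by linarith)
    have hlt : sInf S < agr ρ p + ε := by rw [← hagr]; linarith
    obtain ⟨c, hcmem, hclt⟩ := (csInf_lt_iff hbdd ⟨2, h2mem⟩).mp hlt
    obtain ⟨ℓ, f, g, hf, hg, hsucc, hceq⟩ := hcmem
    subst hceq
    set EfS := ∑ x : (Fin ℓ → U) × (Fin ℓ → V), iid ρ ℓ x * f x.1 with hEfdef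
    set EgS := ∑ x : (Fin ℓ → U) × (Fin ℓ → V), iid ρ ℓ x * g x.2 with hEgdef
    have hpEf : p ≤ EfS := by
      refine le_trans hsucc (Finset.sum_le_sum fun x _ => ?_)
      exact mul_le_mul_of_nonneg_left
        (mul_le_of_le_one_right (hf x.1).1 (hg x.2).2) (SRC.iid_nonneg hρ.1 ℓ x)
    have hpEg : p ≤ EgS := by
      refine le_trans hsucc (Finset.sum_le_sum fun x _ => ?_)
      have : f x.1 * g x.2 ≤ g x.2 := by
        have := (hf x.1).2
        have := (hg x.2).1
        nlinarith [(hf x.1).1]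
      exact mul_le_mul_of_nonneg_left this (SRC.iid_nonneg hρ.1 ℓ x)
    have hcε : EfS + EgS < agr ρ p + 43/(5*(n:ℝ)) := by
      have := min_le_left (43/(5*(n:ℝ))) (1/9 - agr ρ p)
      linarith
    have hc19 : EfS + EgS < 1/9 := by
      have := min_le_right (43/(5*(n:ℝ))) (1/9 - agr ρ p)
      linarith
    have hp18 : p < 1/18 := by linarith
    have hc0 : 0 < EfS + EgS := by linarith
    -- parameters
    set N := Nat.ceil ((62:ℝ)/p) with hNdef
    have hN0 : 0 < N := Nat.ceil_pos.mpr (by positivity)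
    have hNR : (0:ℝ) < N := by exact_mod_cast hN0
    have hNge : (62:ℝ)/p ≤ N := Nat.le_ceil _
    set K := Nat.ceil (5*(n:ℝ)*(EfS+EgS)) + 4 with hKdef
    have hK0 : 0 < K := by omega
    have hKRpos : (0:ℝ) < K := by exact_mod_cast hK0
    have hK5 : 5*(n:ℝ)*(EfS+EgS) ≤ K := by
      have h1 := Nat.le_ceil (5*(n:ℝ)*(EfS+EgS))
      have h2 : ((Nat.ceil (5*(n:ℝ)*(EfS+EgS)) : ℕ) : ℝ) ≤ (K:ℝ) := by
        rw [hKdef]; push_cast; linarith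
      linarith
    have hKle : (K:ℝ) ≤ 5*(n:ℝ)*(EfS+EgS) + 5 := by
      have h1 : ((Nat.ceil (5*(n:ℝ)*(EfS+EgS)) : ℕ) : ℝ) < 5*(n:ℝ)*(EfS+EgS) + 1 :=
        Nat.ceil_lt_add_one (by positivity)
      rw [hKdef]; push_cast; linarith
    -- quantities
    set Q := ∑ b : SRC.Blk U V ℓ N, SRC.wB ρ ℓ N b *
      (if SRC.PrA ℓ N f b ∧ SRC.PrB ℓ N g b then (1:ℝ) else 0) with hQdef
    set QA := ∑ b : SRC.Blk U V ℓ N, SRC.wB ρ ℓ N b *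
      (if SRC.PrA ℓ N f b then (1:ℝ) else 0) with hQAdef
    set QB := ∑ b : SRC.Blk U V ℓ N, SRC.wB ρ ℓ N b *
      (if SRC.PrB ℓ N g b then (1:ℝ) else 0) with hQBdef
    have hQA_le : QA ≤ EfS := by
      rw [hQAdef, SRC.qqA_eq ρ ℓ N hN0 f]
      apply Finset.sum_le_sum
      intro xy _
      exact mul_le_mul_of_nonneg_left (SRC.ratio_le_self hN0 (f xy.1) (hf xy.1).1)
        (Finset.prod_nonneg fun s _ => hρ.1 _)
    have hQB_le : QB ≤ EgS := by
      rw [hQBdef, SRC.qqB_eq ρ ℓ N hN0 g]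
      apply Finset.sum_le_sum
      intro xy _
      exact mul_le_mul_of_nonneg_left (SRC.ratio_le_self hN0 (g xy.2) (hg xy.2).1)
        (Finset.prod_nonneg fun s _ => hρ.1 _)
    have hQA0 : 0 ≤ QA :=
      Finset.sum_nonneg fun b _ => mul_nonneg (SRC.wB_nonneg hρ.1 ℓ N b) (by positivity)
    have hQB0 : 0 ≤ QB :=
      Finset.sum_nonneg fun b _ => mul_nonneg (SRC.wB_nonneg hρ.1 ℓ N b) (by positivity)
    have hQ_ge : (∑ x : (Fin ℓ → U) × (Fin ℓ → V), iid ρ ℓ x * (f x.1 * g x.2)) - 2/(N:ℝ)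
        ≤ Q := by
      rw [hQdef, SRC.qq_eq ρ ℓ N hN0 f g]
      have hpt : ∀ xy : (Fin ℓ → U) × (Fin ℓ → V),
          iid ρ ℓ xy * (f xy.1 * g xy.2 - 2/(N:ℝ))
            ≤ (∏ s, ρ (xy.1 s, xy.2 s)) *
              ((((min (Nat.floor ((N:ℝ) * f xy.1)) N : ℕ) : ℝ) / N) *
                (((min (Nat.floor ((N:ℝ) * g xy.2)) N : ℕ) : ℝ) / N)) := by
        intro xy
        have hr : f xy.1 * g xy.2 - 2/(N:ℝ)
            ≤ (((min (Nat.floor ((N:ℝ) * f xy.1)) N : ℕ) : ℝ) / N) *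
                (((min (Nat.floor ((N:ℝ) * g xy.2)) N : ℕ) : ℝ) / N) := by
          have h1 := SRC.prod_ratio_ge
            ((((min (Nat.floor ((N:ℝ) * f xy.1)) N : ℕ) : ℝ) / N))
            ((((min (Nat.floor ((N:ℝ) * g xy.2)) N : ℕ) : ℝ) / N))
            (f xy.1) (g xy.2) (1/(N:ℝ))
            (SRC.ratio_nonneg hN0 _) (SRC.ratio_nonneg hN0 _)
            (SRC.ratio_ge hN0 (f xy.1) (hf xy.1).2)
            (SRC.ratio_ge hN0 (g xy.2) (hg xy.2).2)
            (hf xy.1).1 (hf xy.1).2 (hg xy.2).1 (hg xy.2).2 (by positivity)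
          have h2 : 2*(1/(N:ℝ)) = 2/(N:ℝ) := by ring
          linarith [h1, h2.ge]
        exact mul_le_mul_of_nonneg_left hr (SRC.iid_nonneg hρ.1 ℓ xy)
      have hexp : ∑ xy : (Fin ℓ → U) × (Fin ℓ → V),
          iid ρ ℓ xy * (f xy.1 * g xy.2 - 2/(N:ℝ))
          = (∑ x : (Fin ℓ → U) × (Fin ℓ → V), iid ρ ℓ x * (f x.1 * g x.2)) - 2/(N:ℝ) := by
        have hone : ∑ xy : (Fin ℓ → U) × (Fin ℓ → V), iid ρ ℓ xy = 1 := by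
          rw [show (∑ xy : (Fin ℓ → U) × (Fin ℓ → V), iid ρ ℓ xy)
            = ∑ xy : (Fin ℓ → U) × (Fin ℓ → V), ∏ s, ρ (xy.1 s, xy.2 s) from
              Finset.sum_congr rfl fun _ _ => rfl]
          exact SRC.sum_iid_one hρ ℓ
        simp_rw [mul_sub]
        rw [Finset.sum_sub_distrib, ← Finset.sum_mul, hone, one_mul]
      rw [← hexp]
      exact Finset.sum_le_sum fun xy _ => hpt xy
    have h2N : 2/(N:ℝ) ≤ p/31 := by
      have h1 : (0:ℝ) < 62/p := by positivity
      have h2 : 2/(N:ℝ) ≤ 2/((62:ℝ)/p) :=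
        div_le_div_of_nonneg_left (by norm_num) h1 hNge
      have h3 : 2/((62:ℝ)/p) = p/31 := by
        field_simp
        ring
      linarith
    have hq30 : 30*p/31 ≤ Q := by
      have h1 : p - 2/(N:ℝ) ≤ Q := le_trans (by linarith) hQ_ge
      linarith
    have hQ1 : Q ≤ 1 := by
      have e1 : ∀ b ∈ Finset.univ, SRC.wB ρ ℓ N b *
          (if SRC.PrA ℓ N f b ∧ SRC.PrB ℓ N g b then (1:ℝ) else 0) ≤ SRC.wB ρ ℓ N b := by
        intro b _
        by_cases hb : SRC.PrA ℓ N f b ∧ SRC.PrB ℓ N g b <;>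
          simp [hb, SRC.wB_nonneg hρ.1 ℓ N b]
      calc Q ≤ ∑ b : SRC.Blk U V ℓ N, SRC.wB ρ ℓ N b := Finset.sum_le_sum e1
        _ = 1 := SRC.wB_sum_one hρ ℓ N hN0
    have hτ : ((n:ℝ) * 3) * (QA + QB) / K ≤ 3/5 := by
      rw [div_le_iff₀ hKRpos]
      have h1 : (n:ℝ)*3*(QA+QB) ≤ (n:ℝ)*3*(EfS+EgS) :=
        mul_le_mul_of_nonneg_left (by linarith) (by positivity)
      linarith [hK5]
    have hnum : p ≤ (1 - (1 - Q)^3) * (1 - ((n:ℝ) * 3) * (QA + QB) / K) :=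
      SRC.final_numeric p Q (((n:ℝ) * 3) * (QA + QB) / K) hp0 hp18 hq30 hQ1 hτ
    have main := SRC.colLE_main ρ hρ p n ℓ N K (by omega) hN0 hK0 f g hnum
    have hcol := SRC.col_le_of_colLE ρ n p K main
    have hKfin : (K:ℝ) ≤ 9*(n:ℝ)*agr ρ p + 48 := by
      have h1 : 5*(n:ℝ)*(EfS+EgS) < 5*(n:ℝ)*agr ρ p + 43 := by
        have h2 : 5*(n:ℝ)*(EfS+EgS) < 5*(n:ℝ)*(agr ρ p + 43/(5*(n:ℝ))) := by
          apply mul_lt_mul_of_pos_left hcε (by positivity)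
        have h3 : 5*(n:ℝ)*(agr ρ p + 43/(5*(n:ℝ))) = 5*(n:ℝ)*agr ρ p + 43 := by
          field_simp
        linarith
      nlinarith [ha0, hnR]
    calc ((col ρ n p : ℕ∞) : ℝ≥0∞) ≤ ((K : ℕ∞) : ℝ≥0∞) := by exact_mod_cast hcol
      _ = ENNReal.ofReal K := hcast K
      _ ≤ ENNReal.ofReal (9*n*agr ρ p + 48) := ENNReal.ofReal_le_ofReal hKfin

end SR
end

section
/- Let ρ be a bipartite distribution on U × V, let n ≥ 1, and let K be a real number with K > agr_ρ(1/n). Then there exists a (possibly randomized) pair of maps (ℓ, A, B), with A from U^ℓ to subsets of [n] and B from V^ℓ to subsets of [n], such that: (i) the output size is at most 3nK + 16, i.e., always |A(u⃗)| ≤ 3nK + 16 and |B(v⃗)| ≤ 3nK + 16; (ii) Pr_{(u⃗,v⃗)∼ρ^⊗ℓ}[A(u⃗) ∩ B(v⃗) = ∅] < 1/e + 1/2; and (iii) the distribution on [n] obtained by, conditioned on A(u⃗) ∩ B(v⃗) ≠ ∅, choosing a uniformly random element of A(u⃗) ∩ B(v⃗), is exactly the uniform distribution on [n]. -/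
open scoped BigOperators ENNReal

namespace SR

variable {U V X Y : Type*}

section Generic

/-- Sum over functions of a product of weights equals product of sums. -/
lemma sum_fn_prod {ι Ω : Type*} [Fintype ι] [DecidableEq ι] [Fintype Ω] (w : ι → Ω → ℝ) :
    ∑ c : ι → Ω, ∏ j, w j (c j) = ∏ j, ∑ o, w j o :=
  (Fintype.prod_sum (fun j (o : Ω) => w j o)).symm

/-- Grouping a product measure by a per-coordinate classification. -/
lemma sum_group {Ω T : Type*} [Fintype Ω] [Fintype T] [DecidableEq T] {n : ℕ}
    (w : Ω → ℝ) (κ : Ω → T) (G : (Fin n → T) → ℝ) :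
    ∑ ω : Fin n → Ω, (∏ j, w (ω j)) * G (fun j => κ (ω j))
      = ∑ c : Fin n → T, (∏ j, ∑ o : Ω, if κ o = c j then w o else 0) * G c := by
  have h1 : ∀ c : Fin n → T, (∏ j, ∑ o : Ω, if κ o = c j then w o else 0)
      = ∑ ω : Fin n → Ω, ∏ j, (if κ (ω j) = c j then w (ω j) else 0) :=
    fun c => Fintype.prod_sum (fun j o => if κ o = c j then w o else 0)
  simp only [h1, Finset.sum_mul]
  rw [Finset.sum_comm]
  refine Fintype.sum_congr _ _ fun ω => ?_
  rw [Finset.sum_eq_single (fun j => κ (ω j))]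
  · congr 1
    exact Finset.prod_congr rfl fun j _ => by simp
  · intro c _ hc
    have hj : ∃ j, ¬ (κ (ω j) = c j) := by
      by_contra h
      push_neg at h
      exact hc (funext fun j => (h j).symm)
    obtain ⟨j, hj⟩ := hj
    have h0 : (if κ (ω j) = c j then w (ω j) else 0) = 0 := if_neg hj
    rw [Finset.prod_eq_zero (Finset.mem_univ j) h0, zero_mul]
  · intro h; exact absurd (Finset.mem_univ _) h

lemma prodmeas_expect {T : Type*} [Fintype T] {n : ℕ} (π : T → ℝ) (hπ : ∑ t, π t = 1)
    (j0 : Fin n) (h : T → ℝ) :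
    ∑ c : Fin n → T, (∏ j, π (c j)) * h (c j0) = ∑ t, π t * h t := by
  have key : ∀ c : Fin n → T, (∏ j, π (c j)) * h (c j0)
      = ∏ j, (π (c j) * if j = j0 then h (c j) else 1) := by
    intro c
    rw [Finset.prod_mul_distrib, Fintype.prod_ite_eq' j0 (fun j => h (c j))]
  simp only [key]
  rw [← Fintype.prod_sum (fun (j : Fin n) t => π t * if j = j0 then h t else 1)]
  have h2 : ∀ j : Fin n, (∑ t, π t * if j = j0 then h t else 1)
      = if j = j0 then (∑ t, π t * h t) else 1 := by
    intro j
    split_ifs with hj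
    · simp [hj]
    · simp [hπ]
  simp only [h2]
  rw [Fintype.prod_ite_eq' j0 (fun _ => ∑ t, π t * h t)]

lemma prodmeas_expect2 {T : Type*} [Fintype T] {n : ℕ} (π : T → ℝ) (hπ : ∑ t, π t = 1)
    {j0 j1 : Fin n} (hj : j0 ≠ j1) (h h' : T → ℝ) :
    ∑ c : Fin n → T, (∏ j, π (c j)) * (h (c j0) * h' (c j1))
      = (∑ t, π t * h t) * (∑ t, π t * h' t) := by
  have key : ∀ c : Fin n → T, (∏ j, π (c j)) * (h (c j0) * h' (c j1))
      = ∏ j, (π (c j) * ((if j = j0 then h (c j) else 1) * (if j = j1 then h' (c j) else 1))) := by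
    intro c
    rw [Finset.prod_mul_distrib, Finset.prod_mul_distrib,
      Fintype.prod_ite_eq' j0 (fun j => h (c j)), Fintype.prod_ite_eq' j1 (fun j => h' (c j))]
  simp only [key]
  rw [← Fintype.prod_sum
    (fun (j : Fin n) t => π t * ((if j = j0 then h t else 1) * (if j = j1 then h' t else 1)))]
  have h2 : ∀ j : Fin n,
      (∑ t, π t * ((if j = j0 then h t else 1) * (if j = j1 then h' t else 1)))
      = (if j = j0 then (∑ t, π t * h t) else 1) * (if j = j1 then (∑ t, π t * h' t) else 1) := by
    intro j
    by_cases e0 : j = j0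
    · subst e0
      simp [hj]
    · by_cases e1 : j = j1 <;> simp [e0, e1, Ne.symm hj, hπ]
  simp only [h2]
  rw [Finset.prod_mul_distrib, Fintype.prod_ite_eq' j0 (fun _ => ∑ t, π t * h t),
    Fintype.prod_ite_eq' j1 (fun _ => ∑ t, π t * h' t)]

lemma prodmeas_event {T : Type*} [Fintype T] {n : ℕ} (π : T → ℝ)
    (p : T → Prop) [DecidablePred p] :
    ∑ c : Fin n → T, (∏ j, π (c j)) * (if ∀ j, p (c j) then 1 else 0)
      = (∑ t, if p t then π t else 0) ^ n := by
  have key : ∀ c : Fin n → T, (∏ j, π (c j)) * (if ∀ j, p (c j) then (1:ℝ) else 0)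
      = ∏ j, (if p (c j) then π (c j) else 0) := by
    intro c
    by_cases hc : ∀ j, p (c j)
    · rw [if_pos hc, mul_one]
      exact Finset.prod_congr rfl fun j _ => (if_pos (hc j)).symm
    · rw [if_neg hc, mul_zero]
      push_neg at hc
      obtain ⟨j, hj⟩ := hc
      have h0 : (if p (c j) then π (c j) else 0) = 0 := if_neg hj
      exact (Finset.prod_eq_zero (Finset.mem_univ j) h0).symm
  simp only [key]
  rw [← Fintype.prod_sum (fun (_ : Fin n) t => if p t then π t else 0), Finset.prod_const,
    Finset.card_univ, Fintype.card_fin]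

end Generic

section Cheb

variable {T : Type*} [Fintype T] {n : ℕ}

lemma var_id (π : T → ℝ) (hπ : ∑ t, π t = 1) (ind : T → ℝ)
    (hind : ∀ t, ind t * ind t = ind t) :
    ∑ c : Fin n → T, (∏ j, π (c j)) * ((∑ j, ind (c j)) - n * (∑ t, π t * ind t)) ^ 2
      = n * ((∑ t, π t * ind t) - (∑ t, π t * ind t) ^ 2) := by
  set p : ℝ := ∑ t, π t * ind t with hp
  have hsub : ∀ c : Fin n → T,
      ((∑ j, ind (c j)) - n * p) ^ 2
        = ∑ j, ∑ k, (ind (c j) - p) * (ind (c k) - p) := by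
    intro c
    have h1 : (∑ j, ind (c j)) - n * p = ∑ j, (ind (c j) - p) := by
      rw [Finset.sum_sub_distrib, Finset.sum_const, Finset.card_univ, Fintype.card_fin,
        nsmul_eq_mul]
    rw [h1, sq, Finset.sum_mul_sum]
  simp only [hsub, Finset.mul_sum]
  rw [Finset.sum_comm]
  have hterm : ∀ j : Fin n, ∑ c : Fin n → T, ∑ k : Fin n,
      (∏ j', π (c j')) * ((ind (c j) - p) * (ind (c k) - p))
      = p - p ^ 2 := by
    intro j
    rw [Finset.sum_comm]
    have hk : ∀ k : Fin n, (∑ c : Fin n → T,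
        (∏ j', π (c j')) * ((ind (c j) - p) * (ind (c k) - p)))
        = if j = k then p - p ^ 2 else 0 := by
      intro k
      by_cases hjk : j = k
      · subst hjk
        rw [if_pos rfl]
        have := prodmeas_expect π hπ j (fun t => (ind t - p) * (ind t - p))
        rw [this]
        have hpt : ∀ t, π t * ((ind t - p) * (ind t - p))
            = (π t * ind t) * (1 - 2 * p) + π t * p ^ 2 := by
          intro t
          linear_combination π t * (hind t)
        simp only [hpt]
        rw [Finset.sum_add_distrib, ← Finset.sum_mul, ← Finset.sum_mul, ← hp, hπ]
        ring
      · rw [if_neg hjk]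
        rw [prodmeas_expect2 π hπ hjk (fun t => ind t - p) (fun t => ind t - p)]
        have : (∑ t, π t * (ind t - p)) = 0 := by
          simp only [mul_sub]
          rw [Finset.sum_sub_distrib, ← Finset.sum_mul, hπ, ← hp]
          ring
        rw [this, zero_mul]
    simp only [hk]
    simp
  simp only [hterm]
  rw [Finset.sum_const, Finset.card_univ, Fintype.card_fin, nsmul_eq_mul]

lemma cheb (π : T → ℝ) (hπ0 : ∀ t, 0 ≤ π t) (hπ : ∑ t, π t = 1) (ind : T → ℝ)
    (hind : ∀ t, ind t * ind t = ind t) (hind0 : ∀ t, 0 ≤ ind t) :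
    ∑ c : Fin n → T, (∏ j, π (c j)) *
        (if ¬ ((∑ j, ind (c j)) ≤ 3 * n * (∑ t, π t * ind t) + 8) then 1 else 0)
      ≤ 1 / 64 := by
  set p : ℝ := ∑ t, π t * ind t with hp
  have hp0 : 0 ≤ p := Finset.sum_nonneg fun t _ => mul_nonneg (hπ0 t) (hind0 t)
  have hp1 : p ≤ 1 := by
    rw [← hπ]
    refine Finset.sum_le_sum fun t _ => ?_
    have hle1 : ind t ≤ 1 := by nlinarith [hind t, sq_nonneg (ind t - 1)]
    have := mul_le_mul_of_nonneg_left hle1 (hπ0 t)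
    linarith
  have hnp0 : (0:ℝ) ≤ (n:ℝ) * p := mul_nonneg (Nat.cast_nonneg n) hp0
  have hδ : (0:ℝ) < 2 * ((n:ℝ) * p) + 8 := by linarith
  have hpoint : ∀ c : Fin n → T,
      (∏ j, π (c j)) * (if ¬ ((∑ j, ind (c j)) ≤ 3 * n * p + 8) then 1 else 0)
      ≤ (∏ j, π (c j)) * (((∑ j, ind (c j)) - n * p) ^ 2 / (2 * ((n:ℝ) * p) + 8) ^ 2) := by
    intro c
    have hP : 0 ≤ ∏ j, π (c j) := Finset.prod_nonneg fun j _ => hπ0 (c j)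
    refine mul_le_mul_of_nonneg_left ?_ hP
    split_ifs with h
    · positivity
    · push_neg at h
      have h2 : 2 * ((n:ℝ) * p) + 8 < (∑ j, ind (c j)) - n * p := by nlinarith [h]
      have h3 : (2 * ((n:ℝ) * p) + 8) ^ 2 < ((∑ j, ind (c j)) - n * p) ^ 2 := by nlinarith
      rw [le_div_iff₀ (by positivity)]
      linarith
  calc ∑ c : Fin n → T, (∏ j, π (c j)) *
        (if ¬ ((∑ j, ind (c j)) ≤ 3 * n * p + 8) then 1 else 0)
      ≤ ∑ c : Fin n → T, (∏ j, π (c j)) *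
        (((∑ j, ind (c j)) - n * p) ^ 2 / (2 * ((n:ℝ) * p) + 8) ^ 2) :=
        Finset.sum_le_sum fun c _ => hpoint c
    _ = (∑ c : Fin n → T, (∏ j, π (c j)) * ((∑ j, ind (c j)) - n * p) ^ 2)
          / (2 * ((n:ℝ) * p) + 8) ^ 2 := by
        rw [Finset.sum_div]
        exact Finset.sum_congr rfl fun c _ => by ring
    _ = ((n:ℝ) * (p - p ^ 2)) / (2 * ((n:ℝ) * p) + 8) ^ 2 := by
        rw [var_id π hπ ind hind]
    _ ≤ 1 / 64 := by
        rw [div_le_div_iff₀ (by positivity) (by norm_num)]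
        nlinarith [sq_nonneg ((n:ℝ) * p - 4), mul_nonneg hnp0 hp0]

end Cheb


section Pattern

open Classical in
/-- Truncated support set of a boolean pattern. -/
noncomputable def trunc (n : ℕ) (p : ℝ) (a : Fin n → Bool) : Finset (Fin n) :=
  if (∑ j, if a j = true then (1:ℝ) else 0) ≤ 3 * n * p + 8 then
    Finset.univ.filter (fun j => a j = true) else ∅

lemma trunc_card_le {n : ℕ} {p : ℝ} (hp : 0 ≤ 3 * (n:ℝ) * p + 8) (a : Fin n → Bool) :
    ((trunc n p a).card : ℝ) ≤ 3 * n * p + 8 := by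
  unfold trunc
  split_ifs with h
  · refine le_trans (le_of_eq ?_) h
    rw [Finset.card_filter]
    push_cast
    rfl
  · simpa using hp

lemma trunc_shift {n : ℕ} [NeZero n] (p : ℝ) (a : Fin n → Bool) :
    trunc n p (fun j => a (j - 1)) = (trunc n p a).image (· + 1) := by
  have hcnt : (∑ j, if a (j - 1) = true then (1:ℝ) else 0)
      = ∑ j, if a j = true then (1:ℝ) else 0 :=
    Equiv.sum_comp (Equiv.subRight (1 : Fin n)) (fun j => if a j = true then (1:ℝ) else 0)
  unfold trunc
  rw [hcnt]
  split_ifs with h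
  · ext j
    simp only [Finset.mem_filter, Finset.mem_univ, true_and, Finset.mem_image]
    constructor
    · intro hj
      exact ⟨j - 1, by simpa using hj, by simp⟩
    · rintro ⟨x, hx, rfl⟩
      simpa using hx
  · simp

lemma sum_inv_card {n : ℕ} (S : Finset (Fin n)) :
    ∑ i, (if i ∈ S then ((S.card : ℝ))⁻¹ else 0) = if S.Nonempty then (1:ℝ) else 0 := by
  rcases S.eq_empty_or_nonempty with rfl | h
  · simp
  · rw [if_pos h, Finset.sum_ite_mem, Finset.univ_inter, Finset.sum_const, nsmul_eq_mul,
      mul_inv_cancel₀]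
    exact Nat.cast_ne_zero.mpr (Finset.card_ne_zero_of_mem h.choose_spec)

/-- The shift equivalence on patterns. -/
def shiftEquiv (n : ℕ) [NeZero n] (T : Type*) : (Fin n → T) ≃ (Fin n → T) where
  toFun c := fun j => c (j - 1)
  invFun c := fun j => c (j + 1)
  left_inv c := by funext j; simp
  right_inv c := by funext j; simp

open Fin.NatCast in
lemma uniform {n : ℕ} [NeZero n] (π : Bool × Bool → ℝ) (pa pb : ℝ) (i : Fin n) :
    ∑ c : Fin n → Bool × Bool, (∏ j, π (c j)) *
        (if i ∈ trunc n pa (fun j => (c j).1) ∩ trunc n pb (fun j => (c j).2)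
          then (((trunc n pa (fun j => (c j).1) ∩ trunc n pb (fun j => (c j).2)).card : ℝ))⁻¹
          else 0)
      = (∑ c : Fin n → Bool × Bool, (∏ j, π (c j)) *
          (if (trunc n pa (fun j => (c j).1) ∩ trunc n pb (fun j => (c j).2)).Nonempty
            then 1 else 0)) / n := by
  set F : Fin n → ℝ := fun i => ∑ c : Fin n → Bool × Bool, (∏ j, π (c j)) *
        (if i ∈ trunc n pa (fun j => (c j).1) ∩ trunc n pb (fun j => (c j).2)
          then (((trunc n pa (fun j => (c j).1) ∩ trunc n pb (fun j => (c j).2)).card : ℝ))⁻¹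
          else 0) with hF
  have hinj : Function.Injective (· + 1 : Fin n → Fin n) := add_left_injective 1
  have hshift : ∀ i : Fin n, F (i + 1) = F i := by
    intro i
    have hsc := (Equiv.sum_comp (shiftEquiv n (Bool × Bool))
      (fun c : Fin n → Bool × Bool => (∏ j, π (c j)) *
        (if (i+1) ∈ trunc n pa (fun j => (c j).1) ∩ trunc n pb (fun j => (c j).2)
          then (((trunc n pa (fun j => (c j).1) ∩ trunc n pb (fun j => (c j).2)).card : ℝ))⁻¹
          else 0))).symm
    refine hsc.trans (Finset.sum_congr rfl fun c _ => ?_)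
    have hP : (∏ j, π ((shiftEquiv n (Bool × Bool) c) j)) = ∏ j, π (c j) := by
      show (∏ j, π (c (j - 1))) = ∏ j, π (c j)
      exact Equiv.prod_comp (Equiv.subRight (1 : Fin n)) (fun j => π (c j))
    have hA : trunc n pa (fun j => ((shiftEquiv n (Bool × Bool) c) j).1)
        = (trunc n pa (fun j => (c j).1)).image (· + 1) :=
      trunc_shift pa (fun j => (c j).1)
    have hB : trunc n pb (fun j => ((shiftEquiv n (Bool × Bool) c) j).2)
        = (trunc n pb (fun j => (c j).2)).image (· + 1) :=
      trunc_shift pb (fun j => (c j).2)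
    rw [hP, hA, hB, ← Finset.image_inter _ _ hinj]
    congr 1
    rw [Finset.card_image_of_injective _ hinj]
    refine if_congr ?_ rfl rfl
    simp [Finset.mem_image, add_left_inj]
  have hnat : ∀ k : ℕ, F ((k : Fin n)) = F 0 := by
    intro k
    induction k with
    | zero => simp
    | succ m ih =>
      have : ((m + 1 : ℕ) : Fin n) = ((m : ℕ) : Fin n) + 1 := by push_cast; ring
      rw [this, hshift, ih]
  have hconst : ∀ i : Fin n, F i = F 0 := by
    intro i
    conv_lhs => rw [← Fin.cast_val_eq_self i]
    exact hnat i.val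
  have hsum : ∑ i' : Fin n, F i' = (n : ℝ) * F 0 := by
    calc ∑ i' : Fin n, F i' = ∑ _i' : Fin n, F 0 :=
          Finset.sum_congr rfl fun i' _ => hconst i'
      _ = (n : ℝ) * F 0 := by
          rw [Finset.sum_const, Finset.card_univ, Fintype.card_fin, nsmul_eq_mul]
  have hswap : ∑ i' : Fin n, F i' = ∑ c : Fin n → Bool × Bool, (∏ j, π (c j)) *
      (if (trunc n pa (fun j => (c j).1) ∩ trunc n pb (fun j => (c j).2)).Nonempty
        then 1 else 0) := by
    rw [hF]
    rw [Finset.sum_comm]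
    refine Finset.sum_congr rfl fun c _ => ?_
    rw [← Finset.mul_sum, sum_inv_card]
  have hn0 : (n : ℝ) ≠ 0 := Nat.cast_ne_zero.mpr (NeZero.ne n)
  have hbig : (∑ c : Fin n → Bool × Bool, (∏ j, π (c j)) *
      (if (trunc n pa (fun j => (c j).1) ∩ trunc n pb (fun j => (c j).2)).Nonempty
        then 1 else 0)) = (n:ℝ) * F 0 := hswap.symm.trans hsum
  rw [hbig]
  show F i = (n:ℝ) * F 0 / n
  rw [hconst i, mul_div_cancel_left₀ _ hn0]

end Pattern

section Disj

lemma disj_bound {n : ℕ} (hn : 1 ≤ n) (π : Bool × Bool → ℝ) (hπ0 : ∀ t, 0 ≤ π t)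
    (hπ : ∑ t, π t = 1) (pa pb : ℝ)
    (hpa : pa = ∑ t, π t * (if t.1 = true then 1 else 0))
    (hpb : pb = ∑ t, π t * (if t.2 = true then 1 else 0))
    (hq : 1 / (2 * (n:ℝ)) ≤ π (true, true)) :
    ∑ c : Fin n → Bool × Bool, (∏ j, π (c j)) *
        (if trunc n pa (fun j => (c j).1) ∩ trunc n pb (fun j => (c j).2) = ∅
          then 1 else 0)
      < (Real.exp 1)⁻¹ + 1 / 2 := by
  subst hpa hpb
  set pa : ℝ := ∑ t, π t * (if t.1 = true then 1 else 0) with hpa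
  set pb : ℝ := ∑ t, π t * (if t.2 = true then 1 else 0) with hpb
  set q : ℝ := π (true, true) with hqdef
  have hq1 : q ≤ 1 := by
    rw [← hπ]
    exact Finset.single_le_sum (fun t _ => hπ0 t) (Finset.mem_univ _)
  have hq0 : 0 ≤ q := hπ0 _
  have hn0 : (0:ℝ) < (n:ℝ) := by
    have : 0 < n := by omega
    exact_mod_cast this
  have hP0 : ∀ c : Fin n → Bool × Bool, 0 ≤ ∏ j, π (c j) :=
    fun c => Finset.prod_nonneg fun j _ => hπ0 _
  have key : ∀ c : Fin n → Bool × Bool,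
      (if trunc n pa (fun j => (c j).1) ∩ trunc n pb (fun j => (c j).2) = ∅
          then (1:ℝ) else 0)
      ≤ (if ∀ j, ¬ (c j = (true, true)) then (1:ℝ) else 0)
        + ((if ¬ ((∑ j, (if (c j).1 = true then (1:ℝ) else 0)) ≤ 3 * n * pa + 8)
              then (1:ℝ) else 0)
          + (if ¬ ((∑ j, (if (c j).2 = true then (1:ℝ) else 0)) ≤ 3 * n * pb + 8)
              then (1:ℝ) else 0)) := by
    intro c
    by_cases h1 : ∀ j, ¬ (c j = (true, true))
    · rw [if_pos h1]
      split_ifs <;> norm_num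
    · rw [if_neg h1]
      push_neg at h1
      obtain ⟨j, hj⟩ := h1
      by_cases h2 : (∑ j, (if (c j).1 = true then (1:ℝ) else 0)) ≤ 3 * n * pa + 8
      · by_cases h3 : (∑ j, (if (c j).2 = true then (1:ℝ) else 0)) ≤ 3 * n * pb + 8
        · have hmem : j ∈ trunc n pa (fun j => (c j).1) ∩ trunc n pb (fun j => (c j).2) := by
            unfold trunc
            rw [if_pos h2, if_pos h3]
            simp only [Finset.mem_inter, Finset.mem_filter, Finset.mem_univ, true_and]
            exact ⟨by rw [hj], by rw [hj]⟩
          have hne2 : trunc n pa (fun j => (c j).1) ∩ trunc n pb (fun j => (c j).2) ≠ ∅ :=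
            Finset.ne_empty_of_mem hmem
          rw [if_neg hne2]
          split_ifs <;> norm_num
        · have h3' : (if ¬ ((∑ j, (if (c j).2 = true then (1:ℝ) else 0)) ≤ 3 * n * pb + 8)
              then (1:ℝ) else 0) = 1 := if_pos h3
          rw [h3']
          split_ifs <;> norm_num
      · have h2' : (if ¬ ((∑ j, (if (c j).1 = true then (1:ℝ) else 0)) ≤ 3 * n * pa + 8)
            then (1:ℝ) else 0) = 1 := if_pos h2
        rw [h2']
        split_ifs <;> norm_num
  have step1 : ∑ c : Fin n → Bool × Bool, (∏ j, π (c j)) *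
        (if trunc n pa (fun j => (c j).1) ∩ trunc n pb (fun j => (c j).2) = ∅
          then (1:ℝ) else 0)
      ≤ (∑ c : Fin n → Bool × Bool, (∏ j, π (c j)) *
          (if ∀ j, ¬ (c j = (true, true)) then (1:ℝ) else 0))
        + ((∑ c : Fin n → Bool × Bool, (∏ j, π (c j)) *
            (if ¬ ((∑ j, (if (c j).1 = true then (1:ℝ) else 0)) ≤ 3 * n * pa + 8)
              then (1:ℝ) else 0))
          + (∑ c : Fin n → Bool × Bool, (∏ j, π (c j)) *
            (if ¬ ((∑ j, (if (c j).2 = true then (1:ℝ) else 0)) ≤ 3 * n * pb + 8)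
              then (1:ℝ) else 0))) := by
    rw [← Finset.sum_add_distrib, ← Finset.sum_add_distrib]
    refine Finset.sum_le_sum fun c _ => ?_
    calc (∏ j, π (c j)) * _ ≤ (∏ j, π (c j)) * _ :=
          mul_le_mul_of_nonneg_left (key c) (hP0 c)
      _ = _ := by ring
  -- the no-joint-success term
  have hsum_ne : (∑ t : Bool × Bool, if ¬ (t = (true, true)) then π t else 0) = 1 - q := by
    have hpt : ∀ t : Bool × Bool, (if ¬ (t = (true, true)) then π t else 0)
        = π t - (if t = (true, true) then π t else 0) := by
      intro t
      by_cases h : t = (true, true)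
      · simp [h]
      · simp [h]
    simp only [hpt]
    rw [Finset.sum_sub_distrib, hπ, Fintype.sum_ite_eq' (⟨true, true⟩ : Bool × Bool) π]
  have hI1 : (∑ c : Fin n → Bool × Bool, (∏ j, π (c j)) *
      (if ∀ j, ¬ (c j = (true, true)) then (1:ℝ) else 0)) = (1 - q) ^ n := by
    rw [prodmeas_event π (fun t => ¬ (t = (true, true))), hsum_ne]
  have hgeom : (1 - q) ^ n ≤ Real.exp (-(1/2)) := by
    have h1q : (0:ℝ) ≤ 1 - q := by linarith
    have hstep : (1:ℝ) - q ≤ Real.exp (-(1/(2*(n:ℝ)))) := by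
      have h1 : (1:ℝ) - q ≤ 1 - 1/(2*(n:ℝ)) := by linarith
      have h2 := Real.add_one_le_exp (-(1/(2*(n:ℝ))))
      linarith
    calc (1 - q) ^ n ≤ (Real.exp (-(1/(2*(n:ℝ))))) ^ n := pow_le_pow_left₀ h1q hstep n
      _ = Real.exp ((n:ℝ) * (-(1/(2*(n:ℝ))))) := (Real.exp_nat_mul _ n).symm
      _ = Real.exp (-(1/2)) := by
          congr 1
          field_simp
  have hI2 : (∑ c : Fin n → Bool × Bool, (∏ j, π (c j)) *
      (if ¬ ((∑ j, (if (c j).1 = true then (1:ℝ) else 0)) ≤ 3 * n * pa + 8)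
        then (1:ℝ) else 0)) ≤ 1/64 := by
    exact cheb π hπ0 hπ (fun t => if t.1 = true then (1:ℝ) else 0)
      (fun t => by by_cases h : t.1 = true <;> simp [h])
      (fun t => by by_cases h : t.1 = true <;> simp [h])
  have hI3 : (∑ c : Fin n → Bool × Bool, (∏ j, π (c j)) *
      (if ¬ ((∑ j, (if (c j).2 = true then (1:ℝ) else 0)) ≤ 3 * n * pb + 8)
        then (1:ℝ) else 0)) ≤ 1/64 := by
    exact cheb π hπ0 hπ (fun t => if t.2 = true then (1:ℝ) else 0)
      (fun t => by by_cases h : t.2 = true <;> simp [h])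
      (fun t => by by_cases h : t.2 = true <;> simp [h])
  -- numeric conclusion
  set x : ℝ := Real.exp (-(1/2)) with hx
  have hx0 : 0 < x := Real.exp_pos _
  set E : ℝ := Real.exp 1 with hE
  have hEpos : (0:ℝ) < E := Real.exp_pos 1
  have hE1 : E < 2.7182818286 := Real.exp_one_lt_d9
  have hE2 : (2.7182818283:ℝ) < E := Real.exp_one_gt_d9
  have hx2 : x * x = E⁻¹ := by
    rw [hx, hE, ← Real.exp_add, ← Real.exp_neg]
    norm_num
  have hEinvE : E⁻¹ * E = 1 := inv_mul_cancel₀ (ne_of_gt hEpos)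
  have hEinv_pos : 0 < E⁻¹ := by positivity
  have hEinv_lb : (0.3678:ℝ) < E⁻¹ := by nlinarith
  have hEinv_ub : E⁻¹ < (0.368:ℝ) := by nlinarith
  have hx_ub : x ≤ 0.6066 := by nlinarith [sq_nonneg (x - 0.6066)]
  calc ∑ c : Fin n → Bool × Bool, (∏ j, π (c j)) *
        (if trunc n pa (fun j => (c j).1) ∩ trunc n pb (fun j => (c j).2) = ∅
          then 1 else 0)
      ≤ (1 - q) ^ n + (1/64 + 1/64) := by
        rw [← hI1]
        exact le_trans step1 (by linarith [hI2, hI3])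
    _ ≤ x + 1/32 := by linarith [hgeom]
    _ < E⁻¹ + 1/2 := by linarith

end Disj


section Construct

variable {U V : Type} [Fintype U] [Fintype V]

lemma iid_nonneg {ρ : U × V → ℝ} (hρ0 : ∀ y, 0 ≤ ρ y) (ℓ : ℕ)
    (x : (Fin ℓ → U) × (Fin ℓ → V)) : 0 ≤ iid ρ ℓ x :=
  Finset.prod_nonneg fun i _ => hρ0 _

lemma mass1 {ρ : U × V → ℝ} (hρ : IsDist ρ) (ℓ0 : ℕ) :
    ∑ x : (Fin ℓ0 → U) × (Fin ℓ0 → V), iid ρ ℓ0 x = 1 := by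
  rw [← Equiv.sum_comp (Equiv.arrowProdEquivProdArrow (Fin ℓ0) (fun _ => U) (fun _ => V)) (fun x => iid ρ ℓ0 x)]
  have hz : ∀ z : Fin ℓ0 → U × V,
      iid ρ ℓ0 (Equiv.arrowProdEquivProdArrow (Fin ℓ0) (fun _ => U) (fun _ => V) z) = ∏ i, ρ (z i) := by
    intro z
    unfold iid
    exact Finset.prod_congr rfl fun i _ => by simp [Equiv.arrowProdEquivProdArrow]
  simp only [hz]
  rw [sum_fn_prod (fun (_ : Fin ℓ0) (y : U × V) => ρ y)]
  simp [hρ.2]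

/-- Discretization of `f` with denominator `D`. -/
noncomputable def fdisc (D : ℕ) {α : Type} (f : α → ℝ) (y : α) : ℕ := ⌊f y * D⌋₊

/-- Block weight. -/
noncomputable def bw (ρ : U × V → ℝ) (ℓ0 D : ℕ)
    (ω : (Fin ℓ0 → U) × (Fin ℓ0 → V) × Fin D × Fin D) : ℝ :=
  iid ρ ℓ0 (ω.1, ω.2.1) * ((D:ℝ)⁻¹ * (D:ℝ)⁻¹)

/-- Block classification. -/
noncomputable def bk {ℓ0 D : ℕ} (f : (Fin ℓ0 → U) → ℝ) (g : (Fin ℓ0 → V) → ℝ)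
    (ω : (Fin ℓ0 → U) × (Fin ℓ0 → V) × Fin D × Fin D) : Bool × Bool :=
  (decide ((ω.2.2.1 : ℕ) < fdisc D f ω.1), decide ((ω.2.2.2 : ℕ) < fdisc D g ω.2.1))

/-- Block pattern measure. -/
noncomputable def bpi (ρ : U × V → ℝ) (ℓ0 D : ℕ) (f : (Fin ℓ0 → U) → ℝ)
    (g : (Fin ℓ0 → V) → ℝ) (t : Bool × Bool) : ℝ :=
  ∑ ω : (Fin ℓ0 → U) × (Fin ℓ0 → V) × Fin D × Fin D,
    if bk f g ω = t then bw ρ ℓ0 D ω else 0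

noncomputable def pAc (ρ : U × V → ℝ) (ℓ0 D : ℕ) (f : (Fin ℓ0 → U) → ℝ)
    (g : (Fin ℓ0 → V) → ℝ) : ℝ :=
  ∑ t, bpi ρ ℓ0 D f g t * (if t.1 = true then 1 else 0)

noncomputable def pBc (ρ : U × V → ℝ) (ℓ0 D : ℕ) (f : (Fin ℓ0 → U) → ℝ)
    (g : (Fin ℓ0 → V) → ℝ) : ℝ :=
  ∑ t, bpi ρ ℓ0 D f g t * (if t.2 = true then 1 else 0)

noncomputable def Amap (ρ : U × V → ℝ) (n ℓ0 : ℕ) (f : (Fin ℓ0 → U) → ℝ)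
    (g : (Fin ℓ0 → V) → ℝ) (u : Fin (n * ℓ0) → U) (r : Fin ((4*n)^n)) : Finset (Fin n) :=
  trunc n (pAc ρ ℓ0 (4*n) f g)
    (fun j => decide (((finFunctionFinEquiv.symm r) j : ℕ)
      < fdisc (4*n) f (fun i => u (finProdFinEquiv (j, i)))))

noncomputable def Bmap (ρ : U × V → ℝ) (n ℓ0 : ℕ) (f : (Fin ℓ0 → U) → ℝ)
    (g : (Fin ℓ0 → V) → ℝ) (v : Fin (n * ℓ0) → V) (r : Fin ((4*n)^n)) : Finset (Fin n) :=
  trunc n (pBc ρ ℓ0 (4*n) f g)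
    (fun j => decide (((finFunctionFinEquiv.symm r) j : ℕ)
      < fdisc (4*n) g (fun i => v (finProdFinEquiv (j, i)))))

/-- Reorganizing all randomness into independent blocks. -/
def blkEquiv (U V : Type) (n ℓ0 D : ℕ) :
    (Fin n → (Fin ℓ0 → U) × (Fin ℓ0 → V) × Fin D × Fin D)
      ≃ ((Fin (n*ℓ0) → U) × (Fin (n*ℓ0) → V)) × (Fin (D^n) × Fin (D^n)) where
  toFun ω := ((fun i => (ω (finProdFinEquiv.symm i).1).1 (finProdFinEquiv.symm i).2,
               fun i => (ω (finProdFinEquiv.symm i).1).2.1 (finProdFinEquiv.symm i).2),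
              (finFunctionFinEquiv (fun j => (ω j).2.2.1),
               finFunctionFinEquiv (fun j => (ω j).2.2.2)))
  invFun x := fun j => (fun i => x.1.1 (finProdFinEquiv (j, i)),
                        fun i => x.1.2 (finProdFinEquiv (j, i)),
                        finFunctionFinEquiv.symm x.2.1 j,
                        finFunctionFinEquiv.symm x.2.2 j)
  left_inv ω := by
    funext j
    have h : ∀ (i : Fin ℓ0), finProdFinEquiv.symm (finProdFinEquiv (j, i)) = (j, i) :=
      fun i => Equiv.symm_apply_apply _ _
    simp [h]
  right_inv x := by
    refine Prod.ext (Prod.ext ?_ ?_) (Prod.ext ?_ ?_)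
    · funext i
      show x.1.1 (finProdFinEquiv ((finProdFinEquiv.symm i).1, (finProdFinEquiv.symm i).2))
        = x.1.1 i
      rw [Prod.mk.eta, Equiv.apply_symm_apply]
    · funext i
      show x.1.2 (finProdFinEquiv ((finProdFinEquiv.symm i).1, (finProdFinEquiv.symm i).2))
        = x.1.2 i
      rw [Prod.mk.eta, Equiv.apply_symm_apply]
    · show finFunctionFinEquiv (fun j => finFunctionFinEquiv.symm x.2.1 j) = x.2.1
      exact Equiv.apply_symm_apply _ _
    · show finFunctionFinEquiv (fun j => finFunctionFinEquiv.symm x.2.2 j) = x.2.2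
      exact Equiv.apply_symm_apply _ _

lemma iid_blocks (ρ : U × V → ℝ) (n ℓ0 : ℕ) (x : (Fin (n*ℓ0) → U) × (Fin (n*ℓ0) → V)) :
    iid ρ (n*ℓ0) x = ∏ j : Fin n, iid ρ ℓ0
      (fun i => x.1 (finProdFinEquiv (j, i)), fun i => x.2 (finProdFinEquiv (j, i))) := by
  unfold iid
  rw [← Equiv.prod_comp finProdFinEquiv (fun k => ρ (x.1 k, x.2 k)), Fintype.prod_prod_type]

lemma master (ρ : U × V → ℝ) (n ℓ0 : ℕ) (f : (Fin ℓ0 → U) → ℝ) (g : (Fin ℓ0 → V) → ℝ)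
    (G2 : Finset (Fin n) → Finset (Fin n) → ℝ) :
    ∑ x : (Fin (n*ℓ0) → U) × (Fin (n*ℓ0) → V), ∑ rA : Fin ((4*n)^n), ∑ rB : Fin ((4*n)^n),
      iid ρ (n*ℓ0) x * ((((4*n : ℕ):ℝ)^n)⁻¹ * (((4*n : ℕ):ℝ)^n)⁻¹) *
        G2 (Amap ρ n ℓ0 f g x.1 rA) (Bmap ρ n ℓ0 f g x.2 rB)
      = ∑ c : Fin n → Bool × Bool, (∏ j, bpi ρ ℓ0 (4*n) f g (c j)) *
          G2 (trunc n (pAc ρ ℓ0 (4*n) f g) (fun j => (c j).1))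
             (trunc n (pBc ρ ℓ0 (4*n) f g) (fun j => (c j).2)) := by
  have hgroup := sum_group (n := n) (bw ρ ℓ0 (4*n)) (bk f g)
      (fun c => G2 (trunc n (pAc ρ ℓ0 (4*n) f g) (fun j => (c j).1))
                   (trunc n (pBc ρ ℓ0 (4*n) f g) (fun j => (c j).2)))
  calc ∑ x : (Fin (n*ℓ0) → U) × (Fin (n*ℓ0) → V), ∑ rA : Fin ((4*n)^n), ∑ rB : Fin ((4*n)^n),
      iid ρ (n*ℓ0) x * ((((4*n : ℕ):ℝ)^n)⁻¹ * (((4*n : ℕ):ℝ)^n)⁻¹) *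
        G2 (Amap ρ n ℓ0 f g x.1 rA) (Bmap ρ n ℓ0 f g x.2 rB)
      = ∑ y : ((Fin (n*ℓ0) → U) × (Fin (n*ℓ0) → V)) × (Fin ((4*n)^n) × Fin ((4*n)^n)),
          iid ρ (n*ℓ0) y.1 * ((((4*n : ℕ):ℝ)^n)⁻¹ * (((4*n : ℕ):ℝ)^n)⁻¹) *
            G2 (Amap ρ n ℓ0 f g y.1.1 y.2.1) (Bmap ρ n ℓ0 f g y.1.2 y.2.2) := by
        simp only [Fintype.sum_prod_type]
    _ = ∑ ω : Fin n → (Fin ℓ0 → U) × (Fin ℓ0 → V) × Fin (4*n) × Fin (4*n),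
          (∏ j, bw ρ ℓ0 (4*n) (ω j)) *
            G2 (trunc n (pAc ρ ℓ0 (4*n) f g) (fun j => (bk f g (ω j)).1))
               (trunc n (pBc ρ ℓ0 (4*n) f g) (fun j => (bk f g (ω j)).2)) := by
        rw [← Equiv.sum_comp (blkEquiv U V n ℓ0 (4*n))]
        refine Finset.sum_congr rfl fun ω _ => ?_
        have hu : ∀ j, (fun i => (blkEquiv U V n ℓ0 (4*n) ω).1.1 (finProdFinEquiv (j, i)))
            = (ω j).1 := by
          intro j
          funext i
          show (ω (finProdFinEquiv.symm (finProdFinEquiv (j, i))).1).1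
              (finProdFinEquiv.symm (finProdFinEquiv (j, i))).2 = _
          rw [Equiv.symm_apply_apply]
        have hv : ∀ j, (fun i => (blkEquiv U V n ℓ0 (4*n) ω).1.2 (finProdFinEquiv (j, i)))
            = (ω j).2.1 := by
          intro j
          funext i
          show (ω (finProdFinEquiv.symm (finProdFinEquiv (j, i))).1).2.1
              (finProdFinEquiv.symm (finProdFinEquiv (j, i))).2 = _
          rw [Equiv.symm_apply_apply]
        have hiid : iid ρ (n*ℓ0) (blkEquiv U V n ℓ0 (4*n) ω).1
            = ∏ j, iid ρ ℓ0 ((ω j).1, (ω j).2.1) := by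
          rw [iid_blocks ρ n ℓ0]
          exact Finset.prod_congr rfl fun j _ => by rw [hu j, hv j]
        have hAmap : Amap ρ n ℓ0 f g (blkEquiv U V n ℓ0 (4*n) ω).1.1
            (blkEquiv U V n ℓ0 (4*n) ω).2.1
            = trunc n (pAc ρ ℓ0 (4*n) f g) (fun j => (bk f g (ω j)).1) := by
          unfold Amap
          congr 1
          funext j
          have hr : finFunctionFinEquiv.symm ((blkEquiv U V n ℓ0 (4*n) ω).2.1) j
              = (ω j).2.2.1 := by
            show finFunctionFinEquiv.symm (finFunctionFinEquiv (fun j' => (ω j').2.2.1)) j = _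
            rw [Equiv.symm_apply_apply]
          rw [hr, hu j]
          rfl
        have hBmap : Bmap ρ n ℓ0 f g (blkEquiv U V n ℓ0 (4*n) ω).1.2
            (blkEquiv U V n ℓ0 (4*n) ω).2.2
            = trunc n (pBc ρ ℓ0 (4*n) f g) (fun j => (bk f g (ω j)).2) := by
          unfold Bmap
          congr 1
          funext j
          have hr : finFunctionFinEquiv.symm ((blkEquiv U V n ℓ0 (4*n) ω).2.2) j
              = (ω j).2.2.2 := by
            show finFunctionFinEquiv.symm (finFunctionFinEquiv (fun j' => (ω j').2.2.2)) j = _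
            rw [Equiv.symm_apply_apply]
          rw [hr, hv j]
          rfl
        rw [hiid, hAmap, hBmap]
        congr 1
        unfold bw
        rw [Finset.prod_mul_distrib, Finset.prod_const, Finset.card_univ, Fintype.card_fin,
          mul_pow, inv_pow]
    _ = ∑ c : Fin n → Bool × Bool, (∏ j, bpi ρ ℓ0 (4*n) f g (c j)) *
          G2 (trunc n (pAc ρ ℓ0 (4*n) f g) (fun j => (c j).1))
             (trunc n (pBc ρ ℓ0 (4*n) f g) (fun j => (c j).2)) := hgroup

end Construct


section Facts

variable {U V : Type} [Fintype U] [Fintype V]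

lemma countFin {D k : ℕ} (hk : k ≤ D) :
    ∑ r : Fin D, (if (r : ℕ) < k then (1:ℝ) else 0) = k := by
  rw [Fin.sum_univ_eq_sum_range (fun i => if i < k then (1:ℝ) else 0) D]
  have hf : (Finset.range D).filter (fun i => i < k) = Finset.range k := by
    ext i
    simp only [Finset.mem_filter, Finset.mem_range]
    omega
  rw [Finset.sum_boole, hf, Finset.card_range]

lemma bw_nonneg {ρ : U × V → ℝ} (hρ0 : ∀ y, 0 ≤ ρ y) (ℓ0 D : ℕ)
    (ω : (Fin ℓ0 → U) × (Fin ℓ0 → V) × Fin D × Fin D) : 0 ≤ bw ρ ℓ0 D ω :=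
  mul_nonneg (iid_nonneg hρ0 ℓ0 _) (by positivity)

lemma bpi_nonneg {ρ : U × V → ℝ} (hρ0 : ∀ y, 0 ≤ ρ y) (ℓ0 D : ℕ)
    (f : (Fin ℓ0 → U) → ℝ) (g : (Fin ℓ0 → V) → ℝ) (t : Bool × Bool) :
    0 ≤ bpi ρ ℓ0 D f g t := by
  refine Finset.sum_nonneg fun ω _ => ?_
  split_ifs
  · exact bw_nonneg hρ0 ℓ0 D ω
  · exact le_refl 0

lemma sum_pi_kappa (ρ : U × V → ℝ) (ℓ0 D : ℕ) (f : (Fin ℓ0 → U) → ℝ)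
    (g : (Fin ℓ0 → V) → ℝ) (h : Bool × Bool → ℝ) :
    ∑ t, bpi ρ ℓ0 D f g t * h t
      = ∑ ω : (Fin ℓ0 → U) × (Fin ℓ0 → V) × Fin D × Fin D,
          bw ρ ℓ0 D ω * h (bk f g ω) := by
  unfold bpi
  simp only [Finset.sum_mul]
  rw [Finset.sum_comm]
  refine Finset.sum_congr rfl fun ω _ => ?_
  simp only [ite_mul, zero_mul]
  exact Fintype.sum_ite_eq (bk f g ω) (fun t => bw ρ ℓ0 D ω * h t)

lemma sum_w_ind (ρ : U × V → ℝ) (ℓ0 D : ℕ)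
    (φ : (Fin ℓ0 → U) → Fin D → ℝ) (ψ : (Fin ℓ0 → V) → Fin D → ℝ) :
    ∑ ω : (Fin ℓ0 → U) × (Fin ℓ0 → V) × Fin D × Fin D,
        bw ρ ℓ0 D ω * (φ ω.1 ω.2.2.1 * ψ ω.2.1 ω.2.2.2)
      = ∑ x : (Fin ℓ0 → U) × (Fin ℓ0 → V), iid ρ ℓ0 x *
          ((∑ r, (D:ℝ)⁻¹ * φ x.1 r) * (∑ r, (D:ℝ)⁻¹ * ψ x.2 r)) := by
  simp only [Fintype.sum_prod_type, bw]
  refine Finset.sum_congr rfl fun bu _ => ?_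
  refine Finset.sum_congr rfl fun bv _ => ?_
  rw [Finset.sum_mul_sum]
  rw [Finset.mul_sum]
  refine Finset.sum_congr rfl fun r _ => ?_
  rw [Finset.mul_sum]
  refine Finset.sum_congr rfl fun r' _ => ?_
  ring

lemma sum_invD {D : ℕ} (hD : D ≠ 0) : (∑ _r : Fin D, (D:ℝ)⁻¹ * (1:ℝ)) = 1 := by
  rw [Finset.sum_const, Finset.card_univ, Fintype.card_fin, nsmul_eq_mul, mul_one,
    mul_inv_cancel₀]
  exact_mod_cast hD

lemma bpi_sum {ρ : U × V → ℝ} (hρ : IsDist ρ) (ℓ0 D : ℕ) (hD : D ≠ 0)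
    (f : (Fin ℓ0 → U) → ℝ) (g : (Fin ℓ0 → V) → ℝ) :
    ∑ t, bpi ρ ℓ0 D f g t = 1 := by
  have h : ∑ t, bpi ρ ℓ0 D f g t = ∑ t, bpi ρ ℓ0 D f g t * (fun _ => (1:ℝ)) t := by simp
  rw [h]
  calc ∑ t, bpi ρ ℓ0 D f g t * (fun _ => (1:ℝ)) t
      = ∑ ω : (Fin ℓ0 → U) × (Fin ℓ0 → V) × Fin D × Fin D,
          bw ρ ℓ0 D ω * (fun _ => (1:ℝ)) (bk f g ω) := sum_pi_kappa ρ ℓ0 D f g _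
    _ = ∑ ω : (Fin ℓ0 → U) × (Fin ℓ0 → V) × Fin D × Fin D,
          bw ρ ℓ0 D ω * ((1:ℝ) * (1:ℝ)) := by simp
    _ = ∑ x : (Fin ℓ0 → U) × (Fin ℓ0 → V), iid ρ ℓ0 x *
          ((∑ _r : Fin D, (D:ℝ)⁻¹ * (1:ℝ)) * (∑ _r : Fin D, (D:ℝ)⁻¹ * (1:ℝ))) :=
        sum_w_ind ρ ℓ0 D (fun _ _ => (1:ℝ)) (fun _ _ => (1:ℝ))
    _ = 1 := by
        have hD1 : (∑ _r : Fin D, (D:ℝ)⁻¹) = (1:ℝ) := by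
          rw [Finset.sum_const, Finset.card_univ, Fintype.card_fin, nsmul_eq_mul,
            mul_inv_cancel₀]
          exact_mod_cast hD
        simp only [mul_one, hD1, one_mul]
        exact mass1 hρ ℓ0

lemma fdisc_le_D {D : ℕ} (hD : D ≠ 0) {α : Type} {f : α → ℝ}
    (hf : ∀ y, f y ∈ Set.Icc (0:ℝ) 1) (y : α) : fdisc D f y ≤ D := by
  unfold fdisc
  have hD0 : (0:ℝ) ≤ (D:ℝ) := Nat.cast_nonneg D
  have h1 : f y * D ≤ (D:ℝ) := by nlinarith [(hf y).2, (hf y).1]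
  calc ⌊f y * D⌋₊ ≤ ⌊(D:ℝ)⌋₊ := Nat.floor_le_floor h1
    _ = D := Nat.floor_natCast D

lemma fdisc_div_le {D : ℕ} (hD : D ≠ 0) {α : Type} {f : α → ℝ}
    (hf : ∀ y, f y ∈ Set.Icc (0:ℝ) 1) (y : α) : (fdisc D f y : ℝ)/D ≤ f y := by
  have hD0 : (0:ℝ) < D := by exact_mod_cast Nat.pos_of_ne_zero hD
  rw [div_le_iff₀ hD0]
  exact Nat.floor_le (by nlinarith [(hf y).1])

lemma fdisc_div_ge {D : ℕ} (hD : D ≠ 0) {α : Type} {f : α → ℝ}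
    (hf : ∀ y, f y ∈ Set.Icc (0:ℝ) 1) (y : α) : f y - 1/D ≤ (fdisc D f y : ℝ)/D := by
  have hD0 : (0:ℝ) < D := by exact_mod_cast Nat.pos_of_ne_zero hD
  rw [le_div_iff₀ hD0]
  have h1 := Nat.lt_floor_add_one (f y * (D:ℝ))
  have h2 : (1/(D:ℝ)) * D = 1 := one_div_mul_cancel (ne_of_gt hD0)
  unfold fdisc
  nlinarith [h1, h2]

lemma pAc_eq {ρ : U × V → ℝ} (ℓ0 D : ℕ) (hD : D ≠ 0) {f : (Fin ℓ0 → U) → ℝ}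
    (g : (Fin ℓ0 → V) → ℝ) (hf : ∀ y, f y ∈ Set.Icc (0:ℝ) 1) :
    pAc ρ ℓ0 D f g = ∑ x : (Fin ℓ0 → U) × (Fin ℓ0 → V),
      iid ρ ℓ0 x * ((fdisc D f x.1 : ℝ)/D) := by
  calc pAc ρ ℓ0 D f g
      = ∑ ω : (Fin ℓ0 → U) × (Fin ℓ0 → V) × Fin D × Fin D,
          bw ρ ℓ0 D ω * (if (bk f g ω).1 = true then (1:ℝ) else 0) :=
        sum_pi_kappa ρ ℓ0 D f g _
    _ = ∑ ω : (Fin ℓ0 → U) × (Fin ℓ0 → V) × Fin D × Fin D,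
          bw ρ ℓ0 D ω * ((if (ω.2.2.1 : ℕ) < fdisc D f ω.1 then (1:ℝ) else 0) * (1:ℝ)) := by
        refine Finset.sum_congr rfl fun ω _ => ?_
        congr 1
        simp [bk]
    _ = ∑ x : (Fin ℓ0 → U) × (Fin ℓ0 → V), iid ρ ℓ0 x *
          ((∑ r : Fin D, (D:ℝ)⁻¹ * (if (r : ℕ) < fdisc D f x.1 then (1:ℝ) else 0))
            * (∑ _r : Fin D, (D:ℝ)⁻¹ * (1:ℝ))) :=
        sum_w_ind ρ ℓ0 D
          (fun bu r => if (r : ℕ) < fdisc D f bu then (1:ℝ) else 0) (fun _ _ => (1:ℝ))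
    _ = ∑ x : (Fin ℓ0 → U) × (Fin ℓ0 → V), iid ρ ℓ0 x * ((fdisc D f x.1 : ℝ)/D) := by
        refine Finset.sum_congr rfl fun x _ => ?_
        rw [sum_invD hD, mul_one, ← Finset.mul_sum, countFin (fdisc_le_D hD hf x.1),
          inv_mul_eq_div]

lemma pBc_eq {ρ : U × V → ℝ} (ℓ0 D : ℕ) (hD : D ≠ 0) (f : (Fin ℓ0 → U) → ℝ)
    {g : (Fin ℓ0 → V) → ℝ} (hg : ∀ y, g y ∈ Set.Icc (0:ℝ) 1) :
    pBc ρ ℓ0 D f g = ∑ x : (Fin ℓ0 → U) × (Fin ℓ0 → V),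
      iid ρ ℓ0 x * ((fdisc D g x.2 : ℝ)/D) := by
  calc pBc ρ ℓ0 D f g
      = ∑ ω : (Fin ℓ0 → U) × (Fin ℓ0 → V) × Fin D × Fin D,
          bw ρ ℓ0 D ω * (if (bk f g ω).2 = true then (1:ℝ) else 0) :=
        sum_pi_kappa ρ ℓ0 D f g _
    _ = ∑ ω : (Fin ℓ0 → U) × (Fin ℓ0 → V) × Fin D × Fin D,
          bw ρ ℓ0 D ω * ((1:ℝ) * (if (ω.2.2.2 : ℕ) < fdisc D g ω.2.1 then (1:ℝ) else 0)) := by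
        refine Finset.sum_congr rfl fun ω _ => ?_
        congr 1
        simp [bk]
    _ = ∑ x : (Fin ℓ0 → U) × (Fin ℓ0 → V), iid ρ ℓ0 x *
          ((∑ _r : Fin D, (D:ℝ)⁻¹ * (1:ℝ))
            * (∑ r : Fin D, (D:ℝ)⁻¹ * (if (r : ℕ) < fdisc D g x.2 then (1:ℝ) else 0))) :=
        sum_w_ind ρ ℓ0 D (fun _ _ => (1:ℝ))
          (fun bv r => if (r : ℕ) < fdisc D g bv then (1:ℝ) else 0)
    _ = ∑ x : (Fin ℓ0 → U) × (Fin ℓ0 → V), iid ρ ℓ0 x * ((fdisc D g x.2 : ℝ)/D) := by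
        refine Finset.sum_congr rfl fun x _ => ?_
        rw [sum_invD hD, one_mul, ← Finset.mul_sum, countFin (fdisc_le_D hD hg x.2),
          inv_mul_eq_div]

lemma qq_eq {ρ : U × V → ℝ} (ℓ0 D : ℕ) (hD : D ≠ 0) {f : (Fin ℓ0 → U) → ℝ}
    {g : (Fin ℓ0 → V) → ℝ} (hf : ∀ y, f y ∈ Set.Icc (0:ℝ) 1)
    (hg : ∀ y, g y ∈ Set.Icc (0:ℝ) 1) :
    bpi ρ ℓ0 D f g (true, true) = ∑ x : (Fin ℓ0 → U) × (Fin ℓ0 → V),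
      iid ρ ℓ0 x * (((fdisc D f x.1 : ℝ)/D) * ((fdisc D g x.2 : ℝ)/D)) := by
  have h0 : bpi ρ ℓ0 D f g (true, true)
      = ∑ t, bpi ρ ℓ0 D f g t * (if t = ((true, true) : Bool × Bool) then 1 else 0) := by
    symm
    simp only [mul_ite, mul_one, mul_zero]
    exact Fintype.sum_ite_eq' ((true, true) : Bool × Bool) (bpi ρ ℓ0 D f g)
  rw [h0]
  calc ∑ t, bpi ρ ℓ0 D f g t * (if t = ((true, true) : Bool × Bool) then 1 else 0)
      = ∑ ω : (Fin ℓ0 → U) × (Fin ℓ0 → V) × Fin D × Fin D,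
          bw ρ ℓ0 D ω * (if bk f g ω = ((true, true) : Bool × Bool) then (1:ℝ) else 0) :=
        sum_pi_kappa ρ ℓ0 D f g _
    _ = ∑ ω : (Fin ℓ0 → U) × (Fin ℓ0 → V) × Fin D × Fin D,
          bw ρ ℓ0 D ω * ((if (ω.2.2.1 : ℕ) < fdisc D f ω.1 then (1:ℝ) else 0)
            * (if (ω.2.2.2 : ℕ) < fdisc D g ω.2.1 then (1:ℝ) else 0)) := by
        refine Finset.sum_congr rfl fun ω _ => ?_
        congr 1
        simp only [bk, Prod.mk.injEq, decide_eq_true_eq]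
        by_cases h1 : (ω.2.2.1 : ℕ) < fdisc D f ω.1 <;>
          by_cases h2 : (ω.2.2.2 : ℕ) < fdisc D g ω.2.1 <;> simp [h1, h2]
    _ = ∑ x : (Fin ℓ0 → U) × (Fin ℓ0 → V), iid ρ ℓ0 x *
          ((∑ r : Fin D, (D:ℝ)⁻¹ * (if (r : ℕ) < fdisc D f x.1 then (1:ℝ) else 0))
            * (∑ r : Fin D, (D:ℝ)⁻¹ * (if (r : ℕ) < fdisc D g x.2 then (1:ℝ) else 0))) :=
        sum_w_ind ρ ℓ0 D
          (fun bu r => if (r : ℕ) < fdisc D f bu then (1:ℝ) else 0)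
          (fun bv r => if (r : ℕ) < fdisc D g bv then (1:ℝ) else 0)
    _ = ∑ x : (Fin ℓ0 → U) × (Fin ℓ0 → V), iid ρ ℓ0 x *
          (((fdisc D f x.1 : ℝ)/D) * ((fdisc D g x.2 : ℝ)/D)) := by
        refine Finset.sum_congr rfl fun x _ => ?_
        rw [← Finset.mul_sum, countFin (fdisc_le_D hD hf x.1),
          ← Finset.mul_sum, countFin (fdisc_le_D hD hg x.2), inv_mul_eq_div, inv_mul_eq_div]

end Facts


section FinalLemmas

variable {U V : Type} [Fintype U] [Fintype V]

lemma pAc_le_cost {ρ : U × V → ℝ} (hρ : IsDist ρ) {n ℓ0 : ℕ} (hn : 1 ≤ n)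
    {f : (Fin ℓ0 → U) → ℝ} (g : (Fin ℓ0 → V) → ℝ) (hf : ∀ y, f y ∈ Set.Icc (0:ℝ) 1) :
    pAc ρ ℓ0 (4*n) f g ≤ ∑ x : (Fin ℓ0 → U) × (Fin ℓ0 → V), iid ρ ℓ0 x * f x.1 := by
  have hD : (4*n) ≠ 0 := by omega
  rw [pAc_eq ℓ0 (4*n) hD g hf]
  refine Finset.sum_le_sum fun x _ => ?_
  exact mul_le_mul_of_nonneg_left (fdisc_div_le hD hf x.1) (iid_nonneg hρ.1 ℓ0 x)

lemma pBc_le_cost {ρ : U × V → ℝ} (hρ : IsDist ρ) {n ℓ0 : ℕ} (hn : 1 ≤ n)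
    (f : (Fin ℓ0 → U) → ℝ) {g : (Fin ℓ0 → V) → ℝ} (hg : ∀ y, g y ∈ Set.Icc (0:ℝ) 1) :
    pBc ρ ℓ0 (4*n) f g ≤ ∑ x : (Fin ℓ0 → U) × (Fin ℓ0 → V), iid ρ ℓ0 x * g x.2 := by
  have hD : (4*n) ≠ 0 := by omega
  rw [pBc_eq ℓ0 (4*n) hD f hg]
  refine Finset.sum_le_sum fun x _ => ?_
  exact mul_le_mul_of_nonneg_left (fdisc_div_le hD hg x.2) (iid_nonneg hρ.1 ℓ0 x)

lemma pAc_nonneg {ρ : U × V → ℝ} (hρ : IsDist ρ) (ℓ0 D : ℕ)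
    (f : (Fin ℓ0 → U) → ℝ) (g : (Fin ℓ0 → V) → ℝ) : 0 ≤ pAc ρ ℓ0 D f g := by
  refine Finset.sum_nonneg fun t _ => mul_nonneg (bpi_nonneg hρ.1 ℓ0 D f g t) ?_
  split_ifs <;> norm_num

lemma pBc_nonneg {ρ : U × V → ℝ} (hρ : IsDist ρ) (ℓ0 D : ℕ)
    (f : (Fin ℓ0 → U) → ℝ) (g : (Fin ℓ0 → V) → ℝ) : 0 ≤ pBc ρ ℓ0 D f g := by
  refine Finset.sum_nonneg fun t _ => mul_nonneg (bpi_nonneg hρ.1 ℓ0 D f g t) ?_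
  split_ifs <;> norm_num

lemma q_lower {ρ : U × V → ℝ} (hρ : IsDist ρ) {n ℓ0 : ℕ} (hn : 1 ≤ n)
    {f : (Fin ℓ0 → U) → ℝ} {g : (Fin ℓ0 → V) → ℝ}
    (hf : ∀ y, f y ∈ Set.Icc (0:ℝ) 1) (hg : ∀ y, g y ∈ Set.Icc (0:ℝ) 1)
    (hsucc : 1/(n:ℝ) ≤ ∑ x : (Fin ℓ0 → U) × (Fin ℓ0 → V), iid ρ ℓ0 x * (f x.1 * g x.2)) :
    1/(2*(n:ℝ)) ≤ bpi ρ ℓ0 (4*n) f g (true, true) := by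
  have hD : (4*n) ≠ 0 := by omega
  have hDR : (0:ℝ) < ((4*n : ℕ):ℝ) := by exact_mod_cast Nat.pos_of_ne_zero hD
  have hn0 : (0:ℝ) < (n:ℝ) := by exact_mod_cast (by omega : 0 < n)
  rw [qq_eq ℓ0 (4*n) hD hf hg]
  have hpt : ∀ x : (Fin ℓ0 → U) × (Fin ℓ0 → V),
      iid ρ ℓ0 x * (f x.1 * g x.2) - iid ρ ℓ0 x * (2/((4*n : ℕ):ℝ))
        ≤ iid ρ ℓ0 x * (((fdisc (4*n) f x.1 : ℝ)/(4*n : ℕ))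
            * ((fdisc (4*n) g x.2 : ℝ)/(4*n : ℕ))) := by
    intro x
    have h0 := iid_nonneg hρ.1 ℓ0 x
    have ha := fdisc_div_le hD hf x.1
    have hb := fdisc_div_ge hD hf x.1
    have hc := fdisc_div_le hD hg x.2
    have hd := fdisc_div_ge hD hg x.2
    have he : (0:ℝ) ≤ (fdisc (4*n) f x.1 : ℝ)/((4*n : ℕ):ℝ) := by positivity
    have hf2 : (0:ℝ) ≤ (fdisc (4*n) g x.2 : ℝ)/((4*n : ℕ):ℝ) := by positivity
    have h1D : (0:ℝ) < 1/((4*n : ℕ):ℝ) := by positivity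
    have hkey : f x.1 * g x.2 - 2/((4*n : ℕ):ℝ)
        ≤ ((fdisc (4*n) f x.1 : ℝ)/((4*n : ℕ):ℝ))
          * ((fdisc (4*n) g x.2 : ℝ)/((4*n : ℕ):ℝ)) := by
      have hff := hf x.1
      have hgg := hg x.2
      have honeD : 2/((4*n : ℕ):ℝ) = 1/((4*n : ℕ):ℝ) + 1/((4*n : ℕ):ℝ) := by ring
      nlinarith [hff.1, hff.2, hgg.1, hgg.2, ha, hb, hc, hd, he, hf2,
        mul_le_mul_of_nonneg_left (show g x.2 - (fdisc (4*n) g x.2 : ℝ)/((4*n : ℕ):ℝ)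
            ≤ 1/((4*n : ℕ):ℝ) by linarith) hff.1,
        mul_le_mul_of_nonneg_left (show f x.1 - (fdisc (4*n) f x.1 : ℝ)/((4*n : ℕ):ℝ)
            ≤ 1/((4*n : ℕ):ℝ) by linarith) hf2]
    nlinarith [mul_le_mul_of_nonneg_left hkey h0]
  have hsum := Finset.sum_le_sum (fun x (_ : x ∈ Finset.univ) => hpt x)
  rw [Finset.sum_sub_distrib, ← Finset.sum_mul, mass1 hρ ℓ0, one_mul] at hsum
  have harith : 1/(n:ℝ) - 2/((4*n : ℕ):ℝ) = 1/(2*(n:ℝ)) := by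
    push_cast
    field_simp
    ring
  linarith [hsucc, hsum]

end FinalLemmas

theorem stmt9 {U V : Type} [Fintype U] [Fintype V] [Nonempty U] [Nonempty V]
    (ρ : U × V → ℝ) (hρ : IsDist ρ) (n : ℕ) (hn : 1 ≤ n)
    (K : ℝ) (hK : agr ρ (1/(n:ℝ)) < K) :
    ∃ (ℓ sA sB : ℕ) (μA : Fin sA → ℝ) (μB : Fin sB → ℝ)
      (A : (Fin ℓ → U) → Fin sA → Finset (Fin n))
      (B : (Fin ℓ → V) → Fin sB → Finset (Fin n)),
      IsDist μA ∧ IsDist μB ∧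
      (∀ (x : (Fin ℓ → U) × (Fin ℓ → V)) (rA : Fin sA),
          ((A x.1 rA).card : ℝ) ≤ 3 * n * K + 16) ∧
      (∀ (x : (Fin ℓ → U) × (Fin ℓ → V)) (rB : Fin sB),
          ((B x.2 rB).card : ℝ) ≤ 3 * n * K + 16) ∧
      ((∑ x : (Fin ℓ → U) × (Fin ℓ → V), ∑ rA, ∑ rB,
          iid ρ ℓ x * (μA rA * μB rB) *
            (if A x.1 rA ∩ B x.2 rB = ∅ then (1:ℝ) else 0))
        < (Real.exp 1)⁻¹ + 1/2) ∧
      (∀ i : Fin n,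
        (∑ x : (Fin ℓ → U) × (Fin ℓ → V), ∑ rA, ∑ rB,
            iid ρ ℓ x * (μA rA * μB rB) *
              (if i ∈ A x.1 rA ∩ B x.2 rB
                then (((A x.1 rA ∩ B x.2 rB).card : ℝ))⁻¹ else 0))
          = (∑ x : (Fin ℓ → U) × (Fin ℓ → V), ∑ rA, ∑ rB,
              iid ρ ℓ x * (μA rA * μB rB) *
                (if (A x.1 rA ∩ B x.2 rB).Nonempty then (1:ℝ) else 0)) / n) := by
  haveI : NeZero n := ⟨by omega⟩
  classical
  -- extract a cheap agreement protocol
  have hmem : (2:ℝ) ∈ { c : ℝ | ∃ (ℓ : ℕ) (f : (Fin ℓ → U) → ℝ) (g : (Fin ℓ → V) → ℝ),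
      (∀ x, f x ∈ Set.Icc (0:ℝ) 1) ∧ (∀ y, g y ∈ Set.Icc (0:ℝ) 1) ∧
      (1/(n:ℝ)) ≤ (∑ x : (Fin ℓ → U) × (Fin ℓ → V), iid ρ ℓ x * (f x.1 * g x.2)) ∧
      (2:ℝ) = (∑ x : (Fin ℓ → U) × (Fin ℓ → V), iid ρ ℓ x * f x.1)
        + (∑ x : (Fin ℓ → U) × (Fin ℓ → V), iid ρ ℓ x * g x.2) } := by
    refine ⟨0, fun _ => 1, fun _ => 1, fun x => ⟨zero_le_one, le_refl 1⟩,
      fun y => ⟨zero_le_one, le_refl 1⟩, ?_, ?_⟩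
    · have h1 : (∑ x : (Fin 0 → U) × (Fin 0 → V), iid ρ 0 x * (1 * 1)) = 1 := by
        simp only [mul_one]
        exact mass1 hρ 0
      rw [h1]
      have hn1 : (1:ℝ) ≤ (n:ℝ) := by exact_mod_cast hn
      rw [div_le_one (by linarith)]
      exact hn1
    · have h1 : (∑ x : (Fin 0 → U) × (Fin 0 → V), iid ρ 0 x * 1) = 1 := by
        simp only [mul_one]
        exact mass1 hρ 0
      rw [h1]
      norm_num
  have hex : ∃ c ∈ { c : ℝ | ∃ (ℓ : ℕ) (f : (Fin ℓ → U) → ℝ) (g : (Fin ℓ → V) → ℝ),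
      (∀ x, f x ∈ Set.Icc (0:ℝ) 1) ∧ (∀ y, g y ∈ Set.Icc (0:ℝ) 1) ∧
      (1/(n:ℝ)) ≤ (∑ x : (Fin ℓ → U) × (Fin ℓ → V), iid ρ ℓ x * (f x.1 * g x.2)) ∧
      c = (∑ x : (Fin ℓ → U) × (Fin ℓ → V), iid ρ ℓ x * f x.1)
        + (∑ x : (Fin ℓ → U) × (Fin ℓ → V), iid ρ ℓ x * g x.2) }, c < K := by
    by_contra h
    push_neg at h
    have hKle : K ≤ agr ρ (1/(n:ℝ)) := le_csInf ⟨2, hmem⟩ h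
    linarith
  obtain ⟨c, hc, hcK⟩ := hex
  obtain ⟨ℓ0, f, g, hf, hg, hsucc, hcost⟩ := hc
  have hD : (4*n) ≠ 0 := by omega
  have hDR : (0:ℝ) < ((4*n : ℕ):ℝ) := by exact_mod_cast Nat.pos_of_ne_zero hD
  have hn0 : (0:ℝ) ≤ (n:ℝ) := Nat.cast_nonneg n
  have hcostf0 : 0 ≤ ∑ x : (Fin ℓ0 → U) × (Fin ℓ0 → V), iid ρ ℓ0 x * f x.1 :=
    Finset.sum_nonneg fun x _ => mul_nonneg (iid_nonneg hρ.1 ℓ0 x) (hf x.1).1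
  have hcostg0 : 0 ≤ ∑ x : (Fin ℓ0 → U) × (Fin ℓ0 → V), iid ρ ℓ0 x * g x.2 :=
    Finset.sum_nonneg fun x _ => mul_nonneg (iid_nonneg hρ.1 ℓ0 x) (hg x.2).1
  have hpa_le : pAc ρ ℓ0 (4*n) f g ≤ K := by
    have h1 := pAc_le_cost hρ hn g hf
    linarith [hcost ▸ hcK]
  have hpb_le : pBc ρ ℓ0 (4*n) f g ≤ K := by
    have h1 := pBc_le_cost hρ hn f hg
    linarith [hcost ▸ hcK]
  have hpa0 : 0 ≤ pAc ρ ℓ0 (4*n) f g := pAc_nonneg hρ ℓ0 (4*n) f g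
  have hpb0 : 0 ≤ pBc ρ ℓ0 (4*n) f g := pBc_nonneg hρ ℓ0 (4*n) f g
  have hq := q_lower hρ hn hf hg hsucc
  have hπ0 : ∀ t, 0 ≤ bpi ρ ℓ0 (4*n) f g t := bpi_nonneg hρ.1 ℓ0 (4*n) f g
  have hπ1 : ∑ t, bpi ρ ℓ0 (4*n) f g t = 1 := bpi_sum hρ ℓ0 (4*n) hD f g
  have hpow0 : (((4*n : ℕ):ℝ)^n) ≠ 0 := by positivity
  refine ⟨n * ℓ0, (4*n)^n, (4*n)^n,
    (fun _ => (((4*n : ℕ):ℝ)^n)⁻¹), (fun _ => (((4*n : ℕ):ℝ)^n)⁻¹),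
    Amap ρ n ℓ0 f g, Bmap ρ n ℓ0 f g, ?_, ?_, ?_, ?_, ?_, ?_⟩
  · refine ⟨fun a => by positivity, ?_⟩
    rw [Finset.sum_const, Finset.card_univ, Fintype.card_fin, nsmul_eq_mul]
    rw [show (((4*n)^n : ℕ) : ℝ) = ((4*n : ℕ):ℝ)^n by push_cast; ring]
    exact mul_inv_cancel₀ hpow0
  · refine ⟨fun a => by positivity, ?_⟩
    rw [Finset.sum_const, Finset.card_univ, Fintype.card_fin, nsmul_eq_mul]
    rw [show (((4*n)^n : ℕ) : ℝ) = ((4*n : ℕ):ℝ)^n by push_cast; ring]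
    exact mul_inv_cancel₀ hpow0
  · intro x rA
    refine le_trans (trunc_card_le (by nlinarith) _) ?_
    nlinarith
  · intro x rB
    refine le_trans (trunc_card_le (by nlinarith) _) ?_
    nlinarith
  · exact (master ρ n ℓ0 f g (fun S T => if S ∩ T = ∅ then (1:ℝ) else 0)).trans_lt
      (disj_bound hn (bpi ρ ℓ0 (4*n) f g) hπ0 hπ1
        (pAc ρ ℓ0 (4*n) f g) (pBc ρ ℓ0 (4*n) f g) rfl rfl hq)
  · intro i
    exact (master ρ n ℓ0 f g
        (fun S T => if i ∈ S ∩ T then ((S ∩ T).card : ℝ)⁻¹ else 0)).trans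
      ((uniform (bpi ρ ℓ0 (4*n) f g) (pAc ρ ℓ0 (4*n) f g) (pBc ρ ℓ0 (4*n) f g) i).trans
        (congrArg (fun z => z / (n:ℝ))
          (master ρ n ℓ0 f g (fun S T => if (S ∩ T).Nonempty then (1:ℝ) else 0)).symm))


end SR
end

section
/- Let ρ be a bipartite distribution on U × V and σ a bipartite distribution on X × Y, and let p be a real number with Cor(σ) < p < 1. Then agr_{ρ⊗σ}(p) ≥ agr_ρ(p − Cor(σ)). -/
open scoped BigOperators ENNReal

namespace SR

variable {U V X Y : Type*}

section AuxCS
variable {α : Type*} [Fintype α]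

lemma cs_sum (μ : α → ℝ) (hμ : ∀ a, 0 ≤ μ a) (f g : α → ℝ) :
    ∑ a, μ a * (f a * g a) ≤
      Real.sqrt (∑ a, μ a * f a ^ 2) * Real.sqrt (∑ a, μ a * g a ^ 2) := by
  have h := Finset.sum_mul_sq_le_sq_mul_sq Finset.univ
      (fun a => Real.sqrt (μ a) * f a) (fun a => Real.sqrt (μ a) * g a)
  have e1 : ∑ a, (Real.sqrt (μ a) * f a) * (Real.sqrt (μ a) * g a)
      = ∑ a, μ a * (f a * g a) := by
    refine Finset.sum_congr rfl fun a _ => ?_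
    rw [mul_mul_mul_comm, Real.mul_self_sqrt (hμ a)]
  have e2 : ∑ a, (Real.sqrt (μ a) * f a) ^ 2 = ∑ a, μ a * f a ^ 2 := by
    refine Finset.sum_congr rfl fun a _ => ?_
    rw [mul_pow, Real.sq_sqrt (hμ a)]
  have e3 : ∑ a, (Real.sqrt (μ a) * g a) ^ 2 = ∑ a, μ a * g a ^ 2 := by
    refine Finset.sum_congr rfl fun a _ => ?_
    rw [mul_pow, Real.sq_sqrt (hμ a)]
  rw [e1, e2, e3] at h
  have hnn : (0:ℝ) ≤ ∑ a, μ a * f a ^ 2 :=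
    Finset.sum_nonneg fun a _ => mul_nonneg (hμ a) (sq_nonneg _)
  calc ∑ a, μ a * (f a * g a) ≤ |∑ a, μ a * (f a * g a)| := le_abs_self _
    _ = Real.sqrt ((∑ a, μ a * (f a * g a)) ^ 2) := (Real.sqrt_sq_eq_abs _).symm
    _ ≤ Real.sqrt ((∑ a, μ a * f a ^ 2) * ∑ a, μ a * g a ^ 2) := Real.sqrt_le_sqrt h
    _ = _ := Real.sqrt_mul hnn _

lemma sq_sum_le (μ : α → ℝ) (hμ0 : ∀ a, 0 ≤ μ a) (hμ1 : ∑ a, μ a = 1) (f : α → ℝ) :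
    (∑ a, μ a * f a) ^ 2 ≤ ∑ a, μ a * f a ^ 2 := by
  have h := Finset.sum_mul_sq_le_sq_mul_sq Finset.univ
      (fun a => Real.sqrt (μ a) * f a) (fun a => Real.sqrt (μ a))
  have e1 : ∑ a, (Real.sqrt (μ a) * f a) * Real.sqrt (μ a) = ∑ a, μ a * f a := by
    refine Finset.sum_congr rfl fun a _ => ?_
    rw [mul_comm (Real.sqrt (μ a)) (f a), mul_assoc, Real.mul_self_sqrt (hμ0 a), mul_comm]
  have e2 : ∑ a, (Real.sqrt (μ a) * f a) ^ 2 = ∑ a, μ a * f a ^ 2 := by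
    refine Finset.sum_congr rfl fun a _ => ?_
    rw [mul_pow, Real.sq_sqrt (hμ0 a)]
  have e3 : ∑ a, (Real.sqrt (μ a)) ^ 2 = 1 := by
    rw [Finset.sum_congr rfl fun a _ => Real.sq_sqrt (hμ0 a)]; exact hμ1
  rw [e1, e2, e3, mul_one] at h
  exact h

lemma sqrt_add_sqrt_le {A1 B1 A2 B2 : ℝ} (hA1 : 0 ≤ A1) (hB1 : 0 ≤ B1)
    (hA2 : 0 ≤ A2) (hB2 : 0 ≤ B2) :
    Real.sqrt A1 * Real.sqrt B1 + Real.sqrt A2 * Real.sqrt B2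
      ≤ Real.sqrt (A1 + A2) * Real.sqrt (B1 + B2) := by
  rw [← Real.sqrt_mul hA1, ← Real.sqrt_mul hA2, ← Real.sqrt_mul (by linarith)]
  have hcross : Real.sqrt (A1 * B1) * Real.sqrt (A2 * B2)
      = Real.sqrt (A1 * B2) * Real.sqrt (A2 * B1) := by
    rw [← Real.sqrt_mul (mul_nonneg hA1 hB1), ← Real.sqrt_mul (mul_nonneg hA1 hB2)]
    ring_nf
  have hsq : (Real.sqrt (A1 * B1) + Real.sqrt (A2 * B2)) ^ 2 ≤ (A1 + A2) * (B1 + B2) := by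
    nlinarith [Real.sq_sqrt (mul_nonneg hA1 hB1), Real.sq_sqrt (mul_nonneg hA2 hB2),
      Real.sq_sqrt (mul_nonneg hA1 hB2), Real.sq_sqrt (mul_nonneg hA2 hB1),
      sq_nonneg (Real.sqrt (A1 * B2) - Real.sqrt (A2 * B1)), hcross,
      Real.sqrt_nonneg (A1 * B1), Real.sqrt_nonneg (A2 * B2)]
  exact (Real.le_sqrt (add_nonneg (Real.sqrt_nonneg _) (Real.sqrt_nonneg _))
    (by nlinarith)).mpr hsq

end AuxCS


section Cov
variable {A B : Type*} [Fintype A] [Fintype B]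

noncomputable def jcov (μ : A × B → ℝ) (F : A → ℝ) (G : B → ℝ) : ℝ :=
  (∑ p : A × B, μ p * (F p.1 * G p.2))
    - (∑ p : A × B, μ p * F p.1) * (∑ p : A × B, μ p * G p.2)

noncomputable def jvarFst (μ : A × B → ℝ) (F : A → ℝ) : ℝ :=
  (∑ p : A × B, μ p * F p.1 ^ 2) - (∑ p : A × B, μ p * F p.1) ^ 2

noncomputable def jvarSnd (μ : A × B → ℝ) (G : B → ℝ) : ℝ :=
  (∑ p : A × B, μ p * G p.2 ^ 2) - (∑ p : A × B, μ p * G p.2) ^ 2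

def CovBound (μ : A × B → ℝ) (c : ℝ) : Prop :=
  ∀ F G, jcov μ F G ≤ c * (Real.sqrt (jvarFst μ F) * Real.sqrt (jvarSnd μ G))

lemma jvarFst_nonneg {μ : A × B → ℝ} (hμ : IsDist μ) (F : A → ℝ) :
    0 ≤ jvarFst μ F :=
  sub_nonneg.2 (sq_sum_le μ hμ.1 hμ.2 (fun p => F p.1))

lemma jvarSnd_nonneg {μ : A × B → ℝ} (hμ : IsDist μ) (G : B → ℝ) :
    0 ≤ jvarSnd μ G :=
  sub_nonneg.2 (sq_sum_le μ hμ.1 hμ.2 (fun p => G p.2))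

lemma centered_cov {μ : A × B → ℝ} (hμ : IsDist μ) (F : A → ℝ) (G : B → ℝ) :
    ∑ p : A × B, μ p * ((F p.1 - ∑ q : A × B, μ q * F q.1)
      * (G p.2 - ∑ q : A × B, μ q * G q.2)) = jcov μ F G := by
  set mF := ∑ q : A × B, μ q * F q.1 with hmF
  set mG := ∑ q : A × B, μ q * G q.2 with hmG
  have key : ∀ p : A × B, μ p * ((F p.1 - mF) * (G p.2 - mG))
      = μ p * (F p.1 * G p.2) - mG * (μ p * F p.1) - mF * (μ p * G p.2)
        + (mF * mG) * μ p := fun p => by ring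
  rw [Finset.sum_congr rfl fun p _ => key p]
  rw [Finset.sum_add_distrib, Finset.sum_sub_distrib, Finset.sum_sub_distrib,
    ← Finset.mul_sum, ← Finset.mul_sum, ← Finset.mul_sum, hμ.2]
  simp only [jcov, ← hmF, ← hmG]
  ring

lemma centered_varFst {μ : A × B → ℝ} (hμ : IsDist μ) (F : A → ℝ) :
    ∑ p : A × B, μ p * (F p.1 - ∑ q : A × B, μ q * F q.1) ^ 2 = jvarFst μ F := by
  set mF := ∑ q : A × B, μ q * F q.1 with hmF
  have key : ∀ p : A × B, μ p * (F p.1 - mF) ^ 2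
      = μ p * F p.1 ^ 2 - (2 * mF) * (μ p * F p.1) + (mF ^ 2) * μ p := fun p => by ring
  rw [Finset.sum_congr rfl fun p _ => key p]
  rw [Finset.sum_add_distrib, Finset.sum_sub_distrib,
    ← Finset.mul_sum, ← Finset.mul_sum, hμ.2]
  simp only [jvarFst, ← hmF]
  ring

lemma centered_varSnd {μ : A × B → ℝ} (hμ : IsDist μ) (G : B → ℝ) :
    ∑ p : A × B, μ p * (G p.2 - ∑ q : A × B, μ q * G q.2) ^ 2 = jvarSnd μ G := by
  set mG := ∑ q : A × B, μ q * G q.2 with hmG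
  have key : ∀ p : A × B, μ p * (G p.2 - mG) ^ 2
      = μ p * G p.2 ^ 2 - (2 * mG) * (μ p * G p.2) + (mG ^ 2) * μ p := fun p => by ring
  rw [Finset.sum_congr rfl fun p _ => key p]
  rw [Finset.sum_add_distrib, Finset.sum_sub_distrib,
    ← Finset.mul_sum, ← Finset.mul_sum, hμ.2]
  simp only [jvarSnd, ← hmG]
  ring

lemma jcov_le_sqrt {μ : A × B → ℝ} (hμ : IsDist μ) (F : A → ℝ) (G : B → ℝ) :
    jcov μ F G ≤ Real.sqrt (jvarFst μ F) * Real.sqrt (jvarSnd μ G) := by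
  rw [← centered_cov hμ, ← centered_varFst hμ, ← centered_varSnd hμ]
  exact cs_sum μ hμ.1 (fun p => F p.1 - ∑ q : A × B, μ q * F q.1)
    (fun p => G p.2 - ∑ q : A × B, μ q * G q.2)

lemma sum_fst (μ : A × B → ℝ) (h : A → ℝ) :
    ∑ p : A × B, μ p * h p.1 = expect (margFst μ) h := by
  rw [Fintype.sum_prod_type]
  simp [expect, margFst, Finset.sum_mul]

lemma sum_snd (μ : A × B → ℝ) (h : B → ℝ) :
    ∑ p : A × B, μ p * h p.2 = expect (margSnd μ) h := by
  rw [Fintype.sum_prod_type_right]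
  simp [expect, margSnd, Finset.sum_mul]

lemma corSet_bddAbove {σ : A × B → ℝ} (hσ : IsDist σ) :
    BddAbove { t : ℝ | ∃ (f : A → ℝ) (g : B → ℝ),
      expect (margFst σ) f = 0 ∧ expect (margSnd σ) g = 0 ∧
      expect (margFst σ) (fun u => f u ^ 2) = 1 ∧
      expect (margSnd σ) (fun v => g v ^ 2) = 1 ∧
      t = ∑ x : A × B, σ x * (f x.1 * g x.2) } := by
  refine ⟨1, ?_⟩
  rintro t ⟨f, g, -, -, h3, h4, rfl⟩
  have h := cs_sum σ hσ.1 (fun p => f p.1) (fun p => g p.2)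
  have e1 : ∑ p : A × B, σ p * f p.1 ^ 2 = 1 := by rw [sum_fst σ (fun a => f a ^ 2)]; exact h3
  have e2 : ∑ p : A × B, σ p * g p.2 ^ 2 = 1 := by rw [sum_snd σ (fun b => g b ^ 2)]; exact h4
  rw [e1, e2, Real.sqrt_one, mul_one] at h
  exact h

lemma cor_nonneg {σ : A × B → ℝ} (hσ : IsDist σ) : 0 ≤ cor σ := by
  set S := { t : ℝ | ∃ (f : A → ℝ) (g : B → ℝ),
      expect (margFst σ) f = 0 ∧ expect (margSnd σ) g = 0 ∧
      expect (margFst σ) (fun u => f u ^ 2) = 1 ∧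
      expect (margSnd σ) (fun v => g v ^ 2) = 1 ∧
      t = ∑ x : A × B, σ x * (f x.1 * g x.2) } with hS
  have hbdd : BddAbove S := corSet_bddAbove hσ
  rcases Set.eq_empty_or_nonempty S with he | ⟨t, ht⟩
  · rw [cor, ← hS, he, Real.sSup_empty]
  · obtain ⟨f, g, h1, h2, h3, h4, h5⟩ := ht
    have ht' : -t ∈ S := by
      refine ⟨fun a => -f a, g, ?_, h2, ?_, h4, ?_⟩
      · simp only [expect, mul_neg, Finset.sum_neg_distrib]
        rw [show ∑ a, margFst σ a * f a = expect (margFst σ) f from rfl, h1, neg_zero]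
      · simpa using h3
      · rw [h5, ← Finset.sum_neg_distrib]
        exact Finset.sum_congr rfl fun p _ => by ring
    have l1 : t ≤ cor σ := le_csSup hbdd ⟨f, g, h1, h2, h3, h4, h5⟩
    have l2 : -t ≤ cor σ := le_csSup hbdd ht'
    linarith

lemma covBound_cor {σ : A × B → ℝ} (hσ : IsDist σ) : CovBound σ (cor σ) := by
  intro F G
  set mF := ∑ q : A × B, σ q * F q.1 with hmF
  set mG := ∑ q : A × B, σ q * G q.2 with hmG
  set Av := jvarFst σ F with hAv
  set Bv := jvarSnd σ G with hBv
  have hA0 : 0 ≤ Av := jvarFst_nonneg hσ F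
  have hB0 : 0 ≤ Bv := jvarSnd_nonneg hσ G
  rcases eq_or_lt_of_le hA0 with hA | hA
  · have : jcov σ F G ≤ 0 := by
      have h := jcov_le_sqrt hσ F G
      rw [← hAv, ← hA, Real.sqrt_zero, zero_mul] at h
      exact h
    rw [← hA, Real.sqrt_zero, zero_mul, mul_zero]
    exact this
  rcases eq_or_lt_of_le hB0 with hB | hB
  · have : jcov σ F G ≤ 0 := by
      have h := jcov_le_sqrt hσ F G
      rw [← hBv, ← hB, Real.sqrt_zero, mul_zero] at h
      exact h
    rw [← hB, Real.sqrt_zero, mul_zero, mul_zero]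
    exact this
  · -- both variances positive
    set sA := Real.sqrt Av with hsA
    set sB := Real.sqrt Bv with hsB
    have hsA0 : 0 < sA := Real.sqrt_pos.2 hA
    have hsB0 : 0 < sB := Real.sqrt_pos.2 hB
    set f1 : A → ℝ := fun a => (F a - mF) / sA with hf1
    set g1 : B → ℝ := fun b => (G b - mG) / sB with hg1
    have hcf : ∑ p : A × B, σ p * (F p.1 - mF) = 0 := by
      have : ∀ p : A × B, σ p * (F p.1 - mF) = σ p * F p.1 - mF * σ p := fun p => by ring
      rw [Finset.sum_congr rfl fun p _ => this p, Finset.sum_sub_distrib, ← Finset.mul_sum,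
        hσ.2, mul_one, ← hmF, sub_self]
    have hcg : ∑ p : A × B, σ p * (G p.2 - mG) = 0 := by
      have : ∀ p : A × B, σ p * (G p.2 - mG) = σ p * G p.2 - mG * σ p := fun p => by ring
      rw [Finset.sum_congr rfl fun p _ => this p, Finset.sum_sub_distrib, ← Finset.mul_sum,
        hσ.2, mul_one, ← hmG, sub_self]
    have hm1 : expect (margFst σ) f1 = 0 := by
      rw [← sum_fst σ f1]
      have : ∀ p : A × B, σ p * f1 p.1 = (σ p * (F p.1 - mF)) * sA⁻¹ := fun p => by
        rw [hf1]; field_simp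
      rw [Finset.sum_congr rfl fun p _ => this p, ← Finset.sum_mul, hcf, zero_mul]
    have hm2 : expect (margSnd σ) g1 = 0 := by
      rw [← sum_snd σ g1]
      have : ∀ p : A × B, σ p * g1 p.2 = (σ p * (G p.2 - mG)) * sB⁻¹ := fun p => by
        rw [hg1]; field_simp
      rw [Finset.sum_congr rfl fun p _ => this p, ← Finset.sum_mul, hcg, zero_mul]
    have hAsq : sA ^ 2 = Av := Real.sq_sqrt hA0
    have hBsq : sB ^ 2 = Bv := Real.sq_sqrt hB0
    have hv1 : expect (margFst σ) (fun a => f1 a ^ 2) = 1 := by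
      rw [← sum_fst σ (fun a => f1 a ^ 2)]
      have : ∀ p : A × B, σ p * f1 p.1 ^ 2 = (σ p * (F p.1 - mF) ^ 2) * (sA ^ 2)⁻¹ :=
        fun p => by rw [hf1]; field_simp
      rw [Finset.sum_congr rfl fun p _ => this p, ← Finset.sum_mul,
        centered_varFst hσ F, hAsq]
      rw [← hmF] at *
      rw [← hAv]
      field_simp
    have hv2 : expect (margSnd σ) (fun b => g1 b ^ 2) = 1 := by
      rw [← sum_snd σ (fun b => g1 b ^ 2)]
      have : ∀ p : A × B, σ p * g1 p.2 ^ 2 = (σ p * (G p.2 - mG) ^ 2) * (sB ^ 2)⁻¹ :=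
        fun p => by rw [hg1]; field_simp
      rw [Finset.sum_congr rfl fun p _ => this p, ← Finset.sum_mul,
        centered_varSnd hσ G, hBsq]
      rw [← hmG] at *
      rw [← hBv]
      field_simp
    set t := ∑ x : A × B, σ x * (f1 x.1 * g1 x.2) with htdef
    have hmem : t ≤ cor σ :=
      le_csSup (corSet_bddAbove hσ) ⟨f1, g1, hm1, hm2, hv1, hv2, rfl⟩
    have hkey : jcov σ F G = (sA * sB) * t := by
      rw [← centered_cov hσ F G, htdef, Finset.mul_sum]
      refine Finset.sum_congr rfl fun p _ => ?_
      rw [hf1, hg1, ← hmF, ← hmG]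
      field_simp
    rw [hkey]
    calc (sA * sB) * t ≤ (sA * sB) * cor σ :=
          mul_le_mul_of_nonneg_left hmem (by positivity)
      _ = cor σ * (sA * sB) := by ring

end Cov


instance uniqueFin0Fun {X : Type*} : Unique (Fin 0 → X) :=
  ⟨⟨fun i => i.elim0⟩, fun f => funext fun i => i.elim0⟩

instance uniqueFin0Prod {X Y : Type*} : Unique ((Fin 0 → X) × (Fin 0 → Y)) where
  default := (fun i => i.elim0, fun i => i.elim0)
  uniq p := by
    ext i <;> exact i.elim0

section Transport
variable {A B A' B' : Type*} [Fintype A] [Fintype B] [Fintype A'] [Fintype B']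

lemma covBound_reindex (e1 : A' ≃ A) (e2 : B' ≃ B) (μ : A × B → ℝ) (c : ℝ)
    (h : CovBound μ c) : CovBound (fun p : A' × B' => μ (e1 p.1, e2 p.2)) c := by
  intro F G
  have k1 : ∑ p : A' × B', μ (e1 p.1, e2 p.2) * F p.1
      = ∑ q : A × B, μ q * F (e1.symm q.1) :=
    Fintype.sum_equiv (e1.prodCongr e2) _ _ (fun p => by obtain ⟨a, b⟩ := p; simp)
  have k1s : ∑ p : A' × B', μ (e1 p.1, e2 p.2) * F p.1 ^ 2
      = ∑ q : A × B, μ q * F (e1.symm q.1) ^ 2 :=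
    Fintype.sum_equiv (e1.prodCongr e2) _ _ (fun p => by obtain ⟨a, b⟩ := p; simp)
  have k2 : ∑ p : A' × B', μ (e1 p.1, e2 p.2) * G p.2
      = ∑ q : A × B, μ q * G (e2.symm q.2) :=
    Fintype.sum_equiv (e1.prodCongr e2) _ _ (fun p => by obtain ⟨a, b⟩ := p; simp)
  have k2s : ∑ p : A' × B', μ (e1 p.1, e2 p.2) * G p.2 ^ 2
      = ∑ q : A × B, μ q * G (e2.symm q.2) ^ 2 :=
    Fintype.sum_equiv (e1.prodCongr e2) _ _ (fun p => by obtain ⟨a, b⟩ := p; simp)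
  have k3 : ∑ p : A' × B', μ (e1 p.1, e2 p.2) * (F p.1 * G p.2)
      = ∑ q : A × B, μ q * (F (e1.symm q.1) * G (e2.symm q.2)) :=
    Fintype.sum_equiv (e1.prodCongr e2) _ _ (fun p => by obtain ⟨a, b⟩ := p; simp)
  have h' := h (fun a => F (e1.symm a)) (fun b => G (e2.symm b))
  simp only [jcov, jvarFst, jvarSnd] at h' ⊢
  rw [k3, k1, k2, k1s, k2s]
  exact h'

end Transport

section Tensor
variable {X Y X' Y' : Type*} [Fintype X] [Fintype Y] [Fintype X'] [Fintype Y']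

def prodSwapE (X Y X' Y' : Type*) : (X × Y) × (X' × Y') ≃ (X × X') × (Y × Y') where
  toFun p := ((p.1.1, p.2.1), (p.1.2, p.2.2))
  invFun p := ((p.1.1, p.2.1), (p.1.2, p.2.2))
  left_inv p := rfl
  right_inv p := rfl

lemma tensor_sum (σ : X × Y → ℝ) (τ : X' × Y' → ℝ) (H : (X × X') × (Y × Y') → ℝ) :
    ∑ p : (X × X') × (Y × Y'), tensor σ τ p * H p
      = ∑ r : X × Y, σ r * ∑ q : X' × Y', τ q * H ((r.1, q.1), (r.2, q.2)) := by
  rw [← Fintype.sum_equiv (prodSwapE X Y X' Y')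
      (fun z => tensor σ τ (prodSwapE X Y X' Y' z) * H (prodSwapE X Y X' Y' z))
      (fun p => tensor σ τ p * H p) (fun z => rfl)]
  rw [Fintype.sum_prod_type]
  refine Finset.sum_congr rfl fun r _ => ?_
  rw [Finset.mul_sum]
  refine Finset.sum_congr rfl fun q _ => ?_
  show tensor σ τ ((r.1, q.1), (r.2, q.2)) * H ((r.1, q.1), (r.2, q.2)) = _
  show σ (r.1, r.2) * τ (q.1, q.2) * H ((r.1, q.1), (r.2, q.2)) = _
  rw [mul_assoc]

lemma tensor_isDist {σ : X × Y → ℝ} {τ : X' × Y' → ℝ}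
    (hσ : IsDist σ) (hτ : IsDist τ) : IsDist (tensor σ τ) := by
  constructor
  · intro p; exact mul_nonneg (hσ.1 _) (hτ.1 _)
  · have h := tensor_sum σ τ (fun _ => (1:ℝ))
    simp only [mul_one] at h
    rw [h, hτ.2]
    simp only [mul_one]
    exact hσ.2

noncomputable def mFst (τ : X' × Y' → ℝ) (F : X × X' → ℝ) : X → ℝ :=
  fun x => ∑ q : X' × Y', τ q * F (x, q.1)

noncomputable def mSnd (τ : X' × Y' → ℝ) (G : Y × Y' → ℝ) : Y → ℝ :=
  fun y => ∑ q : X' × Y', τ q * G (y, q.2)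

noncomputable def sFst (τ : X' × Y' → ℝ) (F : X × X' → ℝ) : X → ℝ :=
  fun x => Real.sqrt (jvarFst τ (fun x' => F (x, x')))

noncomputable def sSnd (τ : X' × Y' → ℝ) (G : Y × Y' → ℝ) : Y → ℝ :=
  fun y => Real.sqrt (jvarSnd τ (fun y' => G (y, y')))

lemma covBound_tensor (σ : X × Y → ℝ) (τ : X' × Y' → ℝ)
    (hσ : IsDist σ) (hτ : IsDist τ) (c : ℝ) (hc : 0 ≤ c)
    (H1 : CovBound σ c) (H2 : CovBound τ c) : CovBound (tensor σ τ) c := by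
  intro F G
  have eFG : ∑ p : (X × X') × (Y × Y'), tensor σ τ p * (F p.1 * G p.2)
      = ∑ r : X × Y, σ r * ∑ q : X' × Y', τ q * (F (r.1, q.1) * G (r.2, q.2)) :=
    tensor_sum σ τ _
  have eF : ∑ p : (X × X') × (Y × Y'), tensor σ τ p * F p.1
      = ∑ r : X × Y, σ r * mFst τ F r.1 := tensor_sum σ τ _
  have eG : ∑ p : (X × X') × (Y × Y'), tensor σ τ p * G p.2
      = ∑ r : X × Y, σ r * mSnd τ G r.2 := tensor_sum σ τ _
  have eF2 : ∑ p : (X × X') × (Y × Y'), tensor σ τ p * F p.1 ^ 2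
      = ∑ r : X × Y, σ r * ∑ q : X' × Y', τ q * F (r.1, q.1) ^ 2 :=
    tensor_sum σ τ _
  have eG2 : ∑ p : (X × X') × (Y × Y'), tensor σ τ p * G p.2 ^ 2
      = ∑ r : X × Y, σ r * ∑ q : X' × Y', τ q * G (r.2, q.2) ^ 2 :=
    tensor_sum σ τ _
  have inner : ∀ r : X × Y,
      ∑ q : X' × Y', τ q * (F (r.1, q.1) * G (r.2, q.2))
        ≤ mFst τ F r.1 * mSnd τ G r.2 + c * (sFst τ F r.1 * sSnd τ G r.2) := by
    intro r
    have h := H2 (fun x' => F (r.1, x')) (fun y' => G (r.2, y'))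
    simp only [jcov] at h
    have h2 : (∑ q : X' × Y', τ q * (F (r.1, q.1) * G (r.2, q.2)))
        - mFst τ F r.1 * mSnd τ G r.2
          ≤ c * (sFst τ F r.1 * sSnd τ G r.2) := h
    linarith
  have step1 : ∑ r : X × Y, σ r * ∑ q : X' × Y', τ q * (F (r.1, q.1) * G (r.2, q.2))
      ≤ ∑ r : X × Y, σ r * (mFst τ F r.1 * mSnd τ G r.2
          + c * (sFst τ F r.1 * sSnd τ G r.2)) :=
    Finset.sum_le_sum fun r _ => mul_le_mul_of_nonneg_left (inner r) (hσ.1 r)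
  have split : ∑ r : X × Y, σ r * (mFst τ F r.1 * mSnd τ G r.2
        + c * (sFst τ F r.1 * sSnd τ G r.2))
      = (∑ r : X × Y, σ r * (mFst τ F r.1 * mSnd τ G r.2))
        + c * ∑ r : X × Y, σ r * (sFst τ F r.1 * sSnd τ G r.2) := by
    rw [Finset.mul_sum, ← Finset.sum_add_distrib]
    exact Finset.sum_congr rfl fun r _ => by ring
  have hσcov := H1 (mFst τ F) (mSnd τ G)
  have hcs := cs_sum σ hσ.1 (fun r => sFst τ F r.1) (fun r => sSnd τ G r.2)
  have hsq1 : ∀ r : X × Y, (sFst τ F r.1) ^ 2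
      = (∑ q : X' × Y', τ q * F (r.1, q.1) ^ 2) - (mFst τ F r.1) ^ 2 :=
    fun r => Real.sq_sqrt (jvarFst_nonneg hτ (fun x' => F (r.1, x')))
  have hsq2 : ∀ r : X × Y, (sSnd τ G r.2) ^ 2
      = (∑ q : X' × Y', τ q * G (r.2, q.2) ^ 2) - (mSnd τ G r.2) ^ 2 :=
    fun r => Real.sq_sqrt (jvarSnd_nonneg hτ (fun y' => G (r.2, y')))
  have tv1 : jvarFst (tensor σ τ) F
      = jvarFst σ (mFst τ F) + ∑ r : X × Y, σ r * (sFst τ F r.1) ^ 2 := by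
    have e : ∑ r : X × Y, σ r * (sFst τ F r.1) ^ 2
        = (∑ r : X × Y, σ r * ∑ q : X' × Y', τ q * F (r.1, q.1) ^ 2)
          - ∑ r : X × Y, σ r * (mFst τ F r.1) ^ 2 := by
      rw [← Finset.sum_sub_distrib]
      exact Finset.sum_congr rfl fun r _ => by rw [hsq1 r]; ring
    rw [e]
    simp only [jvarFst]
    rw [eF2, eF]
    ring
  have tv2 : jvarSnd (tensor σ τ) G
      = jvarSnd σ (mSnd τ G) + ∑ r : X × Y, σ r * (sSnd τ G r.2) ^ 2 := by
    have e : ∑ r : X × Y, σ r * (sSnd τ G r.2) ^ 2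
        = (∑ r : X × Y, σ r * ∑ q : X' × Y', τ q * G (r.2, q.2) ^ 2)
          - ∑ r : X × Y, σ r * (mSnd τ G r.2) ^ 2 := by
      rw [← Finset.sum_sub_distrib]
      exact Finset.sum_congr rfl fun r _ => by rw [hsq2 r]; ring
    rw [e]
    simp only [jvarSnd]
    rw [eG2, eG]
    ring
  have hA1 : 0 ≤ jvarFst σ (mFst τ F) := jvarFst_nonneg hσ _
  have hB1 : 0 ≤ jvarSnd σ (mSnd τ G) := jvarSnd_nonneg hσ _
  have hA2 : (0:ℝ) ≤ ∑ r : X × Y, σ r * (sFst τ F r.1) ^ 2 :=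
    Finset.sum_nonneg fun r _ => mul_nonneg (hσ.1 r) (sq_nonneg _)
  have hB2 : (0:ℝ) ≤ ∑ r : X × Y, σ r * (sSnd τ G r.2) ^ 2 :=
    Finset.sum_nonneg fun r _ => mul_nonneg (hσ.1 r) (sq_nonneg _)
  have hadd := sqrt_add_sqrt_le hA1 hB1 hA2 hB2
  have final3 : c * ∑ r : X × Y, σ r * (sFst τ F r.1 * sSnd τ G r.2)
      ≤ c * (Real.sqrt (∑ r : X × Y, σ r * (sFst τ F r.1) ^ 2)
          * Real.sqrt (∑ r : X × Y, σ r * (sSnd τ G r.2) ^ 2)) :=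
    mul_le_mul_of_nonneg_left hcs hc
  have final4 : c * (Real.sqrt (jvarFst σ (mFst τ F)) * Real.sqrt (jvarSnd σ (mSnd τ G)))
        + c * (Real.sqrt (∑ r : X × Y, σ r * (sFst τ F r.1) ^ 2)
          * Real.sqrt (∑ r : X × Y, σ r * (sSnd τ G r.2) ^ 2))
      ≤ c * (Real.sqrt (jvarFst σ (mFst τ F) + ∑ r : X × Y, σ r * (sFst τ F r.1) ^ 2)
          * Real.sqrt (jvarSnd σ (mSnd τ G) + ∑ r : X × Y, σ r * (sSnd τ G r.2) ^ 2)) := by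
    rw [← mul_add]
    exact mul_le_mul_of_nonneg_left hadd hc
  have hgoal : jcov (tensor σ τ) F G
      = (∑ r : X × Y, σ r * ∑ q : X' × Y', τ q * (F (r.1, q.1) * G (r.2, q.2)))
        - (∑ r : X × Y, σ r * mFst τ F r.1) * (∑ r : X × Y, σ r * mSnd τ G r.2) := by
    simp only [jcov]
    rw [eFG, eF, eG]
  have hjcovσ : jcov σ (mFst τ F) (mSnd τ G)
      = (∑ r : X × Y, σ r * (mFst τ F r.1 * mSnd τ G r.2))
        - (∑ r : X × Y, σ r * mFst τ F r.1) * (∑ r : X × Y, σ r * mSnd τ G r.2) := rfl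
  rw [hgoal, tv1, tv2]
  rw [hjcovσ] at hσcov
  linarith

end Tensor

section IID
variable {X Y : Type*} [Fintype X] [Fintype Y]

lemma iid_succ (σ : X × Y → ℝ) (ℓ : ℕ) (p : (Fin (ℓ+1) → X) × (Fin (ℓ+1) → Y)) :
    iid σ (ℓ+1) p
      = tensor σ (iid σ ℓ) ((p.1 0, fun i => p.1 i.succ), (p.2 0, fun i => p.2 i.succ)) := by
  simp [iid, tensor, Fin.prod_univ_succ]

lemma isDist_iid (σ : X × Y → ℝ) (hσ : IsDist σ) (ℓ : ℕ) : IsDist (iid σ ℓ) := by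
  induction ℓ with
  | zero =>
    constructor
    · intro p; exact Finset.prod_nonneg fun i _ => hσ.1 _
    · rw [Fintype.sum_unique]
      simp [iid]
  | succ n ih =>
    constructor
    · intro p; exact Finset.prod_nonneg fun i _ => hσ.1 _
    · have key : ∑ p : (Fin (n+1) → X) × (Fin (n+1) → Y), iid σ (n+1) p
          = ∑ z : (X × (Fin n → X)) × (Y × (Fin n → Y)), tensor σ (iid σ n) z := by
        refine Fintype.sum_equiv (((Fin.consEquiv fun _ : Fin (n+1) => X).symm).prodCongr ((Fin.consEquiv fun _ : Fin (n+1) => Y).symm)) _ _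
          (fun p => ?_)
        rw [iid_succ]
        rfl
      rw [key]
      have h := tensor_sum σ (iid σ n) (fun _ => (1:ℝ))
      simp only [mul_one] at h
      rw [h, ih.2]
      simp only [mul_one]
      exact hσ.2

lemma covBound_iid (σ : X × Y → ℝ) (hσ : IsDist σ) (ℓ : ℕ) :
    CovBound (iid σ ℓ) (cor σ) := by
  induction ℓ with
  | zero =>
    intro F G
    have h0 : jcov (iid σ 0) F G = 0 := by
      simp only [jcov, Fintype.sum_unique]
      have h1 : iid σ 0 (default : (Fin 0 → X) × (Fin 0 → Y)) = 1 := by simp [iid]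
      rw [h1]
      ring
    rw [h0]
    exact mul_nonneg (cor_nonneg hσ)
      (mul_nonneg (Real.sqrt_nonneg _) (Real.sqrt_nonneg _))
  | succ n ih =>
    have ht := covBound_tensor σ (iid σ n) hσ (isDist_iid σ hσ n) (cor σ)
      (cor_nonneg hσ) (covBound_cor hσ) ih
    have htr := covBound_reindex ((Fin.consEquiv fun _ : Fin (n+1) => X).symm) ((Fin.consEquiv fun _ : Fin (n+1) => Y).symm)
      (tensor σ (iid σ n)) (cor σ) ht
    have heq : (fun p : (Fin (n+1) → X) × (Fin (n+1) → Y) =>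
        tensor σ (iid σ n) ((Fin.consEquiv fun _ : Fin (n+1) => X).symm p.1, (Fin.consEquiv fun _ : Fin (n+1) => Y).symm p.2))
        = iid σ (n+1) := by
      funext p
      rw [iid_succ]
      rfl
    rw [heq] at htr
    exact htr

end IID

section Main
variable {U V X Y : Type*} [Fintype U] [Fintype V] [Fintype X] [Fintype Y]


def zipE (ℓ : ℕ) (U V X Y : Type*) :
    ((Fin ℓ → U) × (Fin ℓ → V)) × ((Fin ℓ → X) × (Fin ℓ → Y))
      ≃ (Fin ℓ → U × X) × (Fin ℓ → V × Y) where
  toFun z := (fun i => (z.1.1 i, z.2.1 i), fun i => (z.1.2 i, z.2.2 i))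
  invFun w := ((fun i => (w.1 i).1, fun i => (w.2 i).1),
               (fun i => (w.1 i).2, fun i => (w.2 i).2))
  left_inv z := rfl
  right_inv w := rfl

lemma zip_sum (ρ : U × V → ℝ) (σ : X × Y → ℝ) (ℓ : ℕ)
    (H : (Fin ℓ → U × X) × (Fin ℓ → V × Y) → ℝ) :
    ∑ w : (Fin ℓ → U × X) × (Fin ℓ → V × Y), iid (tensor ρ σ) ℓ w * H w
      = ∑ uv : (Fin ℓ → U) × (Fin ℓ → V), iid ρ ℓ uv
          * ∑ xy : (Fin ℓ → X) × (Fin ℓ → Y), iid σ ℓ xy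
            * H (fun i => (uv.1 i, xy.1 i), fun i => (uv.2 i, xy.2 i)) := by
  rw [← Fintype.sum_equiv (zipE ℓ U V X Y)
      (fun z => iid (tensor ρ σ) ℓ (zipE ℓ U V X Y z) * H (zipE ℓ U V X Y z))
      (fun w => iid (tensor ρ σ) ℓ w * H w) (fun z => rfl)]
  rw [Fintype.sum_prod_type]
  refine Finset.sum_congr rfl fun uv _ => ?_
  rw [Finset.mul_sum]
  refine Finset.sum_congr rfl fun xy _ => ?_
  show iid (tensor ρ σ) ℓ (fun i => (uv.1 i, xy.1 i), fun i => (uv.2 i, xy.2 i))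
      * H (fun i => (uv.1 i, xy.1 i), fun i => (uv.2 i, xy.2 i))
    = iid ρ ℓ uv * (iid σ ℓ xy * H (fun i => (uv.1 i, xy.1 i), fun i => (uv.2 i, xy.2 i)))
  have hfac : iid (tensor ρ σ) ℓ
      ((fun i => (uv.1 i, xy.1 i)), (fun i => (uv.2 i, xy.2 i)))
      = iid ρ ℓ uv * iid σ ℓ xy := by
    simp only [iid, tensor]
    rw [← Finset.prod_mul_distrib]
  rw [hfac, mul_assoc]

theorem stmt10' {U V X Y : Type} [Fintype U] [Fintype V] [Fintype X] [Fintype Y]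
    [Nonempty U] [Nonempty V] [Nonempty X] [Nonempty Y]
    (ρ : U × V → ℝ) (σ : X × Y → ℝ) (hρ : IsDist ρ) (hσ : IsDist σ)
    (p : ℝ) (h1 : cor σ < p) (h2 : p < 1) :
    agr ρ (p - cor σ) ≤ agr (tensor ρ σ) p := by
  have hiρ := isDist_iid ρ hρ
  have hiσ := isDist_iid σ hσ
  have hcor0 : 0 ≤ cor σ := cor_nonneg hσ
  unfold agr
  apply csInf_le_csInf
  · -- BddBelow
    refine ⟨0, ?_⟩
    rintro c ⟨ℓ, f, g, hf, hg, -, rfl⟩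
    have h1' : (0:ℝ) ≤ ∑ x : (Fin ℓ → U) × (Fin ℓ → V), iid ρ ℓ x * f x.1 :=
      Finset.sum_nonneg fun x _ => mul_nonneg ((hiρ ℓ).1 x) (hf x.1).1
    have h2' : (0:ℝ) ≤ ∑ x : (Fin ℓ → U) × (Fin ℓ → V), iid ρ ℓ x * g x.2 :=
      Finset.sum_nonneg fun x _ => mul_nonneg ((hiρ ℓ).1 x) (hg x.2).1
    linarith
  · -- Nonempty
    refine ⟨_, 0, fun _ => 1, fun _ => 1,
      fun x => ⟨zero_le_one, le_refl 1⟩, fun y => ⟨zero_le_one, le_refl 1⟩, ?_, rfl⟩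
    have he : ∑ x : (Fin 0 → U × X) × (Fin 0 → V × Y),
        iid (tensor ρ σ) 0 x * ((1:ℝ) * 1) = 1 := by
      rw [Fintype.sum_unique]
      simp [iid]
    show p ≤ ∑ x : (Fin 0 → U × X) × (Fin 0 → V × Y),
        iid (tensor ρ σ) 0 x * ((1:ℝ) * 1)
    rw [he]
    exact le_of_lt h2
  · -- subset
    rintro c ⟨ℓ, F, G, hF, hG, hsucc, rfl⟩
    refine ⟨ℓ,
      (fun u => ∑ xy : (Fin ℓ → X) × (Fin ℓ → Y),
        iid σ ℓ xy * F (fun i => (u i, xy.1 i))),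
      (fun v => ∑ xy : (Fin ℓ → X) × (Fin ℓ → Y),
        iid σ ℓ xy * G (fun i => (v i, xy.2 i))),
      ?_, ?_, ?_, ?_⟩
    · intro u
      constructor
      · exact Finset.sum_nonneg fun xy _ => mul_nonneg ((hiσ ℓ).1 xy) (hF _).1
      · calc ∑ xy : (Fin ℓ → X) × (Fin ℓ → Y),
              iid σ ℓ xy * F (fun i => (u i, xy.1 i))
            ≤ ∑ xy : (Fin ℓ → X) × (Fin ℓ → Y), iid σ ℓ xy * 1 :=
              Finset.sum_le_sum fun xy _ =>
                mul_le_mul_of_nonneg_left (hF _).2 ((hiσ ℓ).1 xy)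
          _ = 1 := by simp only [mul_one]; exact (hiσ ℓ).2
    · intro v
      constructor
      · exact Finset.sum_nonneg fun xy _ => mul_nonneg ((hiσ ℓ).1 xy) (hG _).1
      · calc ∑ xy : (Fin ℓ → X) × (Fin ℓ → Y),
              iid σ ℓ xy * G (fun i => (v i, xy.2 i))
            ≤ ∑ xy : (Fin ℓ → X) × (Fin ℓ → Y), iid σ ℓ xy * 1 :=
              Finset.sum_le_sum fun xy _ =>
                mul_le_mul_of_nonneg_left (hG _).2 ((hiσ ℓ).1 xy)
          _ = 1 := by simp only [mul_one]; exact (hiσ ℓ).2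
    · -- success probability
      have hz : ∑ w : (Fin ℓ → U × X) × (Fin ℓ → V × Y),
            iid (tensor ρ σ) ℓ w * (F w.1 * G w.2)
          = ∑ uv : (Fin ℓ → U) × (Fin ℓ → V), iid ρ ℓ uv
              * ∑ xy : (Fin ℓ → X) × (Fin ℓ → Y), iid σ ℓ xy
                * (F (fun i => (uv.1 i, xy.1 i)) * G (fun i => (uv.2 i, xy.2 i))) :=
        zip_sum ρ σ ℓ _
      rw [hz] at hsucc
      have key : ∀ uv : (Fin ℓ → U) × (Fin ℓ → V),
          (∑ xy : (Fin ℓ → X) × (Fin ℓ → Y), iid σ ℓ xy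
              * (F (fun i => (uv.1 i, xy.1 i)) * G (fun i => (uv.2 i, xy.2 i))))
            ≤ (∑ xy : (Fin ℓ → X) × (Fin ℓ → Y), iid σ ℓ xy
                * F (fun i => (uv.1 i, xy.1 i)))
              * (∑ xy : (Fin ℓ → X) × (Fin ℓ → Y), iid σ ℓ xy
                * G (fun i => (uv.2 i, xy.2 i))) + cor σ := by
        intro uv
        have hcb := covBound_iid σ hσ ℓ (fun xv => F (fun i => (uv.1 i, xv i)))
          (fun yv => G (fun i => (uv.2 i, yv i)))
        simp only [jcov] at hcb
        have hvF : jvarFst (iid σ ℓ) (fun xv => F (fun i => (uv.1 i, xv i))) ≤ 1 := by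
          have hb : ∑ xy : (Fin ℓ → X) × (Fin ℓ → Y),
              iid σ ℓ xy * F (fun i => (uv.1 i, xy.1 i)) ^ 2 ≤ 1 := by
            calc ∑ xy : (Fin ℓ → X) × (Fin ℓ → Y),
                iid σ ℓ xy * F (fun i => (uv.1 i, xy.1 i)) ^ 2
                ≤ ∑ xy : (Fin ℓ → X) × (Fin ℓ → Y), iid σ ℓ xy * 1 :=
                  Finset.sum_le_sum fun xy _ => mul_le_mul_of_nonneg_left
                    (pow_le_one₀ (hF _).1 (hF _).2) ((hiσ ℓ).1 xy)
              _ = 1 := by simp only [mul_one]; exact (hiσ ℓ).2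
          have hb2 := sq_nonneg (∑ xy : (Fin ℓ → X) × (Fin ℓ → Y),
              iid σ ℓ xy * F (fun i => (uv.1 i, xy.1 i)))
          simp only [jvarFst]
          linarith
        have hvG : jvarSnd (iid σ ℓ) (fun yv => G (fun i => (uv.2 i, yv i))) ≤ 1 := by
          have hb : ∑ xy : (Fin ℓ → X) × (Fin ℓ → Y),
              iid σ ℓ xy * G (fun i => (uv.2 i, xy.2 i)) ^ 2 ≤ 1 := by
            calc ∑ xy : (Fin ℓ → X) × (Fin ℓ → Y),
                iid σ ℓ xy * G (fun i => (uv.2 i, xy.2 i)) ^ 2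
                ≤ ∑ xy : (Fin ℓ → X) × (Fin ℓ → Y), iid σ ℓ xy * 1 :=
                  Finset.sum_le_sum fun xy _ => mul_le_mul_of_nonneg_left
                    (pow_le_one₀ (hG _).1 (hG _).2) ((hiσ ℓ).1 xy)
              _ = 1 := by simp only [mul_one]; exact (hiσ ℓ).2
          have hb2 := sq_nonneg (∑ xy : (Fin ℓ → X) × (Fin ℓ → Y),
              iid σ ℓ xy * G (fun i => (uv.2 i, xy.2 i)))
          simp only [jvarSnd]
          linarith
        have hsml : cor σ * (Real.sqrt (jvarFst (iid σ ℓ)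
              (fun xv => F (fun i => (uv.1 i, xv i))))
            * Real.sqrt (jvarSnd (iid σ ℓ) (fun yv => G (fun i => (uv.2 i, yv i)))))
            ≤ cor σ * 1 := by
          apply mul_le_mul_of_nonneg_left _ hcor0
          exact mul_le_one₀ (Real.sqrt_le_one.mpr hvF) (Real.sqrt_nonneg _)
            (Real.sqrt_le_one.mpr hvG)
        rw [mul_one] at hsml
        linarith
      have tot : ∑ uv : (Fin ℓ → U) × (Fin ℓ → V), iid ρ ℓ uv
            * ∑ xy : (Fin ℓ → X) × (Fin ℓ → Y), iid σ ℓ xy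
              * (F (fun i => (uv.1 i, xy.1 i)) * G (fun i => (uv.2 i, xy.2 i)))
          ≤ (∑ uv : (Fin ℓ → U) × (Fin ℓ → V), iid ρ ℓ uv
              * ((∑ xy : (Fin ℓ → X) × (Fin ℓ → Y), iid σ ℓ xy
                  * F (fun i => (uv.1 i, xy.1 i)))
                * (∑ xy : (Fin ℓ → X) × (Fin ℓ → Y), iid σ ℓ xy
                  * G (fun i => (uv.2 i, xy.2 i))))) + cor σ := by
        calc ∑ uv : (Fin ℓ → U) × (Fin ℓ → V), iid ρ ℓ uv
              * ∑ xy : (Fin ℓ → X) × (Fin ℓ → Y), iid σ ℓ xy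
                * (F (fun i => (uv.1 i, xy.1 i)) * G (fun i => (uv.2 i, xy.2 i)))
            ≤ ∑ uv : (Fin ℓ → U) × (Fin ℓ → V), iid ρ ℓ uv
              * ((∑ xy : (Fin ℓ → X) × (Fin ℓ → Y), iid σ ℓ xy
                  * F (fun i => (uv.1 i, xy.1 i)))
                * (∑ xy : (Fin ℓ → X) × (Fin ℓ → Y), iid σ ℓ xy
                  * G (fun i => (uv.2 i, xy.2 i))) + cor σ) :=
              Finset.sum_le_sum fun uv _ =>
                mul_le_mul_of_nonneg_left (key uv) ((hiρ ℓ).1 uv)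
          _ = (∑ uv : (Fin ℓ → U) × (Fin ℓ → V), iid ρ ℓ uv
                * ((∑ xy : (Fin ℓ → X) × (Fin ℓ → Y), iid σ ℓ xy
                    * F (fun i => (uv.1 i, xy.1 i)))
                  * (∑ xy : (Fin ℓ → X) × (Fin ℓ → Y), iid σ ℓ xy
                    * G (fun i => (uv.2 i, xy.2 i)))))
              + (∑ uv : (Fin ℓ → U) × (Fin ℓ → V), iid ρ ℓ uv) * cor σ := by
              simp only [mul_add, Finset.sum_add_distrib, Finset.sum_mul]
          _ = _ := by rw [(hiρ ℓ).2, one_mul]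
      show p - cor σ ≤ ∑ uv : (Fin ℓ → U) × (Fin ℓ → V), iid ρ ℓ uv
          * ((∑ xy : (Fin ℓ → X) × (Fin ℓ → Y), iid σ ℓ xy
              * F (fun i => (uv.1 i, xy.1 i)))
            * (∑ xy : (Fin ℓ → X) × (Fin ℓ → Y), iid σ ℓ xy
              * G (fun i => (uv.2 i, xy.2 i))))
      linarith
    · -- cost equality
      have e1 : ∑ w : (Fin ℓ → U × X) × (Fin ℓ → V × Y),
            iid (tensor ρ σ) ℓ w * F w.1
          = ∑ uv : (Fin ℓ → U) × (Fin ℓ → V), iid ρ ℓ uv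
              * ∑ xy : (Fin ℓ → X) × (Fin ℓ → Y), iid σ ℓ xy
                * F (fun i => (uv.1 i, xy.1 i)) := zip_sum ρ σ ℓ _
      have e2 : ∑ w : (Fin ℓ → U × X) × (Fin ℓ → V × Y),
            iid (tensor ρ σ) ℓ w * G w.2
          = ∑ uv : (Fin ℓ → U) × (Fin ℓ → V), iid ρ ℓ uv
              * ∑ xy : (Fin ℓ → X) × (Fin ℓ → Y), iid σ ℓ xy
                * G (fun i => (uv.2 i, xy.2 i)) := zip_sum ρ σ ℓ _
      rw [e1, e2]

end Main



theorem stmt10 {U V X Y : Type} [Fintype U] [Fintype V] [Fintype X] [Fintype Y]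
    [Nonempty U] [Nonempty V] [Nonempty X] [Nonempty Y]
    (ρ : U × V → ℝ) (σ : X × Y → ℝ) (hρ : IsDist ρ) (hσ : IsDist σ)
    (p : ℝ) (h1 : cor σ < p) (h2 : p < 1) :
    agr ρ (p - cor σ) ≤ agr (tensor ρ σ) p :=
  stmt10' ρ σ hρ hσ p h1 h2

end SR
end
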